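/- arXiv:2503.18493 — 2 statements merged into one kernel-verified Lean document; each statement's English description precedes it below -/
import Mathlib

section
/- For all integers m ≥ 0 and n ≥ 0, a̅_{2m+1}(8(5n+3)+1) ≡ 2·g(n) (mod 8), where g(n) denotes the coefficient of q^n in the formal power series f_5^3 = (q^5;q^5)_∞^3. -/
/-- The infinite product `(q^h; q^h)_∞ = ∏_{k ≥ 0} (1 - q^{h(k+1)})` as a formal power
series over `R`.  Since the factor `1 - q^{h(k+1)}` only affects coefficients of
degree `≥ k + 1`, the coefficient of `qⁿ` is that of the finite truncated product
over `k < n + 1`. -/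
noncomputable def qPochInf (R : Type*) [CommRing R] (h : ℕ) : PowerSeries R :=
  PowerSeries.mk fun n =>
    PowerSeries.coeff (R := R) n
      (∏ k ∈ Finset.range (n + 1), (1 - PowerSeries.X ^ (h * (k + 1))))

/-- `abar` is the generalized overcubic partition family: for every `c ≥ 1`,
`∑_{n≥0} a̅_c(n) qⁿ = f₄^(c-1) / (f₁² f₂^(2c-3))`, stated multiplied out (both sides
multiplied by `f₁² f₂^(2c-3) · f₂³ = f₁² f₂^(2c) / f₂³`, i.e. as
`(∑ a̅_c(n) qⁿ) · f₁² · f₂^(2c) = f₄^(c-1) · f₂³`) so as to avoid the negative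
exponent `2c - 3 = -1` occurring when `c = 1`; this is equivalent since the `fₕ`
are units in the ring of formal power series. -/
def IsGenOvercubic (abar : ℕ → ℕ → ℕ) : Prop :=
  ∀ c : ℕ, 1 ≤ c →
    (PowerSeries.mk fun n => (abar c n : ℤ)) * qPochInf ℤ 1 ^ 2 * qPochInf ℤ 2 ^ (2 * c) =
      qPochInf ℤ 4 ^ (c - 1) * qPochInf ℤ 2 ^ 3


set_option maxHeartbeats 1000000

namespace OC
open PowerSeries Finset

noncomputable abbrev Xp : PowerSeries ℤ := PowerSeries.X

/-- congruence mod X^K -/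
def MD (K : ℕ) (f g : PowerSeries ℤ) : Prop := (X : PowerSeries ℤ) ^ K ∣ (f - g)

lemma MD.refl {K f} : MD K f f := by simp [MD]

lemma MD.symm {K f g} (h : MD K f g) : MD K g f := by
  rw [MD, show g - f = -(f - g) by ring]
  exact h.neg_right

lemma MD.trans {K f g k} (h1 : MD K f g) (h2 : MD K g k) : MD K f k := by
  rw [MD, show f - k = (f - g) + (g - k) by ring]
  exact dvd_add h1 h2

lemma MD.add {K f g f' g'} (h1 : MD K f g) (h2 : MD K f' g') : MD K (f + f') (g + g') := by
  simpa [MD, show f + f' - (g + g') = (f - g) + (f' - g') by ring] using dvd_add h1 h2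

lemma MD.mul {K f g f' g'} (h1 : MD K f g) (h2 : MD K f' g') : MD K (f * f') (g * g') := by
  have : f * f' - g * g' = f * (f' - g') + (f - g) * g' := by ring
  rw [MD, this]
  exact dvd_add (Dvd.dvd.mul_left h2 f) (Dvd.dvd.mul_right h1 g')

lemma MD.weaken {K K' f g} (hK : K' ≤ K) (h : MD K f g) : MD K' f g :=
  dvd_trans (pow_dvd_pow _ hK) h

lemma MD.sum {K : ℕ} {s : Finset ℕ} {F G : ℕ → PowerSeries ℤ}
    (h : ∀ i ∈ s, MD K (F i) (G i)) : MD K (∑ i ∈ s, F i) (∑ i ∈ s, G i) := by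
  classical
  induction s using Finset.induction with
  | empty => simp [MD.refl]
  | insert _ _ hx ih =>
      rw [Finset.sum_insert hx, Finset.sum_insert hx]
      exact MD.add (h _ (Finset.mem_insert_self _ _))
        (ih fun i hi => h i (Finset.mem_insert_of_mem hi))

lemma MD_zero_of_dvd {K e : ℕ} (hK : K ≤ e) (u : PowerSeries ℤ) : MD K (X ^ e * u) 0 := by
  rw [MD, sub_zero]
  exact Dvd.dvd.mul_right (pow_dvd_pow _ hK) u

lemma MD_one_sub {K e : ℕ} (hK : K ≤ e) : MD K (1 - X ^ e) 1 := by
  rw [MD, sub_sub_cancel_left]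
  exact (dvd_neg).2 (pow_dvd_pow _ hK)

lemma MD_X_pow_mul {K e : ℕ} {u : PowerSeries ℤ} (h : MD K u 1) :
    MD (e + K) (X ^ e * u) (X ^ e) := by
  have : X ^ e * u - X ^ e = X ^ e * (u - 1) := by ring
  rw [MD, this, pow_add]
  exact mul_dvd_mul_left _ h

lemma MD.coeff_eq {K f g} (h : MD K f g) {n : ℕ} (hn : n < K) :
    (PowerSeries.coeff (R := ℤ) n) f = (PowerSeries.coeff (R := ℤ) n) g := by
  have := (PowerSeries.X_pow_dvd_iff.1 h) n hn
  rw [map_sub] at this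
  linarith [this]

/-- truncated Pochhammer-style product `∏_{i<c} (1 - X^{b(a+i+1)})` -/
noncomputable def poch (b a c : ℕ) : PowerSeries ℤ :=
  ∏ i ∈ Finset.range c, (1 - (X : PowerSeries ℤ) ^ (b * (a + i + 1)))

lemma poch_zero (b a : ℕ) : poch b a 0 = 1 := by simp [poch]

lemma poch_succ (b a c : ℕ) : poch b a (c + 1) = poch b a c * (1 - X ^ (b * (a + c + 1))) := by
  simp [poch, Finset.prod_range_succ]

lemma poch_succ' (b a c : ℕ) : poch b a (c + 1) = (1 - X ^ (b * (a + 1))) * poch b (a + 1) c := by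
  rw [poch, Finset.prod_range_succ']
  rw [show b * (a + 0 + 1) = b * (a + 1) by ring, mul_comm]
  congr 1
  apply Finset.prod_congr rfl
  intro i _
  rw [show a + (i + 1) + 1 = a + 1 + i + 1 by ring]

lemma poch_add (b a c d : ℕ) : poch b a (c + d) = poch b a c * poch b (a + c) d := by
  induction d with
  | zero => simp [poch_zero]
  | succ d ih =>
      rw [show c + (d+1) = (c+d)+1 by ring, poch_succ, ih, poch_succ, mul_assoc]
      congr 3
      ring

lemma MD_poch_one {K b a c : ℕ} (h : K ≤ b * (a + 1)) : MD K (poch b a c) 1 := by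
  induction c with
  | zero => simp [poch_zero, MD.refl]
  | succ c ih =>
      rw [poch_succ]
      have h2 : MD K (1 - X ^ (b * (a + c + 1))) 1 := by
        apply MD_one_sub
        calc K ≤ b * (a + 1) := h
        _ ≤ b * (a + c + 1) := by apply Nat.mul_le_mul_left; omega
      simpa using ih.mul h2



noncomputable def Gb (b : ℕ) : ℕ → ℤ → PowerSeries ℤ
  | 0, k => if k = 0 then 1 else 0
  | (n+1), k => Gb b n k + X ^ (b * ((n + 1 : ℤ) - k).toNat) * Gb b n (k - 1)

lemma Gb_succ (b n : ℕ) (k : ℤ) :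
    Gb b (n+1) k = Gb b n k + X ^ (b * ((n : ℤ) + 1 - k).toNat) * Gb b n (k - 1) := by
  rw [Gb]


lemma Gb_neg (b : ℕ) : ∀ (n : ℕ) (k : ℤ), k < 0 → Gb b n k = 0 := by
  intro n
  induction n with
  | zero => intro k hk; simp [Gb, show k ≠ 0 by omega]
  | succ n ih =>
      intro k hk
      rw [Gb_succ, ih k hk, ih (k-1) (by omega)]
      simp

lemma Gb_gt (b : ℕ) : ∀ (n : ℕ) (k : ℤ), (n : ℤ) < k → Gb b n k = 0 := by
  intro n
  induction n with
  | zero => intro k hk; simp [Gb, show k ≠ 0 by omega]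
  | succ n ih =>
      intro k hk
      push_cast at hk
      rw [Gb_succ, ih k (by omega), ih (k-1) (by omega)]
      simp

lemma Gb_zero (b : ℕ) : ∀ n : ℕ, Gb b n 0 = 1 := by
  intro n
  induction n with
  | zero => simp [Gb]
  | succ n ih => rw [Gb_succ, ih, Gb_neg b n (0 - 1) (by omega)]; simp

lemma Gb_diag (b : ℕ) : ∀ n : ℕ, Gb b n n = 1 := by
  intro n
  induction n with
  | zero => simp [Gb]
  | succ n ih =>
      push_cast
      rw [Gb_succ, Gb_gt b n ((n:ℤ)+1) (by omega)]
      rw [show ((n:ℤ) + 1 - (↑n + 1)) = 0 by ring, show ((n:ℤ) + 1 - 1) = n by ring, ih]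
      simp

lemma Gb_P2 (b : ℕ) : ∀ (n : ℕ) (k : ℤ),
    Gb b (n+1) k = X ^ (b * k.toNat) * Gb b n k + Gb b n (k - 1) := by
  intro n
  induction n with
  | zero =>
      intro k
      by_cases h0 : k = 0
      · subst h0; norm_num [Gb]
      by_cases h1 : k = 1
      · subst h1; norm_num [Gb]
      · rw [Gb_succ]
        have g1 : Gb b 0 k = 0 := by simp [Gb, h0]
        have g2 : Gb b 0 (k - 1) = 0 := by simp [Gb, show k - 1 ≠ 0 by omega]
        rw [g1, g2]
        simp
  | succ n ih =>
      intro k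
      have hswap : X ^ (b * ((n:ℤ) + 1 + 1 - k).toNat) * (X ^ (b * (k-1).toNat) * Gb b n (k-1))
          = X ^ (b * k.toNat) * (X ^ (b * ((n:ℤ) + 1 - k).toNat) * Gb b n (k-1)) := by
        by_cases hk : 1 ≤ k ∧ k ≤ (n : ℤ) + 1
        · rw [← mul_assoc, ← mul_assoc, ← pow_add, ← pow_add, ← Nat.mul_add, ← Nat.mul_add,
            show ((n:ℤ) + 1 + 1 - k).toNat + (k-1).toNat = k.toNat + ((n:ℤ) + 1 - k).toNat by omega]
        · have : Gb b n (k-1) = 0 := by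
            rcases not_and_or.1 hk with h | h
            · exact Gb_neg b n (k-1) (by omega)
            · exact Gb_gt b n (k-1) (by omega)
          simp [this]
      calc Gb b (n+2) k
          = Gb b (n+1) k + X ^ (b * ((n:ℤ) + 1 + 1 - k).toNat) * Gb b (n+1) (k - 1) := by
            rw [Gb_succ b (n+1) k]; push_cast; ring_nf
        _ = (X ^ (b * k.toNat) * Gb b n k + Gb b n (k - 1))
            + X ^ (b * ((n:ℤ) + 1 + 1 - k).toNat)
              * (X ^ (b * (k-1).toNat) * Gb b n (k-1) + Gb b n (k - 2)) := by
            rw [ih k, ih (k-1), show k - 1 - 1 = k - 2 by ring]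
        _ = X ^ (b * k.toNat) * (Gb b n k + X ^ (b * ((n:ℤ) + 1 - k).toNat) * Gb b n (k - 1))
            + (Gb b n (k-1) + X ^ (b * ((n:ℤ) + 1 + 1 - k).toNat) * Gb b n (k - 2)) := by
            rw [mul_add, hswap]; ring
        _ = X ^ (b * k.toNat) * Gb b (n+1) k + Gb b (n+1) (k - 1) := by
            rw [Gb_succ b n k, Gb_succ b n (k-1),
              show ((n:ℤ) + 1 - (k-1)).toNat = ((n:ℤ) + 1 + 1 - k).toNat by omega,
              show k - 1 - 1 = k - 2 by ring]

lemma Gb_three (b : ℕ) (n : ℕ) (j : ℤ) :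
    Gb b (n+2) j = X ^ (b * j.toNat) * Gb b n j + (1 + X ^ (b * (n+1))) * Gb b n (j-1)
      + X ^ (b * ((n : ℤ) + 1 + 1 - j).toNat) * Gb b n (j-2) := by
  have hmid : X ^ (b * ((n:ℤ) + 1 + 1 - j).toNat) * (X ^ (b * (j-1).toNat) * Gb b n (j-1))
      = X ^ (b * (n+1)) * Gb b n (j-1) := by
    by_cases hk : 1 ≤ j ∧ j ≤ (n : ℤ) + 1
    · rw [← mul_assoc, ← pow_add, ← Nat.mul_add,
        show ((n:ℤ) + 1 + 1 - j).toNat + (j-1).toNat = n + 1 by omega]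
    · have : Gb b n (j-1) = 0 := by
        rcases not_and_or.1 hk with h | h
        · exact Gb_neg b n (j-1) (by omega)
        · exact Gb_gt b n (j-1) (by omega)
      simp [this]
  calc Gb b (n+2) j
      = Gb b (n+1) j + X ^ (b * ((n:ℤ) + 1 + 1 - j).toNat) * Gb b (n+1) (j - 1) := by
        rw [Gb_succ b (n+1) j]; push_cast; ring_nf
    _ = (X ^ (b * j.toNat) * Gb b n j + Gb b n (j - 1))
        + X ^ (b * ((n:ℤ) + 1 + 1 - j).toNat)
          * (X ^ (b * (j-1).toNat) * Gb b n (j-1) + Gb b n (j - 2)) := by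
        rw [Gb_P2, Gb_P2, show j - 1 - 1 = j - 2 by ring]
    _ = _ := by rw [mul_add, hmid]; ring



lemma Gb_mul_poch (b : ℕ) : ∀ (n k : ℕ), k ≤ n →
    Gb b n (k : ℤ) * poch b 0 k = poch b (n - k) k := by
  intro n
  induction n with
  | zero =>
      intro k hk
      interval_cases k
      simp [Gb, poch_zero]
  | succ n ih =>
      intro k hk
      rcases Nat.eq_zero_or_pos k with h0 | h0
      · subst h0; simp [Gb_zero, poch_zero]
      rcases eq_or_lt_of_le hk with he | hlt
      · subst he
        rw [Gb_diag]
        simp [poch]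
      -- now 1 ≤ k ≤ n
      have hkn : k ≤ n := by omega
      obtain ⟨j, rfl⟩ : ∃ j, k = j + 1 := ⟨k - 1, by omega⟩
      have hcast : ((j:ℤ) + 1 - 1) = (j : ℤ) := by ring
      have hP2 := Gb_P2 b n ((j:ℕ) + 1 : ℤ)
      push_cast at hP2
      rw [hcast] at hP2
      have htoNat : ((j:ℤ) + 1).toNat = j + 1 := by omega
      rw [htoNat] at hP2
      rw [show ((j:ℤ) + 1) = ((j + 1 : ℕ) : ℤ) by push_cast; ring] at hP2
      rw [hP2, add_mul]
      rw [mul_assoc, ih (j+1) hkn]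
      rw [poch_succ b 0 j]
      rw [show b * (0 + j + 1) = b * (j+1) by ring]
      rw [← mul_assoc, ih j (by omega)]
      -- now pure poch manipulation
      have e1 : n - j = (n - (j+1)) + 1 := by omega
      have e2 : n + 1 - (j + 1) = n - j := by omega
      rw [e2, e1, poch_succ' b (n - (j+1)) j, poch_succ b (n - (j+1) + 1) j]
      have e3 : b * (n - (j + 1) + 1 + j + 1) = b * (n + 1) := by
        rw [show n - (j + 1) + 1 + j + 1 = n + 1 by omega]
      rw [e3]
      have e4 : (X : PowerSeries ℤ) ^ (b * (j+1)) * X ^ (b * (n - (j+1) + 1))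
          = X ^ (b * (n+1)) := by
        rw [← pow_add, ← Nat.mul_add, show (j+1) + (n - (j+1) + 1) = n + 1 by omega]
      calc X ^ (b * (j+1)) * ((1 - X ^ (b * (n - (j+1) + 1))) * poch b (n - (j+1) + 1) j)
            + poch b (n - (j+1) + 1) j * (1 - X ^ (b * (j+1)))
          = (1 - X ^ (b * (j+1)) * X ^ (b * (n - (j+1) + 1))) * poch b (n - (j+1) + 1) j := by
            ring
        _ = poch b (n - (j + 1) + 1) j * (1 - X ^ (b * (n + 1))) := by rw [e4]; ring


def sInt (d : ℤ) : ℕ := (d * d).toNat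

@[simp] lemma sInt_cast (d : ℤ) : ((sInt d : ℤ)) = d * d :=
  Int.toNat_of_nonneg (mul_self_nonneg d)

def tInt (d : ℤ) : ℕ := ((d * (d + 1)) / 2).toNat

lemma tInt_nonneg (d : ℤ) : 0 ≤ d * (d + 1) := by nlinarith [sq_nonneg (2*d+1)]

lemma tInt_cast (d : ℤ) : 2 * ((tInt d : ℤ)) = d * (d + 1) := by
  obtain ⟨r, hr⟩ := Int.even_mul_succ_self d
  have h2 : d * (d + 1) / 2 = r := by omega
  have hnn := tInt_nonneg d
  rw [tInt, h2, Int.toNat_of_nonneg (by omega : (0:ℤ) ≤ r)]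
  omega

-- exponent lemmas for the φ-induction
lemma expA (h j M : ℕ) :
    2 * h * j + h * sInt ((j:ℤ) - M - 1) = h * (2*M+1) + h * sInt ((j:ℤ) - M) := by
  zify
  have h1 := sInt_cast ((j:ℤ) - M - 1)
  have h2 := sInt_cast ((j:ℤ) - M)
  nlinarith [h1, h2]

lemma expC (h i M : ℕ) (hi : i ≤ 2*M) :
    2 * h * (2*M - i) + h * sInt ((i:ℤ) + 1 - M) = h * (2*M+1) + h * sInt ((i:ℤ) - M) := by
  zify [hi]
  have h1 := sInt_cast ((i:ℤ) + 1 - M)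
  have h2 := sInt_cast ((i:ℤ) - M)
  nlinarith [h1, h2]

noncomputable def Sphi (h M : ℕ) : PowerSeries ℤ :=
  ∑ j ∈ Finset.range (2*M+1),
    (-1 : PowerSeries ℤ) ^ (j + M) * Gb (2*h) (2*M) (j : ℤ) * X ^ (h * sInt ((j:ℤ) - M))

lemma Sphi_succ (h M : ℕ) :
    Sphi h (M+1) = (1 - X ^ (h * (2*M+1)))^2 * Sphi h M := by
  have key : ∀ j : ℕ,
      (-1 : PowerSeries ℤ) ^ (j + (M+1)) * Gb (2*h) (2*(M+1)) (j : ℤ)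
          * X ^ (h * sInt ((j:ℤ) - ((M+1:ℕ):ℤ)))
      = (-1 : PowerSeries ℤ) ^ (j + M + 1) * (X ^ (2*h * ((j:ℤ)).toNat) * Gb (2*h) (2*M) j)
          * X ^ (h * sInt ((j:ℤ) - M - 1))
        + (-1 : PowerSeries ℤ) ^ (j + M + 1)
            * ((1 + X ^ (2*h * (2*M+1))) * Gb (2*h) (2*M) ((j:ℤ)-1))
            * X ^ (h * sInt ((j:ℤ) - M - 1))
        + (-1 : PowerSeries ℤ) ^ (j + M + 1)
            * (X ^ (2*h * ((2*M:ℤ) + 1 + 1 - j).toNat) * Gb (2*h) (2*M) ((j:ℤ)-2))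
            * X ^ (h * sInt ((j:ℤ) - M - 1)) := by
    intro j
    have h2 : 2*(M+1) = 2*M + 2 := by ring
    rw [h2, Gb_three (2*h) (2*M) (j:ℤ)]
    have harg : ((j:ℤ) - ((M+1:ℕ):ℤ)) = ((j:ℤ) - M - 1) := by push_cast; ring
    have harg2 : ((↑(2*M) : ℤ) + 1 + 1 - (j:ℤ)) = ((2*M:ℤ) + 1 + 1 - (j:ℤ)) := by
      push_cast; ring
    rw [harg, harg2, show j + (M+1) = j + M + 1 by ring]
    ring
  rw [Sphi, show 2*(M+1)+1 = (2*M+1) + 1 + 1 by ring]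
  simp only [key]
  rw [Finset.sum_add_distrib, Finset.sum_add_distrib]
  -- A-sum
  have hA : (∑ j ∈ Finset.range (2*M+1+1+1),
      (-1 : PowerSeries ℤ) ^ (j + M + 1) * (X ^ (2*h * ((j:ℤ)).toNat) * Gb (2*h) (2*M) j)
        * X ^ (h * sInt ((j:ℤ) - M - 1)))
      = -(X ^ (h * (2*M+1))) * Sphi h M := by
    have congrA : ∀ j ∈ Finset.range (2*M+1+1+1),
        (-1 : PowerSeries ℤ) ^ (j + M + 1) * (X ^ (2*h * ((j:ℤ)).toNat) * Gb (2*h) (2*M) j)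
          * X ^ (h * sInt ((j:ℤ) - M - 1))
        = -(X ^ (h * (2*M+1))) *
            ((-1 : PowerSeries ℤ) ^ (j + M) * Gb (2*h) (2*M) j * X ^ (h * sInt ((j:ℤ) - M))) := by
      intro j _
      have ht : ((j:ℤ)).toNat = j := by omega
      rw [ht]
      have : (X : PowerSeries ℤ) ^ (2*h*j) * X ^ (h * sInt ((j:ℤ) - M - 1))
          = X ^ (h * (2*M+1)) * X ^ (h * sInt ((j:ℤ) - M)) := by
        rw [← pow_add, ← pow_add, expA]
      rw [pow_succ]
      calc (-1 : PowerSeries ℤ) ^ (j + M) * -1 * (X ^ (2*h*j) * Gb (2*h) (2*M) j)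
            * X ^ (h * sInt ((j:ℤ) - M - 1))
          = -((-1 : PowerSeries ℤ) ^ (j + M) * Gb (2*h) (2*M) j)
              * (X ^ (2*h*j) * X ^ (h * sInt ((j:ℤ) - M - 1))) := by ring
        _ = -((-1 : PowerSeries ℤ) ^ (j + M) * Gb (2*h) (2*M) j)
              * (X ^ (h * (2*M+1)) * X ^ (h * sInt ((j:ℤ) - M))) := by rw [this]
        _ = _ := by ring
    rw [Finset.sum_congr rfl congrA, ← Finset.mul_sum]
    congr 1
    rw [Finset.sum_range_succ, Finset.sum_range_succ]
    have g1 : Gb (2*h) (2*M) ((2*M+1 : ℕ) : ℤ) = 0 := Gb_gt _ _ _ (by push_cast; omega)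
    have g2 : Gb (2*h) (2*M) ((2*M+1+1 : ℕ) : ℤ) = 0 := Gb_gt _ _ _ (by push_cast; omega)
    rw [g1, g2]
    simp [Sphi]
  rw [hA]
  -- B-sum
  have hB : (∑ j ∈ Finset.range (2*M+1+1+1),
      (-1 : PowerSeries ℤ) ^ (j + M + 1)
        * ((1 + X ^ (2*h * (2*M+1))) * Gb (2*h) (2*M) ((j:ℤ)-1))
        * X ^ (h * sInt ((j:ℤ) - M - 1)))
      = (1 + X ^ (2*h * (2*M+1))) * Sphi h M := by
    rw [Finset.sum_range_succ']
    have hB0 : (-1 : PowerSeries ℤ) ^ (0 + M + 1)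
        * ((1 + X ^ (2*h * (2*M+1))) * Gb (2*h) (2*M) (((0:ℕ):ℤ)-1))
        * X ^ (h * sInt (((0:ℕ):ℤ) - M - 1)) = 0 := by
      rw [Gb_neg (2*h) (2*M) _ (by omega)]
      ring
    rw [hB0, add_zero]
    have congrB : ∀ i ∈ Finset.range (2*M+1+1),
        (-1 : PowerSeries ℤ) ^ ((i+1) + M + 1)
          * ((1 + X ^ (2*h * (2*M+1))) * Gb (2*h) (2*M) (((i+1:ℕ):ℤ)-1))
          * X ^ (h * sInt (((i+1:ℕ):ℤ) - M - 1))
        = (1 + X ^ (2*h * (2*M+1))) *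
            ((-1 : PowerSeries ℤ) ^ (i + M) * Gb (2*h) (2*M) i * X ^ (h * sInt ((i:ℤ) - M))) := by
      intro i _
      have e1 : (((i+1:ℕ):ℤ)-1) = (i:ℤ) := by push_cast; ring
      have e2 : (((i+1:ℕ):ℤ) - M - 1) = ((i:ℤ) - M) := by push_cast; ring
      rw [e1, e2, show (i+1) + M + 1 = (i + M) + 2 by ring, pow_add]
      ring
    rw [Finset.sum_congr rfl congrB, ← Finset.mul_sum]
    congr 1
    rw [Finset.sum_range_succ]
    have g1 : Gb (2*h) (2*M) ((2*M+1 : ℕ) : ℤ) = 0 := Gb_gt _ _ _ (by push_cast; omega)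
    rw [g1]
    simp [Sphi]
  rw [hB]
  -- C-sum
  have hC : (∑ j ∈ Finset.range (2*M+1+1+1),
      (-1 : PowerSeries ℤ) ^ (j + M + 1)
        * (X ^ (2*h * ((2*M:ℤ) + 1 + 1 - j).toNat) * Gb (2*h) (2*M) ((j:ℤ)-2))
        * X ^ (h * sInt ((j:ℤ) - M - 1)))
      = -(X ^ (h * (2*M+1))) * Sphi h M := by
    rw [Finset.sum_range_succ']
    have hC0 : (-1 : PowerSeries ℤ) ^ (0 + M + 1)
        * (X ^ (2*h * ((2*M:ℤ) + 1 + 1 - (0:ℕ)).toNat) * Gb (2*h) (2*M) (((0:ℕ):ℤ)-2))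
        * X ^ (h * sInt (((0:ℕ):ℤ) - M - 1)) = 0 := by
      rw [Gb_neg (2*h) (2*M) _ (by omega)]
      ring
    rw [hC0, add_zero, Finset.sum_range_succ']
    have hC1 : (-1 : PowerSeries ℤ) ^ ((0+1) + M + 1)
        * (X ^ (2*h * ((2*M:ℤ) + 1 + 1 - ((0+1:ℕ):ℤ)).toNat) * Gb (2*h) (2*M) (((0+1:ℕ):ℤ)-2))
        * X ^ (h * sInt (((0+1:ℕ):ℤ) - M - 1)) = 0 := by
      rw [Gb_neg (2*h) (2*M) _ (by omega)]
      ring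
    rw [hC1, add_zero]
    have congrC : ∀ i ∈ Finset.range (2*M+1),
        (-1 : PowerSeries ℤ) ^ ((i+1+1) + M + 1)
          * (X ^ (2*h * ((2*M:ℤ) + 1 + 1 - ((i+1+1:ℕ):ℤ)).toNat) * Gb (2*h) (2*M) (((i+1+1:ℕ):ℤ)-2))
          * X ^ (h * sInt (((i+1+1:ℕ):ℤ) - M - 1))
        = -(X ^ (h * (2*M+1))) *
            ((-1 : PowerSeries ℤ) ^ (i + M) * Gb (2*h) (2*M) i * X ^ (h * sInt ((i:ℤ) - M))) := by
      intro i hi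
      have hi' : i ≤ 2*M := by
        have := Finset.mem_range.1 hi; omega
      have e1 : (((i+1+1:ℕ):ℤ)-2) = (i:ℤ) := by push_cast; ring
      have e2 : (((i+1+1:ℕ):ℤ) - M - 1) = ((i:ℤ) + 1 - M) := by push_cast; ring
      have e3 : ((2*M:ℤ) + 1 + 1 - ((i+1+1:ℕ):ℤ)).toNat = 2*M - i := by
        push_cast; omega
      rw [e1, e2, e3]
      have hx : (X : PowerSeries ℤ) ^ (2*h*(2*M-i)) * X ^ (h * sInt ((i:ℤ) + 1 - M))
          = X ^ (h * (2*M+1)) * X ^ (h * sInt ((i:ℤ) - M)) := by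
        rw [← pow_add, ← pow_add, expC h i M hi']
      rw [show (i+1+1) + M + 1 = (i + M) + 3 by ring, pow_add]
      calc (-1 : PowerSeries ℤ) ^ (i + M) * (-1)^3
            * (X ^ (2*h*(2*M-i)) * Gb (2*h) (2*M) i) * X ^ (h * sInt ((i:ℤ) + 1 - M))
          = -((-1 : PowerSeries ℤ) ^ (i + M) * Gb (2*h) (2*M) i)
              * (X ^ (2*h*(2*M-i)) * X ^ (h * sInt ((i:ℤ) + 1 - M))) := by ring
        _ = -((-1 : PowerSeries ℤ) ^ (i + M) * Gb (2*h) (2*M) i)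
              * (X ^ (h * (2*M+1)) * X ^ (h * sInt ((i:ℤ) - M))) := by rw [hx]
        _ = _ := by ring
    rw [Finset.sum_congr rfl congrC, ← Finset.mul_sum]
    rfl
  rw [hC]
  have hsq : (X : PowerSeries ℤ) ^ (2*h * (2*M+1)) = (X ^ (h * (2*M+1)))^2 := by
    rw [← pow_mul]
    congr 1
    ring
  rw [hsq]
  ring

lemma Iphi (h : ℕ) : ∀ M, ∏ n ∈ Finset.range M, (1 - (X : PowerSeries ℤ) ^ (h*(2*n+1)))^2
    = Sphi h M := by
  intro M
  induction M with
  | zero => simp [Sphi, Gb_zero, sInt]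
  | succ M ih =>
      rw [Finset.prod_range_succ, Sphi_succ, ih]
      ring

lemma expAt (h j M : ℕ) :
    h * j + h * tInt ((j:ℤ) - M - 1) = h * M + h * tInt ((j:ℤ) - M) := by
  zify
  have t1 := tInt_cast ((j:ℤ) - M - 1)
  have t2 := tInt_cast ((j:ℤ) - M)
  have hdbl : 2 * ((h:ℤ) * j + h * tInt ((j:ℤ) - M - 1))
      = 2 * ((h:ℤ) * M + h * tInt ((j:ℤ) - M)) := by
    linear_combination (h:ℤ) * t1 - (h:ℤ) * t2
  linarith

lemma expCt (h i M : ℕ) (hi : i ≤ 2*M) :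
    h * (2*M - i) + h * tInt ((i:ℤ) + 1 - M) = h * (M+1) + h * tInt ((i:ℤ) - M) := by
  zify [hi]
  have t1 := tInt_cast ((i:ℤ) + 1 - M)
  have t2 := tInt_cast ((i:ℤ) - M)
  have hdbl : 2 * ((h:ℤ) * (2*(M:ℤ) - i) + h * tInt ((i:ℤ) + 1 - M))
      = 2 * ((h:ℤ) * ((M:ℤ)+1) + h * tInt ((i:ℤ) - M)) := by
    linear_combination (h:ℤ) * t1 - (h:ℤ) * t2
  linarith

noncomputable def Spsi (h M : ℕ) : PowerSeries ℤ :=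
  ∑ j ∈ Finset.range (2*M+1), Gb h (2*M) (j : ℤ) * X ^ (h * tInt ((j:ℤ) - M))

lemma Spsi_succ (h M : ℕ) :
    Spsi h (M+1) = ((1 + X ^ (h * (M+1))) * (1 + X ^ (h * M))) * Spsi h M := by
  have key : ∀ j : ℕ,
      Gb h (2*(M+1)) (j : ℤ) * X ^ (h * tInt ((j:ℤ) - ((M+1:ℕ):ℤ)))
      = (X ^ (h * ((j:ℤ)).toNat) * Gb h (2*M) j) * X ^ (h * tInt ((j:ℤ) - M - 1))
        + ((1 + X ^ (h * (2*M+1))) * Gb h (2*M) ((j:ℤ)-1)) * X ^ (h * tInt ((j:ℤ) - M - 1))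
        + (X ^ (h * ((2*M:ℤ) + 1 + 1 - j).toNat) * Gb h (2*M) ((j:ℤ)-2))
            * X ^ (h * tInt ((j:ℤ) - M - 1)) := by
    intro j
    have h2 : 2*(M+1) = 2*M + 2 := by ring
    rw [h2, Gb_three h (2*M) (j:ℤ)]
    have harg : ((j:ℤ) - ((M+1:ℕ):ℤ)) = ((j:ℤ) - M - 1) := by push_cast; ring
    have harg2 : ((↑(2*M) : ℤ) + 1 + 1 - (j:ℤ)) = ((2*M:ℤ) + 1 + 1 - (j:ℤ)) := by
      push_cast; ring
    rw [harg, harg2]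
    ring
  rw [Spsi, show 2*(M+1)+1 = (2*M+1) + 1 + 1 by ring]
  simp only [key]
  rw [Finset.sum_add_distrib, Finset.sum_add_distrib]
  have hA : (∑ j ∈ Finset.range (2*M+1+1+1),
      (X ^ (h * ((j:ℤ)).toNat) * Gb h (2*M) (j:ℤ)) * X ^ (h * tInt ((j:ℤ) - M - 1)))
      = X ^ (h * M) * Spsi h M := by
    have congrA : ∀ j ∈ Finset.range (2*M+1+1+1),
        (X ^ (h * ((j:ℤ)).toNat) * Gb h (2*M) (j:ℤ)) * X ^ (h * tInt ((j:ℤ) - M - 1))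
        = X ^ (h * M) * (Gb h (2*M) (j:ℤ) * X ^ (h * tInt ((j:ℤ) - M))) := by
      intro j _
      have ht : ((j:ℤ)).toNat = j := by omega
      rw [ht]
      have hx : (X : PowerSeries ℤ) ^ (h*j) * X ^ (h * tInt ((j:ℤ) - M - 1))
          = X ^ (h * M) * X ^ (h * tInt ((j:ℤ) - M)) := by
        rw [← pow_add, ← pow_add, expAt]
      calc X ^ (h*j) * Gb h (2*M) (j:ℤ) * X ^ (h * tInt ((j:ℤ) - M - 1))
          = Gb h (2*M) (j:ℤ) * (X ^ (h*j) * X ^ (h * tInt ((j:ℤ) - M - 1))) := by ring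
        _ = Gb h (2*M) (j:ℤ) * (X ^ (h * M) * X ^ (h * tInt ((j:ℤ) - M))) := by rw [hx]
        _ = _ := by ring
    rw [Finset.sum_congr rfl congrA, ← Finset.mul_sum]
    congr 1
    rw [Finset.sum_range_succ, Finset.sum_range_succ]
    have g1 : Gb h (2*M) ((2*M+1 : ℕ) : ℤ) = 0 := Gb_gt _ _ _ (by push_cast; omega)
    have g2 : Gb h (2*M) ((2*M+1+1 : ℕ) : ℤ) = 0 := Gb_gt _ _ _ (by push_cast; omega)
    rw [g1, g2]
    simp [Spsi]
  rw [hA]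
  have hB : (∑ j ∈ Finset.range (2*M+1+1+1),
      ((1 + X ^ (h * (2*M+1))) * Gb h (2*M) ((j:ℤ)-1)) * X ^ (h * tInt ((j:ℤ) - M - 1)))
      = (1 + X ^ (h * (2*M+1))) * Spsi h M := by
    rw [Finset.sum_range_succ']
    have hB0 : ((1 + X ^ (h * (2*M+1))) * Gb h (2*M) (((0:ℕ):ℤ)-1))
        * X ^ (h * tInt (((0:ℕ):ℤ) - M - 1)) = 0 := by
      rw [Gb_neg h (2*M) _ (by omega)]
      ring
    rw [hB0, add_zero]
    have congrB : ∀ i ∈ Finset.range (2*M+1+1),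
        ((1 + X ^ (h * (2*M+1))) * Gb h (2*M) (((i+1:ℕ):ℤ)-1)) * X ^ (h * tInt (((i+1:ℕ):ℤ) - M - 1))
        = (1 + X ^ (h * (2*M+1))) * (Gb h (2*M) (i:ℤ) * X ^ (h * tInt ((i:ℤ) - M))) := by
      intro i _
      have e1 : (((i+1:ℕ):ℤ)-1) = (i:ℤ) := by push_cast; ring
      have e2 : (((i+1:ℕ):ℤ) - M - 1) = ((i:ℤ) - M) := by push_cast; ring
      rw [e1, e2]
      ring
    rw [Finset.sum_congr rfl congrB, ← Finset.mul_sum]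
    congr 1
    rw [Finset.sum_range_succ]
    have g1 : Gb h (2*M) ((2*M+1 : ℕ) : ℤ) = 0 := Gb_gt _ _ _ (by push_cast; omega)
    rw [g1]
    simp [Spsi]
  rw [hB]
  have hC : (∑ j ∈ Finset.range (2*M+1+1+1),
      (X ^ (h * ((2*M:ℤ) + 1 + 1 - j).toNat) * Gb h (2*M) ((j:ℤ)-2))
        * X ^ (h * tInt ((j:ℤ) - M - 1)))
      = X ^ (h * (M+1)) * Spsi h M := by
    rw [Finset.sum_range_succ']
    have hC0 : (X ^ (h * ((2*M:ℤ) + 1 + 1 - (0:ℕ)).toNat) * Gb h (2*M) (((0:ℕ):ℤ)-2))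
        * X ^ (h * tInt (((0:ℕ):ℤ) - M - 1)) = 0 := by
      rw [Gb_neg h (2*M) _ (by omega)]
      ring
    rw [hC0, add_zero, Finset.sum_range_succ']
    have hC1 : (X ^ (h * ((2*M:ℤ) + 1 + 1 - ((0+1:ℕ):ℤ)).toNat) * Gb h (2*M) (((0+1:ℕ):ℤ)-2))
        * X ^ (h * tInt (((0+1:ℕ):ℤ) - M - 1)) = 0 := by
      rw [Gb_neg h (2*M) _ (by omega)]
      ring
    rw [hC1, add_zero]
    have congrC : ∀ i ∈ Finset.range (2*M+1),
        (X ^ (h * ((2*M:ℤ) + 1 + 1 - ((i+1+1:ℕ):ℤ)).toNat) * Gb h (2*M) (((i+1+1:ℕ):ℤ)-2))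
          * X ^ (h * tInt (((i+1+1:ℕ):ℤ) - M - 1))
        = X ^ (h * (M+1)) * (Gb h (2*M) (i:ℤ) * X ^ (h * tInt ((i:ℤ) - M))) := by
      intro i hi
      have hi' : i ≤ 2*M := by
        have := Finset.mem_range.1 hi; omega
      have e1 : (((i+1+1:ℕ):ℤ)-2) = (i:ℤ) := by push_cast; ring
      have e2 : (((i+1+1:ℕ):ℤ) - M - 1) = ((i:ℤ) + 1 - M) := by push_cast; ring
      have e3 : ((2*M:ℤ) + 1 + 1 - ((i+1+1:ℕ):ℤ)).toNat = 2*M - i := by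
        push_cast; omega
      rw [e1, e2, e3]
      have hx : (X : PowerSeries ℤ) ^ (h*(2*M-i)) * X ^ (h * tInt ((i:ℤ) + 1 - M))
          = X ^ (h * (M+1)) * X ^ (h * tInt ((i:ℤ) - M)) := by
        rw [← pow_add, ← pow_add, expCt h i M hi']
      calc X ^ (h*(2*M-i)) * Gb h (2*M) (i:ℤ) * X ^ (h * tInt ((i:ℤ) + 1 - M))
          = Gb h (2*M) (i:ℤ) * (X ^ (h*(2*M-i)) * X ^ (h * tInt ((i:ℤ) + 1 - M))) := by ring
        _ = Gb h (2*M) (i:ℤ) * (X ^ (h * (M+1)) * X ^ (h * tInt ((i:ℤ) - M))) := by rw [hx]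
        _ = _ := by ring
    rw [Finset.sum_congr rfl congrC, ← Finset.mul_sum]
    rfl
  rw [hC]
  have hsq : (X : PowerSeries ℤ) ^ (h * (2*M+1)) = X ^ (h * (M+1)) * X ^ (h * M) := by
    rw [← pow_add, ← Nat.mul_add]
    congr 1
    ring
  rw [hsq]
  ring

lemma Ipsi (h : ℕ) : ∀ M, ∏ n ∈ Finset.range M,
    ((1 + (X : PowerSeries ℤ) ^ (h*(n+1))) * (1 + (X : PowerSeries ℤ) ^ (h*n)))
    = Spsi h M := by
  intro M
  induction M with
  | zero => simp [Spsi, Gb, tInt]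
  | succ M ih =>
      rw [Finset.prod_range_succ, Spsi_succ, ih]
      ring

lemma sInt_natCast (m : ℕ) : sInt (m : ℤ) = m * m := by
  have := sInt_cast (m : ℤ)
  omega

lemma sInt_neg_natCast (m : ℕ) : sInt ((0:ℤ) - m) = m * m := by
  have := sInt_cast ((0:ℤ) - m)
  have h2 : ((0:ℤ) - m) * ((0:ℤ) - m) = (m:ℤ) * m := by ring
  omega

lemma tInt_natCast (m : ℕ) : 2 * tInt (m : ℤ) = m * (m + 1) := by
  have h := tInt_cast (m : ℤ)
  zify
  push_cast
  linarith

lemma tInt_neg_natCast (m : ℕ) : tInt ((0:ℤ) - (m+1)) = tInt (m : ℤ) := by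
  have h1 := tInt_cast ((0:ℤ) - (m+1))
  have h2 := tInt_cast (m : ℤ)
  have h3 : ((0:ℤ) - (m+1)) * (((0:ℤ) - (m+1)) + 1) = (m:ℤ) * ((m:ℤ) + 1) := by ring
  omega

noncomputable def PhiT (h M : ℕ) : PowerSeries ℤ :=
  1 + ∑ k ∈ Finset.range M, (2 * (-1 : PowerSeries ℤ)^(k+1)) * X ^ (h*((k+1)*(k+1)))

lemma CFphi (h : ℕ) : ∀ M, (∑ j ∈ Finset.range (2*M+1),
    (-1 : PowerSeries ℤ) ^ (j + M) * X ^ (h * sInt ((j:ℤ) - M))) = PhiT h M := by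
  intro M
  induction M with
  | zero => simp [PhiT, sInt]
  | succ M ih =>
      rw [show 2*(M+1)+1 = (2*M+1+1) + 1 by ring, Finset.sum_range_succ,
        Finset.sum_range_succ']
      have hb : (-1 : PowerSeries ℤ) ^ (0 + (M+1)) * X ^ (h * sInt (((0:ℕ):ℤ) - ((M+1):ℕ)))
          = (-1)^(M+1) * X ^ (h * ((M+1)*(M+1))) := by
        rw [show (((0:ℕ):ℤ) - ((M+1):ℕ)) = ((0:ℤ) - ((M+1:ℕ):ℤ)) by push_cast; ring,
          sInt_neg_natCast (M+1), zero_add]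
      have ht : (-1 : PowerSeries ℤ) ^ ((2*M+1+1) + (M+1))
          * X ^ (h * sInt (((2*M+1+1:ℕ):ℤ) - ((M+1):ℕ)))
          = (-1)^(M+1) * X ^ (h * ((M+1)*(M+1))) := by
        have e : (((2*M+1+1:ℕ):ℤ) - ((M+1):ℕ)) = (((M+1):ℕ):ℤ) := by push_cast; ring
        rw [e, sInt_natCast (M+1)]
        congr 1
        rw [show (2*M+1+1) + (M+1) = (M+1) + 2*(M+1) by ring, pow_add, pow_mul]
        simp
      have hmid : ∀ i ∈ Finset.range (2*M+1),
          (-1 : PowerSeries ℤ) ^ ((i+1) + (M+1)) * X ^ (h * sInt (((i+1:ℕ):ℤ) - ((M+1):ℕ)))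
          = (-1 : PowerSeries ℤ) ^ (i + M) * X ^ (h * sInt ((i:ℤ) - M)) := by
        intro i _
        have e : (((i+1:ℕ):ℤ) - ((M+1):ℕ)) = ((i:ℤ) - M) := by push_cast; ring
        rw [e, show (i+1) + (M+1) = (i + M) + 2 by ring, pow_add]
        simp
      rw [Finset.sum_congr rfl hmid, ih, hb, ht, PhiT, PhiT, Finset.sum_range_succ]
      ring

noncomputable def PsiT (h M : ℕ) : PowerSeries ℤ :=
  X ^ (h * tInt (M : ℤ)) + ∑ k ∈ Finset.range M, 2 * X ^ (h * tInt (k : ℤ))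

lemma CFpsi (h : ℕ) : ∀ M, (∑ j ∈ Finset.range (2*M+1),
    (X : PowerSeries ℤ) ^ (h * tInt ((j:ℤ) - M))) = PsiT h M := by
  intro M
  induction M with
  | zero => simp [PsiT, tInt]
  | succ M ih =>
      rw [show 2*(M+1)+1 = (2*M+1+1) + 1 by ring, Finset.sum_range_succ,
        Finset.sum_range_succ']
      have hb : (X : PowerSeries ℤ) ^ (h * tInt (((0:ℕ):ℤ) - ((M+1):ℕ)))
          = X ^ (h * tInt ((M:ℕ):ℤ)) := by
        rw [show (((0:ℕ):ℤ) - ((M+1):ℕ)) = ((0:ℤ) - ((M:ℤ)+1)) by push_cast; ring,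
          tInt_neg_natCast M]
      have ht : (X : PowerSeries ℤ) ^ (h * tInt (((2*M+1+1:ℕ):ℤ) - ((M+1):ℕ)))
          = X ^ (h * tInt (((M+1):ℕ):ℤ)) := by
        congr 2
        push_cast
        ring_nf
      have hmid : ∀ i ∈ Finset.range (2*M+1),
          (X : PowerSeries ℤ) ^ (h * tInt (((i+1:ℕ):ℤ) - ((M+1):ℕ)))
          = (X : PowerSeries ℤ) ^ (h * tInt ((i:ℤ) - M)) := by
        intro i _
        congr 3
        push_cast
        ring
      rw [Finset.sum_congr rfl hmid, ih, hb, ht, PsiT, PsiT, Finset.sum_range_succ]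
      ring

lemma MD_zero_iff {K : ℕ} {f : PowerSeries ℤ} : MD K f 0 ↔ (X : PowerSeries ℤ)^K ∣ f := by
  rw [MD, sub_zero]

lemma term_MD {B n j K E : ℕ} (hj : j ≤ n)
    (h1 : K + 1 ≤ E + B*(j+1)) (h2 : K + 1 ≤ E + B*((n-j)+1)) (hE : E ≤ K) :
    MD (K+1) (Gb B n (j:ℤ) * X^E * poch B 0 n) ((X : PowerSeries ℤ)^E) := by
  have split : poch B 0 n = poch B 0 j * poch B j (n-j) := by
    have hp := poch_add B 0 j (n - j)
    rw [show j + (n - j) = n from by omega] at hp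
    simpa using hp
  have hre : Gb B n (j:ℤ) * X^E * poch B 0 n
      = X^E * ((poch B (n-j) j) * poch B j (n-j)) := by
    rw [split, ← Gb_mul_poch B n j hj]
    ring
  rw [hre]
  have u1 : MD (K+1-E) (poch B (n-j) j) 1 :=
    MD_poch_one (by omega : K+1-E ≤ B*((n-j)+1))
  have u2 : MD (K+1-E) (poch B j (n-j)) 1 :=
    MD_poch_one (by omega : K+1-E ≤ B*(j+1))
  have u3 : MD (K+1-E) (poch B (n-j) j * poch B j (n-j)) 1 := by
    simpa using u1.mul u2
  have := MD_X_pow_mul (e := E) u3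
  rw [show E + (K+1-E) = K+1 by omega] at this
  exact this

lemma natAbs_le_sInt (d : ℤ) : d.natAbs ≤ sInt d := by
  have h : sInt d = d.natAbs * d.natAbs := by
    have := Int.natAbs_mul_self (a := d)
    rw [sInt, ← this]
    omega
  rw [h]
  rcases Nat.eq_zero_or_pos d.natAbs with h0 | h0
  · omega
  · exact Nat.le_mul_of_pos_left _ h0

lemma natAbs_le_tInt (d : ℤ) : d.natAbs ≤ tInt d + 1 := by
  have h := tInt_cast d
  have : (d.natAbs : ℤ) ≤ (tInt d : ℤ) + 1 := by
    rcases le_or_gt 0 d with hd | hd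
    · rw [Int.natAbs_of_nonneg hd]
      nlinarith
    · rw [Int.ofNat_natAbs_of_nonpos (by omega)]
      nlinarith
  exact_mod_cast this

lemma collapse_phi (h K : ℕ) (hh : 1 ≤ h) :
    MD (K+1) (Sphi h (2*K+2) * poch (2*h) 0 (2*(2*K+2)))
      (∑ j ∈ Finset.range (2*(2*K+2)+1),
        (-1 : PowerSeries ℤ) ^ (j + (2*K+2)) * X ^ (h * sInt ((j:ℤ) - (2*K+2:ℕ)))) := by
  set M := 2*K+2 with hM
  rw [Sphi, Finset.sum_mul]
  apply MD.sum
  intro j hj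
  have hjM : j ≤ 2*M := by
    have := Finset.mem_range.1 hj; omega
  set E := h * sInt ((j:ℤ) - (M:ℕ)) with hE
  by_cases hcase : E ≤ K
  · -- main case: term_MD
    have hs : sInt ((j:ℤ) - (M:ℕ)) ≤ K := by
      calc sInt ((j:ℤ) - (M:ℕ)) ≤ h * sInt ((j:ℤ) - (M:ℕ)) := Nat.le_mul_of_pos_left _ hh
        _ ≤ K := hcase
    have habs : ((j:ℤ) - (M:ℕ)).natAbs ≤ K := le_trans (natAbs_le_sInt _) hs
    have hb1 : K + 1 ≤ E + (2*h)*(j+1) := by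
      have hjl : M - K ≤ j := by omega
      have hmul : 2*1*(K+3) ≤ 2*h*(j+1) := by
        apply Nat.mul_le_mul
        · omega
        · omega
      omega
    have hb2 : K + 1 ≤ E + (2*h)*((2*M-j)+1) := by
      have hjr : j ≤ M + K := by omega
      have hmul : 2*1*(K+3) ≤ 2*h*((2*M-j)+1) := by
        apply Nat.mul_le_mul
        · omega
        · omega
      omega
    have key := term_MD (B := 2*h) (n := 2*M) (j := j) (K := K) (E := E) hjM hb1 hb2 hcase
    have hre : (-1 : PowerSeries ℤ) ^ (j + M) * Gb (2*h) (2*M) (j:ℤ) * X ^ E * poch (2*h) 0 (2*M)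
        = (-1 : PowerSeries ℤ) ^ (j + M) * (Gb (2*h) (2*M) (j:ℤ) * X ^ E * poch (2*h) 0 (2*M)) := by
      ring
    rw [hre]
    exact MD.mul MD.refl key
  · -- degenerate: both sides divisible by X^(K+1)
    push_neg at hcase
    have d1 : MD (K+1) ((-1 : PowerSeries ℤ) ^ (j + M) * Gb (2*h) (2*M) (j:ℤ) * X ^ E
        * poch (2*h) 0 (2*M)) 0 := by
      rw [MD_zero_iff]
      have : (X : PowerSeries ℤ)^(K+1) ∣ X^E := pow_dvd_pow _ (by omega)
      exact dvd_mul_of_dvd_left (dvd_mul_of_dvd_right this _) _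
    have d2 : MD (K+1) ((-1 : PowerSeries ℤ) ^ (j + M) * X ^ E) 0 := by
      rw [MD_zero_iff]
      exact (pow_dvd_pow (X : PowerSeries ℤ) (by omega : K+1 ≤ E)).mul_left _
    exact d1.trans d2.symm

lemma collapse_psi (h K : ℕ) (hh : 1 ≤ h) :
    MD (K+1) (Spsi h (2*K+2) * poch h 0 (2*(2*K+2)))
      (∑ j ∈ Finset.range (2*(2*K+2)+1),
        (X : PowerSeries ℤ) ^ (h * tInt ((j:ℤ) - (2*K+2:ℕ)))) := by
  set M := 2*K+2 with hM
  rw [Spsi, Finset.sum_mul]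
  apply MD.sum
  intro j hj
  have hjM : j ≤ 2*M := by
    have := Finset.mem_range.1 hj; omega
  set E := h * tInt ((j:ℤ) - (M:ℕ)) with hE
  by_cases hcase : E ≤ K
  · have hs : tInt ((j:ℤ) - (M:ℕ)) ≤ K := by
      calc tInt ((j:ℤ) - (M:ℕ)) ≤ h * tInt ((j:ℤ) - (M:ℕ)) := Nat.le_mul_of_pos_left _ hh
        _ ≤ K := hcase
    have habs : ((j:ℤ) - (M:ℕ)).natAbs ≤ K + 1 := by
      have := natAbs_le_tInt ((j:ℤ) - (M:ℕ))
      omega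
    have hb1 : K + 1 ≤ E + h*(j+1) := by
      have hjl : M - (K+1) ≤ j := by omega
      have hmul : 1*(K+2) ≤ h*(j+1) := by
        apply Nat.mul_le_mul
        · omega
        · omega
      omega
    have hb2 : K + 1 ≤ E + h*((2*M-j)+1) := by
      have hjr : j ≤ M + (K+1) := by omega
      have hmul : 1*(K+2) ≤ h*((2*M-j)+1) := by
        apply Nat.mul_le_mul
        · omega
        · omega
      omega
    exact term_MD hjM hb1 hb2 hcase
  · push_neg at hcase
    have d1 : MD (K+1) (Gb h (2*M) (j:ℤ) * X ^ E * poch h 0 (2*M)) 0 := by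
      rw [MD_zero_iff]
      have : (X : PowerSeries ℤ)^(K+1) ∣ X^E := pow_dvd_pow _ (by omega)
      exact dvd_mul_of_dvd_left (dvd_mul_of_dvd_right this _) _
    have d2 : MD (K+1) ((X : PowerSeries ℤ) ^ E) 0 := by
      rw [MD_zero_iff]
      exact pow_dvd_pow _ (by omega)
    exact d1.trans d2.symm

lemma MD_iff_coeff {K : ℕ} {f g : PowerSeries ℤ} :
    MD K f g ↔ ∀ n < K, (PowerSeries.coeff (R := ℤ) n) f = (PowerSeries.coeff (R := ℤ) n) g := by
  rw [MD, PowerSeries.X_pow_dvd_iff]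
  constructor
  · intro hyp n hn
    have := hyp n hn
    rw [map_sub] at this
    linarith
  · intro hyp n hn
    rw [map_sub, hyp n hn]
    ring

lemma poch_eq_range (h c : ℕ) :
    poch h 0 c = ∏ k ∈ Finset.range c, (1 - (X : PowerSeries ℤ) ^ (h * (k+1))) := by
  apply Finset.prod_congr rfl
  intro i _
  rw [show 0 + i + 1 = i + 1 by ring]

lemma MD_qPochInf (h K c : ℕ) (hh : 1 ≤ h) (hc : K ≤ c) :
    MD K (qPochInf ℤ h) (poch h 0 c) := by
  rw [MD_iff_coeff]
  intro n hn
  have h1 : (PowerSeries.coeff (R := ℤ) n) (qPochInf ℤ h) = (PowerSeries.coeff (R := ℤ) n) (poch h 0 (n+1)) := by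
    rw [qPochInf, PowerSeries.coeff_mk, poch_eq_range]
  rw [h1]
  have h2 : MD (n+1) (poch h 0 c) (poch h 0 (n+1)) := by
    have hsplit : poch h 0 c = poch h 0 (n+1) * poch h (n+1) (c - (n+1)) := by
      have hp := poch_add h 0 (n+1) (c - (n+1))
      rw [show (n+1) + (c - (n+1)) = c from by omega] at hp
      simpa using hp
    rw [hsplit]
    have hone : MD (n+1) (poch h (n+1) (c - (n+1))) 1 := by
      apply MD_poch_one
      calc n+1 ≤ 1 * (n+1+1) := by omega
        _ ≤ h * (n+1+1) := by apply Nat.mul_le_mul <;> omega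
    simpa using (MD.refl (K := n+1) (f := poch h 0 (n+1))).mul hone
  exact (h2.coeff_eq (by omega)).symm

lemma poch_split (h : ℕ) : ∀ L, poch h 0 (2*L)
    = (∏ n ∈ Finset.range L, (1 - (X : PowerSeries ℤ) ^ (h*(2*n+1)))) * poch (2*h) 0 L := by
  intro L
  induction L with
  | zero => simp [poch_zero]
  | succ L ih =>
      rw [show 2*(L+1) = (2*L) + 1 + 1 by ring, poch_succ, poch_succ,
        Finset.prod_range_succ, poch_succ, ih]
      rw [show h * (0 + 2*L + 1) = h * (2*L+1) by ring,
        show h * (0 + (2*L+1) + 1) = 2*h*(0+L+1) by ring]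
      ring

lemma plus_split (h : ℕ) : ∀ c, (∏ n ∈ Finset.range c, (1 + (X : PowerSeries ℤ) ^ (h*(n+1))))
    * poch h 0 c = poch (2*h) 0 c := by
  intro c
  induction c with
  | zero => simp [poch_zero]
  | succ c ih =>
      rw [Finset.prod_range_succ, poch_succ, poch_succ, ← ih]
      have hx : ((X : PowerSeries ℤ) ^ (h*(c+1)))^2 = X ^ (2*h*(0+c+1)) := by
        rw [← pow_mul]
        congr 1
        ring
      rw [show h * (0+c+1) = h*(c+1) by ring]
      calc (∏ n ∈ Finset.range c, (1 + (X:PowerSeries ℤ) ^ (h*(n+1)))) * (1 + X ^ (h*(c+1)))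
            * ((poch h 0 c) * (1 - X ^ (h*(c+1))))
          = (∏ n ∈ Finset.range c, (1 + (X:PowerSeries ℤ) ^ (h*(n+1)))) * poch h 0 c
            * (1 - (X ^ (h*(c+1)))^2) := by ring
        _ = _ := by rw [hx]

lemma MD_one_plus {K e : ℕ} (hK : K ≤ e) : MD K (1 + X ^ e) 1 := by
  rw [MD, add_sub_cancel_left]
  exact pow_dvd_pow _ hK

lemma two_eq_C : (2 : PowerSeries ℤ) = PowerSeries.C (R := ℤ) 2 := by norm_num

lemma MD_cancel_two {K : ℕ} {f g : PowerSeries ℤ} (h : MD K (2 * f) (2 * g)) : MD K f g := by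
  rw [MD_iff_coeff] at h ⊢
  intro n hn
  have := h n hn
  rw [two_eq_C, PowerSeries.coeff_C_mul, PowerSeries.coeff_C_mul] at this
  linarith

noncomputable def Sig (h : ℕ) : PowerSeries ℤ :=
  PowerSeries.mk fun N =>
    ∑ k ∈ Finset.range N, if N = h*((k+1)*(k+1)) then (-1 : ℤ)^(k+1) else 0

noncomputable def PsiS (h : ℕ) : PowerSeries ℤ :=
  PowerSeries.mk fun N =>
    ∑ k ∈ Finset.range (N+1), if 2*N = h*(k*(k+1)) then (1 : ℤ) else 0

lemma sum_ite_ext {R1 R2 : ℕ} {P : ℕ → Prop} [DecidablePred P] {v : ℕ → ℤ}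
    (hb : ∀ k, P k → k < R1 ∧ k < R2) :
    (∑ k ∈ Finset.range R1, if P k then v k else 0)
      = ∑ k ∈ Finset.range R2, if P k then v k else 0 := by
  rcases le_total R1 R2 with hc | hc
  · apply Finset.sum_subset (Finset.range_subset_range.2 hc)
    intro k hk1 hk2
    have hnp : ¬ P k := fun hp => by
      have := (hb k hp).1
      simp only [Finset.mem_range] at hk2
      omega
    simp [hnp]
  · exact (Finset.sum_subset (Finset.range_subset_range.2 hc) (fun k hk1 hk2 => by
      have hnp : ¬ P k := fun hp => by
        have := (hb k hp).2
        simp only [Finset.mem_range] at hk2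
        omega
      simp [hnp])).symm

lemma MD_PhiT (h K M : ℕ) (hh : 1 ≤ h) (hKM : K ≤ M) :
    MD (K+1) (PhiT h M) (1 + 2 * Sig h) := by
  rw [MD_iff_coeff]
  intro n hn
  have hL : (PowerSeries.coeff (R := ℤ) n) (PhiT h M)
      = (PowerSeries.coeff (R := ℤ) n) (1 : PowerSeries ℤ)
        + ∑ k ∈ Finset.range M, (if n = h*((k+1)*(k+1)) then 2*(-1 : ℤ)^(k+1) else 0) := by
    rw [PhiT, map_add, map_sum]
    congr 1
    apply Finset.sum_congr rfl
    intro k _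
    have hC : ((2 : PowerSeries ℤ) * (-1)^(k+1)) * X ^ (h*((k+1)*(k+1)))
        = PowerSeries.C (R := ℤ) (2*(-1)^(k+1)) * X ^ (h*((k+1)*(k+1))) := by
      congr 1
      rw [map_mul, map_pow, map_neg, map_one]
      norm_num
    rw [hC, PowerSeries.coeff_C_mul, PowerSeries.coeff_X_pow]
    by_cases hc : n = h*((k+1)*(k+1)) <;> simp [hc]
  have hR : (PowerSeries.coeff (R := ℤ) n) (1 + 2 * Sig h)
      = (PowerSeries.coeff (R := ℤ) n) (1 : PowerSeries ℤ)
        + ∑ k ∈ Finset.range n, (if n = h*((k+1)*(k+1)) then 2*(-1 : ℤ)^(k+1) else 0) := by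
    rw [map_add, two_eq_C, PowerSeries.coeff_C_mul, Sig, PowerSeries.coeff_mk,
      Finset.mul_sum]
    congr 1
    apply Finset.sum_congr rfl
    intro k _
    by_cases hc : n = h*((k+1)*(k+1)) <;> simp [hc]
  rw [hL, hR]
  congr 1
  apply sum_ite_ext
  intro k hk
  have h1 : k+1 ≤ (k+1)*(k+1) := Nat.le_mul_of_pos_left _ (by omega)
  have h2 : (k+1)*(k+1) ≤ h*((k+1)*(k+1)) := Nat.le_mul_of_pos_left _ hh
  omega

lemma M_le_tInt (M : ℕ) : M ≤ tInt (M : ℤ) := by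
  have := tInt_natCast M
  nlinarith

lemma MD_PsiT (h K M : ℕ) (hh : 1 ≤ h) (hKM : K < M) :
    MD (K+1) (PsiT h M) (2 * PsiS h) := by
  rw [MD_iff_coeff]
  intro n hn
  have hiff : ∀ k : ℕ, (n = h * tInt (k:ℤ)) ↔ (2*n = h*(k*(k+1))) := by
    intro k
    have ht : h * (k*(k+1)) = 2 * (h * tInt (k:ℤ)) := by
      have h2 := tInt_natCast k
      calc h * (k*(k+1)) = h * (2 * tInt (k:ℤ)) := by rw [h2]
        _ = 2 * (h * tInt (k:ℤ)) := by ring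
    omega
  have hL : (PowerSeries.coeff (R := ℤ) n) (PsiT h M)
      = ∑ k ∈ Finset.range M, (if 2*n = h*(k*(k+1)) then (2:ℤ) else 0) := by
    rw [PsiT, map_add, map_sum]
    have hfirst : (PowerSeries.coeff (R := ℤ) n) ((X : PowerSeries ℤ) ^ (h * tInt (M:ℤ))) = 0 := by
      rw [PowerSeries.coeff_X_pow]
      have h1 : M ≤ tInt (M:ℤ) := M_le_tInt M
      have h2 : tInt (M:ℤ) ≤ h * tInt (M:ℤ) := Nat.le_mul_of_pos_left _ hh
      have hne : ¬ n = h * tInt (M:ℤ) := by omega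
      simp [hne]
    rw [hfirst, zero_add]
    apply Finset.sum_congr rfl
    intro k _
    rw [two_eq_C, PowerSeries.coeff_C_mul, PowerSeries.coeff_X_pow]
    by_cases hc : 2*n = h*(k*(k+1))
    · rw [if_pos ((hiff k).2 hc), if_pos hc]
      ring
    · rw [if_neg (fun hx => hc ((hiff k).1 hx)), if_neg hc]
      ring
  have hR : (PowerSeries.coeff (R := ℤ) n) (2 * PsiS h)
      = ∑ k ∈ Finset.range (n+1), (if 2*n = h*(k*(k+1)) then (2:ℤ) else 0) := by
    rw [two_eq_C, PowerSeries.coeff_C_mul, PsiS, PowerSeries.coeff_mk, Finset.mul_sum]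
    apply Finset.sum_congr rfl
    intro k _
    by_cases hc : 2*n = h*(k*(k+1)) <;> simp [hc]
  rw [hL, hR]
  apply sum_ite_ext
  intro k hk
  have h1 : k*(k+1) ≤ h*(k*(k+1)) := Nat.le_mul_of_pos_left _ hh
  have h2 : 2*k ≤ k*(k+1) := by
    rcases Nat.eq_zero_or_pos k with h0 | h0
    · simp [h0]
    · calc 2*k ≤ (k+1)*k := by apply Nat.mul_le_mul <;> omega
        _ = k*(k+1) := by ring
  omega

lemma MD_poch_ext (B K c c' : ℕ) (hc : c ≤ c') (hK : K ≤ B * (c+1)) :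
    MD K (poch B 0 c) (poch B 0 c') := by
  have hsplit : poch B 0 c' = poch B 0 c * poch B c (c' - c) := by
    have hp := poch_add B 0 c (c' - c)
    rw [show c + (c' - c) = c' from by omega] at hp
    simpa using hp
  rw [hsplit]
  have hone : MD K (poch B c (c' - c)) 1 := MD_poch_one hK
  have := (MD.refl (K := K) (f := poch B 0 c)).mul hone
  simpa using this.symm

lemma main_phi (h : ℕ) (hh : 1 ≤ h) :
    qPochInf ℤ h ^ 2 = qPochInf ℤ (2*h) * (1 + 2 * Sig h) := by
  ext N
  set K := N with hK
  set M := 2*K+2 with hM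
  have h2h : 1 ≤ 2*h := by omega
  have t1 : MD (K+1) (qPochInf ℤ h) (poch h 0 (2*M)) := MD_qPochInf h (K+1) (2*M) hh (by omega)
  have t2 : MD (K+1) (qPochInf ℤ h ^ 2) (poch h 0 (2*M) ^ 2) := by
    have := t1.mul t1
    simpa [pow_two] using this
  have t3 : poch h 0 (2*M) ^ 2 = Sphi h M * (poch (2*h) 0 M * poch (2*h) 0 M) := by
    rw [poch_split h M, ← Iphi h M, Finset.prod_pow]
    ring
  have t4 : MD (K+1) (poch (2*h) 0 M) (poch (2*h) 0 (2*M)) :=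
    MD_poch_ext (2*h) (K+1) M (2*M) (by omega) (by
      calc K+1 ≤ 2*1*(M+1) := by omega
        _ ≤ 2*h*(M+1) := by apply Nat.mul_le_mul <;> omega)
  have u1 : MD (K+1) (qPochInf ℤ h ^ 2)
      ((Sphi h M * poch (2*h) 0 (2*M)) * poch (2*h) 0 M) := by
    refine t2.trans ?_
    rw [t3]
    have hmm := (MD.mul (MD.mul (MD.refl (K := K+1) (f := Sphi h M)) t4)
      (MD.refl (K := K+1) (f := poch (2*h) 0 M)))
    rw [← mul_assoc]
    exact hmm
  have t6 : MD (K+1) (Sphi h M * poch (2*h) 0 (2*M)) (PhiT h M) := by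
    have := collapse_phi h K hh
    rwa [CFphi h M] at this
  have t9 : MD (K+1) (PhiT h M * poch (2*h) 0 M) ((1 + 2 * Sig h) * poch (2*h) 0 M) :=
    (MD_PhiT h K M hh (by omega)).mul MD.refl
  have u3 : MD (K+1) (qPochInf ℤ h ^ 2) ((1 + 2 * Sig h) * poch (2*h) 0 M) :=
    u1.trans ((t6.mul (MD.refl (K := K+1) (f := poch (2*h) 0 M))).trans t9)
  have t10 : MD (K+1) (qPochInf ℤ (2*h) * (1 + 2 * Sig h))
      ((1 + 2 * Sig h) * poch (2*h) 0 M) := by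
    have := (MD_qPochInf (2*h) (K+1) M h2h (by omega)).mul
      (MD.refl (K := K+1) (f := 1 + 2 * Sig h))
    rw [show poch (2*h) 0 M * (1 + 2 * Sig h) = (1 + 2 * Sig h) * poch (2*h) 0 M by ring] at this
    exact this
  exact (u3.trans t10.symm).coeff_eq (by omega)

lemma main_psi (h : ℕ) (hh : 1 ≤ h) :
    qPochInf ℤ (2*h) ^ 2 = qPochInf ℤ h * PsiS h := by
  ext N
  set K := N with hK
  set M := 2*K+2 with hM
  have h2h : 1 ≤ 2*h := by omega
  -- collapse side
  have c1 : MD (K+1) (Spsi h M * poch h 0 (2*M)) (PsiT h M) := by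
    have := collapse_psi h K hh
    rwa [CFpsi h M] at this
  -- product structure of Spsi
  have c2 : Spsi h M = (∏ n ∈ Finset.range M, (1 + (X : PowerSeries ℤ)^(h*(n+1))))
      * (2 * ∏ n ∈ Finset.range (M-1), (1 + (X : PowerSeries ℤ)^(h*(n+1)))) := by
    rw [← Ipsi h M, Finset.prod_mul_distrib]
    congr 1
    rw [show M = (M-1)+1 from by omega, Finset.prod_range_succ',
      show h*0 = 0 from by ring, pow_zero, mul_comm]
    norm_num
  -- abbreviations
  obtain ⟨Pi1, hPi1⟩ : ∃ p : PowerSeries ℤ,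
      p = ∏ n ∈ Finset.range (M-1), (1 + (X : PowerSeries ℤ)^(h*(n+1))) := ⟨_, rfl⟩
  have c3 : (∏ n ∈ Finset.range M, (1 + (X : PowerSeries ℤ)^(h*(n+1))))
      = Pi1 * (1 + X^(h*M)) := by
    rw [hPi1, show M = (M-1)+1 from by omega, Finset.prod_range_succ,
      show M - 1 + 1 = M from by omega]
  rw [c3] at c2
  rw [← hPi1] at c2
  have c4 : MD (K+1) ((1 : PowerSeries ℤ) + X^(h*M)) 1 :=
    MD_one_plus (by
      calc K+1 ≤ 1*M := by omega
        _ ≤ h*M := by apply Nat.mul_le_mul <;> omega)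
  have c5 : MD (K+1) (poch h 0 (M-1)) (poch h 0 (2*M)) :=
    MD_poch_ext h (K+1) (M-1) (2*M) (by omega) (by
      calc K+1 ≤ 1*((M-1)+1) := by omega
        _ ≤ h*((M-1)+1) := by apply Nat.mul_le_mul <;> omega)
  -- main chain (multiplied by 2)
  have d1 : MD (K+1) (2 * ((Pi1 * poch h 0 (M-1))^2))
      (2 * (poch h 0 (M-1) * PsiS h)) := by
    have e1 : MD (K+1) (2 * ((Pi1 * poch h 0 (M-1))^2))
        ((Spsi h M * poch h 0 (2*M)) * poch h 0 (M-1)) := by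
      have hx : (Spsi h M * poch h 0 (2*M)) * poch h 0 (M-1)
          = (Pi1 * (1 + X^(h*M))) * poch h 0 (2*M) * (2 * (Pi1 * poch h 0 (M-1))) := by
        rw [c2]
        ring
      rw [hx]
      have hy : 2 * ((Pi1 * poch h 0 (M-1))^2)
          = (Pi1 * (1:PowerSeries ℤ)) * poch h 0 (M-1) * (2 * (Pi1 * poch h 0 (M-1))) := by
        ring
      rw [hy]
      exact ((MD.refl.mul c4.symm).mul c5).mul MD.refl
    refine e1.trans ?_
    have e2 : MD (K+1) ((Spsi h M * poch h 0 (2*M)) * poch h 0 (M-1))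
        (PsiT h M * poch h 0 (M-1)) := c1.mul MD.refl
    refine e2.trans ?_
    have e3 : MD (K+1) (PsiT h M * poch h 0 (M-1)) ((2 * PsiS h) * poch h 0 (M-1)) :=
      (MD_PsiT h K M hh (by omega)).mul MD.refl
    refine e3.trans ?_
    rw [show (2 * PsiS h) * poch h 0 (M-1) = 2 * (poch h 0 (M-1) * PsiS h) by ring]
    exact MD.refl
  have d2 : MD (K+1) ((Pi1 * poch h 0 (M-1))^2) (poch h 0 (M-1) * PsiS h) :=
    MD_cancel_two d1
  -- connect to qPochInf
  have f1 : MD (K+1) (qPochInf ℤ (2*h) ^ 2) ((Pi1 * poch h 0 (M-1))^2) := by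
    have := MD_qPochInf (2*h) (K+1) (M-1) h2h (by omega)
    rw [← plus_split h (M-1), ← hPi1] at this
    have h2 := this.mul this
    simpa [pow_two] using h2
  have f2 : MD (K+1) (qPochInf ℤ h * PsiS h) (poch h 0 (M-1) * PsiS h) :=
    (MD_qPochInf h (K+1) (M-1) hh (by omega)).mul MD.refl
  exact ((f1.trans d2).trans f2.symm).coeff_eq (by omega)

lemma constCoeff_qPochInf (h : ℕ) (hh : 1 ≤ h) :
    PowerSeries.constantCoeff (R := ℤ) (qPochInf ℤ h) = 1 := by
  rw [← PowerSeries.coeff_zero_eq_constantCoeff_apply, qPochInf, PowerSeries.coeff_mk,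
    Finset.prod_range_one, map_sub, PowerSeries.coeff_X_pow]
  simp
  omega

lemma coeff_zero_Sig (h : ℕ) : PowerSeries.coeff (R := ℤ) 0 (Sig h) = 0 := by
  rw [Sig, PowerSeries.coeff_mk]
  simp

lemma coeff_sq_even (f : PowerSeries ℤ) (N : ℕ) (hN : N % 2 = 1) :
    ∃ t : ℤ, (PowerSeries.coeff (R := ℤ) N) (f * f) = 2 * t := by
  rw [PowerSeries.coeff_mul,
    Finset.Nat.sum_antidiagonal_eq_sum_range_succ
      (fun a b => (PowerSeries.coeff (R := ℤ) a) f * (PowerSeries.coeff (R := ℤ) b) f) N]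
  obtain ⟨k, hk⟩ : ∃ k, N + 1 = k + k := ⟨(N+1)/2, by omega⟩
  rw [Nat.succ_eq_add_one, hk, Finset.sum_range_add]
  refine ⟨∑ i ∈ Finset.range k, (PowerSeries.coeff (R := ℤ) i) f * (PowerSeries.coeff (R := ℤ) (N - i)) f, ?_⟩
  have hco : ∀ i ∈ Finset.range k,
      (PowerSeries.coeff (R := ℤ) (k+i)) f * (PowerSeries.coeff (R := ℤ) (N - (k+i))) f
      = (PowerSeries.coeff (R := ℤ) (k-1-i)) f * (PowerSeries.coeff (R := ℤ) (N - (k-1-i))) f := by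
    intro i hi
    have hik : i < k := Finset.mem_range.1 hi
    have e1 : N - (k + i) = k - 1 - i := by omega
    have e2 : N - (k - 1 - i) = k + i := by omega
    rw [e1, e2]
    ring
  rw [Finset.sum_congr rfl hco,
    Finset.sum_range_reflect (fun i => (PowerSeries.coeff (R := ℤ) i) f * (PowerSeries.coeff (R := ℤ) (N - i)) f) k]
  ring

lemma Sig2_coeff_odd (N : ℕ) (hN : N % 2 = 1) : PowerSeries.coeff (R := ℤ) N (Sig 2) = 0 := by
  rw [Sig, PowerSeries.coeff_mk]
  apply Finset.sum_eq_zero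
  intro k _
  have : ¬ (N = 2*((k+1)*(k+1))) := by omega
  simp [this]

lemma Sig2_sq_coeff_odd (N : ℕ) (hN : N % 2 = 1) :
    PowerSeries.coeff (R := ℤ) N (Sig 2 * Sig 2) = 0 := by
  rw [PowerSeries.coeff_mul]
  apply Finset.sum_eq_zero
  intro p hp
  have hsum : p.1 + p.2 = N := Finset.HasAntidiagonal.mem_antidiagonal.1 hp
  rcases Nat.even_or_odd p.1 with he | ho
  · obtain ⟨r, hr⟩ := he
    have : p.2 % 2 = 1 := by omega
    rw [Sig2_coeff_odd p.2 this, mul_zero]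
  · obtain ⟨r, hr⟩ := ho
    have : p.1 % 2 = 1 := by omega
    rw [Sig2_coeff_odd p.1 this, zero_mul]

lemma tri_inj {k l : ℕ} (h : k*(k+1) = l*(l+1)) : k = l := by
  rcases lt_trichotomy k l with hlt | heq | hgt
  · exfalso; zify at h; nlinarith
  · exact heq
  · exfalso; zify at h; nlinarith

lemma sq_inj {k l : ℕ} (h : k*k = l*l) : k = l := by
  rcases lt_trichotomy k l with hlt | heq | hgt
  · exfalso; zify at h; nlinarith
  · exact heq
  · exfalso; zify at h; nlinarith

lemma bridge24 (a b : ℤ) (h : ((a : ZMod 4)) = (b : ZMod 4)) :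
    ((2*a : ℤ) : ZMod 8) = ((2*b : ℤ) : ZMod 8) := by
  have hd : (4:ℤ) ∣ b - a := by
    have := ((ZMod.intCast_eq_intCast_iff a b 4).1 h).dvd
    simpa using this
  rw [ZMod.intCast_eq_intCast_iff]
  have h8 : (8:ℤ) ∣ 2*b - 2*a := by
    obtain ⟨c, hc⟩ := hd
    exact ⟨c, by linarith⟩
  have hm : (2*a) ≡ (2*b) [ZMOD (8:ℤ)] := Int.modEq_iff_dvd.2 h8
  exact_mod_cast hm

section End8

abbrev F8 : PowerSeries ℤ →+* PowerSeries (ZMod 8) := PowerSeries.map (Int.castRingHom (ZMod 8))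

lemma unit_of_const_one (R : Type*) [CommRing R] (f : PowerSeries R)
    (h : PowerSeries.constantCoeff (R := R) f = 1) : IsUnit f := by
  rw [PowerSeries.isUnit_iff_constantCoeff, h]
  exact isUnit_one

lemma const_map_one {R : Type*} [CommRing R] (φ : ℤ →+* R) (f : PowerSeries ℤ)
    (h : PowerSeries.constantCoeff (R := ℤ) f = 1) :
    PowerSeries.constantCoeff (R := R) (PowerSeries.map φ f) = 1 := by
  rw [← PowerSeries.coeff_zero_eq_constantCoeff_apply, PowerSeries.coeff_map,
    PowerSeries.coeff_zero_eq_constantCoeff_apply, h, map_one]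

lemma h8PS : (8 : PowerSeries (ZMod 8)) = 0 := by
  rw [show (8 : PowerSeries (ZMod 8)) = PowerSeries.C (R := (ZMod 8)) 8 from (map_ofNat _ 8).symm,
    show (8 : ZMod 8) = 0 from by decide, map_zero]

lemma abar_value (abar : ℕ → ℕ → ℕ) (habar : IsGenOvercubic abar) (m N : ℕ) (hN : N % 2 = 1) :
    ((abar (2*m+1) N : ℤ) : ZMod 8)
      = 6 * ((PowerSeries.coeff (R := ℤ) N (Sig 1) : ℤ) : ZMod 8) + (if N = 0 then 1 else 0) := by
  have hE0 := habar (2*m+1) (by omega)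
  have hE := congrArg F8 hE0
  simp only [map_mul, map_pow] at hE
  set A : PowerSeries (ZMod 8) := F8 (PowerSeries.mk fun n => ((abar (2*m+1) n : ℤ))) with hA
  set Q1 : PowerSeries (ZMod 8) := F8 (qPochInf ℤ 1) with hQ1
  set Q2 : PowerSeries (ZMod 8) := F8 (qPochInf ℤ 2) with hQ2
  set Q4 : PowerSeries (ZMod 8) := F8 (qPochInf ℤ 4) with hQ4
  set S1 : PowerSeries (ZMod 8) := F8 (Sig 1) with hS1
  set S2 : PowerSeries (ZMod 8) := F8 (Sig 2) with hS2
  -- Gauss identities mod 8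
  have hg1 : Q1^2 = Q2 * (1 + 2*S1) := by
    have hz := main_phi 1 le_rfl
    norm_num at hz
    have := congrArg F8 hz
    simp only [map_mul, map_pow, map_add, map_one, map_ofNat] at this
    exact this
  have hg2 : Q2^2 = Q4 * (1 + 2*S2) := by
    have hz := main_phi 2 (by omega)
    norm_num at hz
    have := congrArg F8 hz
    simp only [map_mul, map_pow, map_add, map_one, map_ofNat] at this
    exact this
  -- rearrange hE
  rw [show (2*m+1) - 1 = 2*m from by omega] at hE
  have hE2 : (A * ((1+2*S1) * (1+2*S2)^(2*m))) * ((Q2 * Q4^(2*m+1)) * (1+2*S2))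
      = 1 * ((Q2 * Q4^(2*m+1)) * (1+2*S2)) := by
    have l1 : A * Q1^2 * Q2^(2*(2*m+1))
        = (A * ((1+2*S1) * (1+2*S2)^(2*m))) * ((Q2 * Q4^(2*m+1)) * (1+2*S2)) := by
      rw [pow_mul, hg1, hg2, mul_pow]
      ring
    have l2 : Q4^(2*m) * Q2^3 = 1 * ((Q2 * Q4^(2*m+1)) * (1+2*S2)) := by
      rw [show Q2^3 = Q2^2 * Q2 from by ring, hg2]
      ring
    rw [← l1, ← l2]
    exact hE
  -- cancel the unit
  have hu : IsUnit ((Q2 * Q4^(2*m+1)) * (1+2*S2)) := by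
    have u2 : IsUnit Q2 := unit_of_const_one _ _ (const_map_one _ _ (constCoeff_qPochInf 2 (by omega)))
    have u4 : IsUnit Q4 := unit_of_const_one _ _ (const_map_one _ _ (constCoeff_qPochInf 4 (by omega)))
    have us : IsUnit (1 + 2*S2) := by
      apply unit_of_const_one
      rw [map_add, map_one, map_mul]
      have : PowerSeries.constantCoeff (R := (ZMod 8)) S2 = 0 := by
        rw [hS2, ← PowerSeries.coeff_zero_eq_constantCoeff_apply, PowerSeries.coeff_map,
          coeff_zero_Sig]
        simp
      rw [this]
      ring
    exact (u2.mul (u4.pow _)).mul us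
  have hA1 : A * ((1+2*S1) * (1+2*S2)^(2*m)) = 1 := hu.mul_right_cancel hE2
  -- candidate inverse
  have hpow : ∀ j : ℕ, (1+2*S2)^(2*j)
      = 1 + 4 * PowerSeries.C (R := (ZMod 8)) (j : ZMod 8) * (S2 + S2^2) := by
    intro j
    induction j with
    | zero => simp
    | succ j ih =>
        rw [show 2*(j+1) = 2*j + 2 from by ring, pow_add, ih]
        have hc : PowerSeries.C (R := (ZMod 8)) ((j+1 : ℕ) : ZMod 8)
            = PowerSeries.C (R := (ZMod 8)) (j : ZMod 8) + 1 := by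
          push_cast
          rw [map_add, map_one]
        rw [hc]
        linear_combination (2 * (PowerSeries.C (R := (ZMod 8)) (j : ZMod 8))
          * (S2 + S2^2)^2) * h8PS
  have hB1 : (1+2*S1) * (1+6*S1+4*S1^2) = 1 := by
    linear_combination (S1 + 2*S1^2 + S1^3) * h8PS
  have hsq : (1 + 4 * PowerSeries.C (R := (ZMod 8)) (m : ZMod 8) * (S2 + S2^2))
      * (1 + 4 * PowerSeries.C (R := (ZMod 8)) (m : ZMod 8) * (S2 + S2^2)) = 1 := by
    linear_combination ((PowerSeries.C (R := (ZMod 8)) (m : ZMod 8)) * (S2+S2^2)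
      + 2 * ((PowerSeries.C (R := (ZMod 8)) (m : ZMod 8)) * (S2+S2^2))^2) * h8PS
  have hB2 : ((1+6*S1+4*S1^2) * (1 + 4 * PowerSeries.C (R := (ZMod 8)) (m : ZMod 8) * (S2 + S2^2)))
      * ((1+2*S1) * (1+2*S2)^(2*m)) = 1 := by
    rw [hpow m]
    calc ((1+6*S1+4*S1^2) * (1 + 4 * PowerSeries.C (R := (ZMod 8)) (m : ZMod 8) * (S2 + S2^2)))
        * ((1+2*S1) * (1 + 4 * PowerSeries.C (R := (ZMod 8)) (m : ZMod 8) * (S2 + S2^2)))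
        = ((1+2*S1) * (1+6*S1+4*S1^2)) * ((1 + 4 * PowerSeries.C (R := (ZMod 8)) (m : ZMod 8) * (S2 + S2^2))
          * (1 + 4 * PowerSeries.C (R := (ZMod 8)) (m : ZMod 8) * (S2 + S2^2))) := by ring
      _ = 1 := by rw [hB1, hsq]; ring
  have hAB : A = (1+6*S1+4*S1^2) * (1 + 4 * PowerSeries.C (R := (ZMod 8)) (m : ZMod 8) * (S2 + S2^2)) := by
    calc A = A * (((1+6*S1+4*S1^2) * (1 + 4 * PowerSeries.C (R := (ZMod 8)) (m : ZMod 8) * (S2 + S2^2)))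
          * ((1+2*S1) * (1+2*S2)^(2*m))) := by rw [hB2, mul_one]
      _ = ((1+6*S1+4*S1^2) * (1 + 4 * PowerSeries.C (R := (ZMod 8)) (m : ZMod 8) * (S2 + S2^2)))
          * (A * ((1+2*S1) * (1+2*S2)^(2*m))) := by ring
      _ = _ := by rw [hA1, mul_one]
  have hBex : A = 1 + 6*S1 + 4*(S1*S1)
      + 4 * PowerSeries.C (R := (ZMod 8)) (m : ZMod 8) * (S2 + S2*S2) := by
    rw [hAB]
    linear_combination (3 * (PowerSeries.C (R := (ZMod 8)) (m : ZMod 8)) * (S2+S2^2) * S1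
      + 2 * (PowerSeries.C (R := (ZMod 8)) (m : ZMod 8)) * (S2+S2^2) * S1^2) * h8PS
  -- take coefficient N
  have hcoeff := congrArg (PowerSeries.coeff (R := (ZMod 8)) N) hBex
  rw [hA, PowerSeries.coeff_map, PowerSeries.coeff_mk] at hcoeff
  rw [show ((Int.castRingHom (ZMod 8)) ((abar (2*m+1) N : ℤ)))
    = ((abar (2*m+1) N : ℤ) : ZMod 8) from rfl] at hcoeff
  rw [hcoeff]
  rw [map_add, map_add, map_add]
  have c1 : (PowerSeries.coeff (R := (ZMod 8)) N) (1 : PowerSeries (ZMod 8))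
      = (if N = 0 then 1 else 0) := by
    rw [PowerSeries.coeff_one]
  have c2 : (PowerSeries.coeff (R := (ZMod 8)) N) (6*S1)
      = 6 * ((PowerSeries.coeff (R := ℤ) N (Sig 1) : ℤ) : ZMod 8) := by
    rw [show (6 : PowerSeries (ZMod 8)) = PowerSeries.C (R := (ZMod 8)) 6 from (map_ofNat _ 6).symm,
      PowerSeries.coeff_C_mul, hS1, PowerSeries.coeff_map]
    rfl
  have c3 : (PowerSeries.coeff (R := (ZMod 8)) N) (4*(S1*S1)) = 0 := by
    rw [show (4 : PowerSeries (ZMod 8)) = PowerSeries.C (R := (ZMod 8)) 4 from (map_ofNat _ 4).symm,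
      PowerSeries.coeff_C_mul]
    have : S1 * S1 = F8 (Sig 1 * Sig 1) := by rw [map_mul]
    rw [this, PowerSeries.coeff_map]
    obtain ⟨t, ht⟩ := coeff_sq_even (Sig 1) N hN
    rw [ht]
    show (4 : ZMod 8) * ((2*t : ℤ) : ZMod 8) = 0
    have hcast : ((2*t : ℤ) : ZMod 8) = 2 * ((t : ℤ) : ZMod 8) := by push_cast; ring
    rw [hcast, show (4 : ZMod 8) * (2 * ((t : ℤ) : ZMod 8)) = 8 * ((t : ℤ) : ZMod 8) from by ring,
      show (8 : ZMod 8) = 0 from by decide]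
    ring
  have c4 : (PowerSeries.coeff (R := (ZMod 8)) N) (4 * PowerSeries.C (R := (ZMod 8)) (m : ZMod 8)
      * (S2 + S2*S2)) = 0 := by
    rw [show (4 : PowerSeries (ZMod 8)) * PowerSeries.C (R := (ZMod 8)) (m : ZMod 8)
        = PowerSeries.C (R := (ZMod 8)) (4 * (m : ZMod 8)) from by
      rw [map_mul, map_ofNat], PowerSeries.coeff_C_mul]
    have : S2 + S2*S2 = F8 (Sig 2 + Sig 2 * Sig 2) := by rw [map_add, map_mul]
    rw [this, PowerSeries.coeff_map, map_add, Sig2_coeff_odd N hN, Sig2_sq_coeff_odd N hN]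
    show 4 * (m : ZMod 8) * (((0:ℤ) + 0 : ℤ) : ZMod 8) = 0
    push_cast
    ring
  rw [c1, c2, c3, c4]
  ring

end End8

section End4

abbrev F4 : PowerSeries ℤ →+* PowerSeries (ZMod 4) := PowerSeries.map (Int.castRingHom (ZMod 4))

lemma h4PS : (4 : PowerSeries (ZMod 4)) = 0 := by
  rw [show (4 : PowerSeries (ZMod 4)) = PowerSeries.C (R := (ZMod 4)) 4 from (map_ofNat _ 4).symm,
    show (4 : ZMod 4) = 0 from by decide, map_zero]

lemma f5_mod4 (n : ℕ) :
    ((PowerSeries.coeff (R := ℤ) n (qPochInf ℤ 5 ^ 3) : ℤ) : ZMod 4)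
      = ((PowerSeries.coeff (R := ℤ) n (PsiS 5) : ℤ) : ZMod 4) := by
  have hg0 := main_phi 5 (by omega)
  have hp0 := main_psi 5 (by omega)
  have hg := congrArg F4 hg0
  have hp := congrArg F4 hp0
  simp only [map_mul, map_pow, map_add, map_one, map_ofNat] at hg hp
  set Q5 : PowerSeries (ZMod 4) := F4 (qPochInf ℤ 5) with hQ5
  set Q10 : PowerSeries (ZMod 4) := F4 (qPochInf ℤ (2*5)) with hQ10
  set T : PowerSeries (ZMod 4) := F4 (Sig 5) with hT
  set P : PowerSeries (ZMod 4) := F4 (PsiS 5) with hP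
  have hTT : (1+2*T)*(1+2*T) = 1 := by
    linear_combination (T + T^2) * h4PS
  have key : Q5^3 * Q5 = P * Q5 := by
    calc Q5^3 * Q5 = (Q5^2)^2 := by ring
      _ = (Q10 * (1+2*T))^2 := by rw [hg]
      _ = Q10^2 * ((1+2*T)*(1+2*T)) := by ring
      _ = (Q5 * P) * 1 := by rw [hp, hTT]
      _ = P * Q5 := by ring
  have u5 : IsUnit Q5 :=
    unit_of_const_one _ _ (const_map_one _ _ (constCoeff_qPochInf 5 (by omega)))
  have h3 : Q5^3 = P := u5.mul_right_cancel key
  have := congrArg (PowerSeries.coeff (R := (ZMod 4)) n) h3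
  rw [hQ5, hP, ← map_pow, PowerSeries.coeff_map, PowerSeries.coeff_map] at this
  exact this

end End4

lemma sigma_val_caseA (n k : ℕ) (hk : 2*n = 5*(k*(k+1))) :
    PowerSeries.coeff (R := ℤ) (8*(5*n+3)+1) (Sig 1) = -1 := by
  rw [Sig, PowerSeries.coeff_mk]
  have hkk : k ≤ k*(k+1) := Nat.le_mul_of_pos_right k (by omega)
  have hkmem : 10*k+4 ∈ Finset.range (8*(5*n+3)+1) := by
    simp only [Finset.mem_range]
    omega
  have huniq : ∀ j ∈ Finset.range (8*(5*n+3)+1), j ≠ 10*k+4 →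
      (if 8*(5*n+3)+1 = 1*((j+1)*(j+1)) then (-1:ℤ)^(j+1) else 0) = 0 := by
    intro j _ hj
    by_cases hc : 8*(5*n+3)+1 = 1*((j+1)*(j+1))
    · exfalso
      apply hj
      have hexp : (10*k+5)*(10*k+5) = 20*(5*(k*(k+1))) + 25 := by ring
      have hc2 : (j+1)*(j+1) = (10*k+5)*(10*k+5) := by omega
      have := sq_inj hc2
      omega
    · rw [if_neg hc]
  rw [Finset.sum_eq_single_of_mem (10*k+4) hkmem huniq]
  have hcond : 8*(5*n+3)+1 = 1*((10*k+4+1)*(10*k+4+1)) := by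
    have hexp : (10*k+4+1)*(10*k+4+1) = 20*(5*(k*(k+1))) + 25 := by ring
    omega
  rw [if_pos hcond]
  exact Odd.neg_one_pow ⟨5*k+2, by ring⟩

lemma sigma_val_caseB (n : ℕ) (hno : ∀ k, 2*n ≠ 5*(k*(k+1))) :
    PowerSeries.coeff (R := ℤ) (8*(5*n+3)+1) (Sig 1) = 0 := by
  rw [Sig, PowerSeries.coeff_mk]
  apply Finset.sum_eq_zero
  intro j _
  rw [if_neg]
  intro hc
  have ht : (j+1)*(j+1) = 40*n+25 := by omega
  have h5 : (5:ℕ) ∣ (j+1)*(j+1) := ⟨8*n+5, by omega⟩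
  have h5t : (5:ℕ) ∣ (j+1) := by
    rcases ((by norm_num : Nat.Prime 5).dvd_mul).1 h5 with h | h <;> exact h
  obtain ⟨s, hs⟩ := h5t
  rw [hs] at ht
  have hss : (5*s)*(5*s) = 25*(s*s) := by ring
  have hs5 : 5*(s*s) = 8*n+5 := by omega
  rcases Nat.even_or_odd s with ⟨u, hu⟩ | ⟨k, hk⟩
  · rw [hu] at hs5
    have h4u : (u+u)*(u+u) = 4*(u*u) := by ring
    omega
  · rw [hk] at hs5
    have hodd : (2*k+1)*(2*k+1) = 4*(k*(k+1))+1 := by ring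
    have : 2*n = 5*(k*(k+1)) := by omega
    exact hno k this

lemma psi_val_caseA (n k : ℕ) (hk : 2*n = 5*(k*(k+1))) :
    PowerSeries.coeff (R := ℤ) n (PsiS 5) = 1 := by
  rw [PsiS, PowerSeries.coeff_mk]
  have hkk : k ≤ k*(k+1) := Nat.le_mul_of_pos_right k (by omega)
  have hkmem : k ∈ Finset.range (n+1) := by
    simp only [Finset.mem_range]
    omega
  have huniq : ∀ j ∈ Finset.range (n+1), j ≠ k →
      (if 2*n = 5*(j*(j+1)) then (1:ℤ) else 0) = 0 := by
    intro j _ hj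
    by_cases hc : 2*n = 5*(j*(j+1))
    · exfalso
      apply hj
      exact tri_inj (by omega : j*(j+1) = k*(k+1))
    · simp [hc]
  rw [Finset.sum_eq_single_of_mem k hkmem huniq, if_pos hk]

lemma psi_val_caseB (n : ℕ) (hno : ∀ k, 2*n ≠ 5*(k*(k+1))) :
    PowerSeries.coeff (R := ℤ) n (PsiS 5) = 0 := by
  rw [PsiS, PowerSeries.coeff_mk]
  apply Finset.sum_eq_zero
  intro j _
  exact if_neg (hno j)

end OC

/-- For all `m, n ≥ 0`, `a̅_{2m+1}(8(5n+3)+1) ≡ 2 g(n) (mod 8)`, where `g(n)` is the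
coefficient of `qⁿ` in `f₅³ = (q⁵;q⁵)_∞³`. -/
theorem overcubic_odd_congr_f5_cubed (abar : ℕ → ℕ → ℕ)
    (habar : IsGenOvercubic abar) (m n : ℕ) :
    (abar (2 * m + 1) (8 * (5 * n + 3) + 1) : ℤ) ≡
      2 * PowerSeries.coeff (R := ℤ) n (qPochInf ℤ 5 ^ 3) [ZMOD 8] := by
  have hval := OC.abar_value abar habar m (8*(5*n+3)+1) (by omega)
  rw [if_neg (by omega : ¬ (8*(5*n+3)+1 = 0)), add_zero] at hval
  have key : ((abar (2*m+1) (8*(5*n+3)+1) : ℤ) : ZMod 8)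
      = ((2 * PowerSeries.coeff (R := ℤ) n (qPochInf ℤ 5 ^ 3) : ℤ) : ZMod 8) := by
    rw [hval, OC.bridge24 _ _ (OC.f5_mod4 n)]
    by_cases hcase : ∃ k, 2*n = 5*(k*(k+1))
    · obtain ⟨k, hk⟩ := hcase
      rw [OC.sigma_val_caseA n k hk, OC.psi_val_caseA n k hk]
      push_cast
      decide
    · push_neg at hcase
      rw [OC.sigma_val_caseB n hcase, OC.psi_val_caseB n hcase]
      push_cast
      ring
  have hm := (ZMod.intCast_eq_intCast_iff _ _ 8).1 key
  exact_mod_cast hm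
end

section
/- For all integers m ≥ 0 and n ≥ 0, a̅_{2m+2}(4n+1) ≡ 2·h(n) (mod 8), where h(n) denotes the coefficient of q^n in the formal power series f_2 f_4 = (q^2;q^2)_∞ (q^4;q^4)_∞. -/
noncomputable section
open PowerSeries Finset

namespace OC

/-- truncated pochhammer product -/
def tp (h N : ℕ) : ℤ⟦X⟧ := ∏ k ∈ range N, (1 - X ^ (h * (k+1)))
/-- odd-exponent truncated product -/
def op (h N : ℕ) : ℤ⟦X⟧ := ∏ k ∈ range N, (1 - X ^ (h * (2*k+1)))
/-- plus-sign truncated product -/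
def mp (h N : ℕ) : ℤ⟦X⟧ := ∏ k ∈ range N, (1 + X ^ (h * (k+1)))

abbrev F (h : ℕ) : ℤ⟦X⟧ := qPochInf ℤ h

lemma prod_stab (a : ℕ → ℤ⟦X⟧) (ha : ∀ k, (X:ℤ⟦X⟧)^(k+1) ∣ (a k - 1)) {N M : ℕ}
    (h : N ≤ M) : (X:ℤ⟦X⟧)^(N+1) ∣ ∏ k ∈ range M, a k - ∏ k ∈ range N, a k := by
  induction M, h using Nat.le_induction with
  | base => simp
  | succ M hNM ih =>
    rw [Finset.prod_range_succ]
    have : (∏ k ∈ range M, a k) * a M - ∏ k ∈ range N, a k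
        = (∏ k ∈ range M, a k) * (a M - 1) + (∏ k ∈ range M, a k - ∏ k ∈ range N, a k) := by
      ring
    rw [this]
    exact dvd_add (Dvd.dvd.mul_left (dvd_trans (pow_dvd_pow _ (by omega)) (ha M)) _) ih

lemma tp_fac (h : ℕ) (hh : 1 ≤ h) (k : ℕ) : (X:ℤ⟦X⟧)^(k+1) ∣ ((1 - X ^ (h * (k+1))) - 1) := by
  rw [sub_sub_cancel_left, dvd_neg]
  exact pow_dvd_pow _ (by nlinarith)

lemma op_fac (h : ℕ) (hh : 1 ≤ h) (k : ℕ) : (X:ℤ⟦X⟧)^(k+1) ∣ ((1 - X ^ (h * (2*k+1))) - 1) := by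
  rw [sub_sub_cancel_left, dvd_neg]
  exact pow_dvd_pow _ (by nlinarith)

lemma mp_fac (h : ℕ) (hh : 1 ≤ h) (k : ℕ) : (X:ℤ⟦X⟧)^(k+1) ∣ ((1 + X ^ (h * (k+1))) - 1) := by
  rw [add_sub_cancel_left]
  exact pow_dvd_pow _ (by nlinarith)

lemma tp_stab (h : ℕ) (hh : 1 ≤ h) {N M : ℕ} (hNM : N ≤ M) :
    (X:ℤ⟦X⟧)^(N+1) ∣ tp h M - tp h N := prod_stab _ (tp_fac h hh) hNM

lemma coeff_dvd_sub_eq {f g : ℤ⟦X⟧} {N n : ℕ} (h : (X:ℤ⟦X⟧)^N ∣ f - g) (hn : n < N) :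
    coeff (R := ℤ) n f = coeff (R := ℤ) n g := by
  have := (X_pow_dvd_iff.mp h) n hn
  rw [map_sub] at this
  linarith

lemma coeff_F_tp (h : ℕ) (hh : 1 ≤ h) {n N : ℕ} (hn : n ≤ N) :
    coeff (R := ℤ) n (F h) = coeff (R := ℤ) n (tp h N) := by
  have h1 : coeff (R := ℤ) n (F h) = coeff (R := ℤ) n (tp h (n+1)) := by
    simp [F, qPochInf, tp, coeff_mk]
  rcases le_total (n+1) N with hc | hc
  · rw [h1]; exact (coeff_dvd_sub_eq (tp_stab h hh hc) (by omega)).symm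
  · rw [h1]; exact coeff_dvd_sub_eq (tp_stab h hh hc) (by omega)

lemma F_sub_tp (h : ℕ) (hh : 1 ≤ h) (N : ℕ) : (X:ℤ⟦X⟧)^(N+1) ∣ F h - tp h N := by
  rw [X_pow_dvd_iff]
  intro m hm
  rw [map_sub, coeff_F_tp h hh (by omega : m ≤ N), sub_self]

lemma dvd_sub_mul {c a a' b b' : ℤ⟦X⟧} (h1 : c ∣ a - a') (h2 : c ∣ b - b') :
    c ∣ a * b - a' * b' := by
  have : a * b - a' * b' = a * (b - b') + b' * (a - a') := by ring
  rw [this]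
  exact dvd_add (h2.mul_left a) (h1.mul_left b')

lemma constCoeff_one_sub_X_pow (e : ℕ) (he : 1 ≤ e) :
    constantCoeff (R := ℤ) ((1:ℤ⟦X⟧) - X^e) = 1 := by
  simp [map_sub, map_pow, constantCoeff_X, zero_pow (by omega : e ≠ 0)]

lemma constCoeff_tp (h : ℕ) (hh : 1 ≤ h) (N : ℕ) : constantCoeff (R := ℤ) (tp h N) = 1 := by
  rw [tp, map_prod]
  apply Finset.prod_eq_one
  intro k _
  exact constCoeff_one_sub_X_pow _ (by nlinarith)

lemma constCoeff_F (h : ℕ) (hh : 1 ≤ h) : constantCoeff (R := ℤ) (F h) = 1 := by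
  rw [← coeff_zero_eq_constantCoeff, coeff_F_tp h hh (le_refl 0) , coeff_zero_eq_constantCoeff]
  exact constCoeff_tp h hh 0

lemma isUnit_F (h : ℕ) (hh : 1 ≤ h) : IsUnit (F h) :=
  isUnit_iff_constantCoeff.mpr (by rw [constCoeff_F h hh]; exact isUnit_one)

lemma F_ne_zero (h : ℕ) (hh : 1 ≤ h) : F h ≠ 0 := (isUnit_F h hh).ne_zero

/-- inverse of `F h` -/
def Pinv (h : ℕ) : ℤ⟦X⟧ := invOfUnit (F h) 1

lemma F_mul_Pinv (h : ℕ) (hh : 1 ≤ h) : F h * Pinv h = 1 :=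
  mul_invOfUnit (F h) 1 (by rw [constCoeff_F h hh]; rfl)

end OC
namespace OC

/-! ### parity (even/odd support) predicates -/

/-- `f` is supported on even exponents -/
def esE (f : ℤ⟦X⟧) : Prop := rescale (-1 : ℤ) f = f
/-- `f` is supported on odd exponents -/
def esO (f : ℤ⟦X⟧) : Prop := rescale (-1 : ℤ) f = -f

lemma esE_one : esE 1 := map_one _
lemma esE_mul {f g : ℤ⟦X⟧} (hf : esE f) (hg : esE g) : esE (f * g) := by
  unfold esE at *; rw [map_mul, hf, hg]
lemma esE_add {f g : ℤ⟦X⟧} (hf : esE f) (hg : esE g) : esE (f + g) := by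
  unfold esE at *; rw [map_add, hf, hg]
lemma esE_sub {f g : ℤ⟦X⟧} (hf : esE f) (hg : esE g) : esE (f - g) := by
  unfold esE at *; rw [map_sub, hf, hg]
lemma esE_neg {f : ℤ⟦X⟧} (hf : esE f) : esE (-f) := by
  unfold esE at *; rw [map_neg, hf]
lemma esE_pow {f : ℤ⟦X⟧} (hf : esE f) (k : ℕ) : esE (f ^ k) := by
  unfold esE at *; rw [map_pow, hf]
lemma esO_mul_esO {f g : ℤ⟦X⟧} (hf : esO f) (hg : esO g) : esE (f * g) := by
  unfold esE esO at *; rw [map_mul, hf, hg]; ring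
lemma esE_mul_esO {f g : ℤ⟦X⟧} (hf : esE f) (hg : esO g) : esO (f * g) := by
  unfold esE esO at *; rw [map_mul, hf, hg]; ring
lemma esO_neg {f : ℤ⟦X⟧} (hf : esO f) : esO (-f) := by
  unfold esO at *; rw [map_neg, hf]

lemma esE_iff (f : ℤ⟦X⟧) : esE f ↔ ∀ m, ¬ 2 ∣ m → coeff (R := ℤ) m f = 0 := by
  constructor
  · intro h m hm
    have := congrArg (coeff (R := ℤ) m) h
    rw [coeff_rescale] at this
    rw [(Odd.neg_one_pow ⟨m/2, by omega⟩ : (-1:ℤ)^m = -1)] at this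
    linarith
  · intro h
    ext m
    rw [coeff_rescale]
    by_cases hm : 2 ∣ m
    · rw [(Even.neg_one_pow ⟨m/2, by omega⟩ : (-1:ℤ)^m = 1)]; ring
    · rw [h m hm]; ring

lemma esO_iff (f : ℤ⟦X⟧) : esO f ↔ ∀ m, 2 ∣ m → coeff (R := ℤ) m f = 0 := by
  constructor
  · intro h m hm
    have := congrArg (coeff (R := ℤ) m) h
    rw [coeff_rescale, map_neg] at this
    rw [(Even.neg_one_pow ⟨m/2, by omega⟩ : (-1:ℤ)^m = 1)] at this
    linarith
  · intro h
    ext m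
    rw [coeff_rescale, map_neg]
    by_cases hm : 2 ∣ m
    · rw [h m hm]; ring
    · rw [(Odd.neg_one_pow ⟨m/2, by omega⟩ : (-1:ℤ)^m = -1)]; ring

lemma two_ne_zero_ps : (2 : ℤ⟦X⟧) ≠ 0 := by
  intro h
  have h2 := congrArg (coeff (R := ℤ) 0) h
  rw [← map_ofNat (C (R := ℤ)) 2, coeff_zero_C, map_zero] at h2
  norm_num at h2

lemma esE_two : esE (2 : ℤ⟦X⟧) := by
  rw [esE_iff]
  intro m hm
  rw [← map_ofNat (C (R := ℤ)) 2, coeff_C, if_neg (by omega)]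

lemma esE_of_two_mul {f : ℤ⟦X⟧} (h : esE (2 * f)) : esE f := by
  unfold esE at *
  rw [map_mul] at h
  have h2 : rescale (-1:ℤ) (2:ℤ⟦X⟧) = 2 := esE_two
  rw [h2] at h
  exact mul_left_cancel₀ two_ne_zero_ps h


lemma esE_of_inv {f g : ℤ⟦X⟧} (h : f * g = 1) (hf : esE f) : esE g := by
  unfold esE at *
  have h1 : rescale (-1:ℤ) f * rescale (-1:ℤ) g = 1 := by
    rw [← map_mul, h, map_one]
  rw [hf] at h1
  have hf0 : f ≠ 0 := by
    intro hz; rw [hz, zero_mul] at h; exact zero_ne_one h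
  have := h1.trans h.symm
  exact mul_left_cancel₀ hf0 this

lemma coeff_eq_zero_of_esE {f : ℤ⟦X⟧} (hf : esE f) (n : ℕ) : coeff (R := ℤ) (4*n+1) f = 0 :=
  (esE_iff f).mp hf _ (by omega)

lemma esE_tp_even (h N : ℕ) : esE (tp (2*h) N) := by
  unfold esE tp
  rw [map_prod]
  apply Finset.prod_congr rfl
  intro k _
  rw [map_sub, map_one, map_pow, rescale_X, mul_pow, ← map_pow,
    Even.neg_one_pow ⟨h*(k+1), by ring⟩, map_one, one_mul]

lemma esE_F_even (h : ℕ) (hh : 1 ≤ h) : esE (F (2*h)) := by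
  rw [esE_iff]
  intro m hm
  rw [coeff_F_tp (2*h) (by omega) (le_refl m)]
  exact (esE_iff _).mp (esE_tp_even h m) m hm

/-! ### indicator series -/

/-- series with coefficient `v t` at exponent `e t` (for injective `e` with `e t ≥ t`) -/
def mkS (e : ℕ → ℕ) (v : ℕ → ℤ) : ℤ⟦X⟧ :=
  mk fun i => ∑ t ∈ range (i+1), if i = e t then v t else 0

lemma coeff_mkS_eq {e : ℕ → ℕ} {v : ℕ → ℤ} (hinj : Function.Injective e)
    (hge : ∀ t, t ≤ e t) (t : ℕ) : coeff (R := ℤ) (e t) (mkS e v) = v t := by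
  rw [mkS, coeff_mk]
  have : (∑ b ∈ range (e t + 1), if e t = e b then v b else 0) = if e t = e t then v t else 0 := by
    apply Finset.sum_eq_single_of_mem t (by simpa [Finset.mem_range] using Nat.lt_succ_of_le (hge t))
    intro b _ hb
    rw [if_neg]
    intro hc
    exact hb (hinj hc.symm)
  simpa using this

lemma coeff_mkS_zero {e : ℕ → ℕ} {v : ℕ → ℤ} {m : ℕ} (hm : ∀ t, m ≠ e t) :
    coeff (R := ℤ) m (mkS e v) = 0 := by
  rw [mkS, coeff_mk]
  apply Finset.sum_eq_zero
  intro t _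
  rw [if_neg (hm t)]

lemma mkS_supp {e : ℕ → ℕ} {v : ℕ → ℤ} {m : ℕ} (h : coeff (R := ℤ) m (mkS e v) ≠ 0) :
    ∃ t, m = e t := by
  by_contra hc
  push_neg at hc
  exact h (coeff_mkS_zero hc)

end OC
namespace OC

/-! ### Gaussian binomials (base `q^h`), via the q-Pascal recursion -/

def gb (h : ℕ) : ℕ → ℕ → ℤ⟦X⟧
  | 0, 0 => 1
  | 0, _+1 => 0
  | N+1, 0 => gb h N 0
  | N+1, j+1 => gb h N j + X^(h*(j+1)) * gb h N (j+1)

@[simp] lemma gb_zero_zero (h : ℕ) : gb h 0 0 = 1 := rfl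
@[simp] lemma gb_zero_succ (h j : ℕ) : gb h 0 (j+1) = 0 := rfl
lemma gb_succ_zero (h N : ℕ) : gb h (N+1) 0 = gb h N 0 := rfl
lemma gb_R1 (h N j : ℕ) : gb h (N+1) (j+1) = gb h N j + X^(h*(j+1)) * gb h N (j+1) := rfl

@[simp] lemma gb_zero_right (h N : ℕ) : gb h N 0 = 1 := by
  induction N with
  | zero => rfl
  | succ N ih => rw [gb_succ_zero, ih]

lemma gb_vanish (h : ℕ) : ∀ N j, N < j → gb h N j = 0 := by
  intro N
  induction N with
  | zero => intro j hj; match j, hj with | j+1, _ => rfl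
  | succ N ih =>
    intro j hj
    match j, hj with
    | j+1, hj =>
      rw [gb_R1, ih j (by omega), ih (j+1) (by omega)]
      ring

@[simp] lemma gb_diag (h : ℕ) : ∀ N, gb h N N = 1 := by
  intro N
  induction N with
  | zero => rfl
  | succ N ih => rw [gb_R1, ih, gb_vanish h N (N+1) (by omega)]; ring

lemma hexp (h a b c : ℕ) (H : a + b = c) : (X:ℤ⟦X⟧)^(h*a) * X^(h*b) = X^(h*c) := by
  rw [← pow_add, ← Nat.mul_add, H]

lemma gb_R2 (h : ℕ) : ∀ N j, gb h (N+1) (j+1) = X^(h*(N-j)) * gb h N j + gb h N (j+1) := by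
  intro N
  induction N with
  | zero =>
    intro j
    match j with
    | 0 => simp [gb_R1]
    | j+1 => simp [gb_R1, gb_vanish h 0 (j+1) (by omega), gb_vanish h 1 (j+2) (by omega)]
  | succ N ih =>
    intro j
    match j with
    | 0 =>
      have l1 : gb h (N+2) 1 = gb h (N+1) 0 + X^(h*1) * gb h (N+1) 1 := gb_R1 h (N+1) 0
      have l2 : gb h (N+1) 1 = X^(h*(N-0)) * gb h N 0 + gb h N 1 := ih 0
      have l3 : gb h (N+1) 1 = gb h N 0 + X^(h*1) * gb h N 1 := gb_R1 h N 0
      have m1 : (X:ℤ⟦X⟧)^(h*1) * X^(h*(N-0)) = X^(h*(N+1-0)) := hexp h 1 (N-0) (N+1-0) (by omega)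
      calc gb h (N+2) 1 = gb h (N+1) 0 + X^(h*1) * (X^(h*(N-0)) * gb h N 0 + gb h N 1) := by
            rw [l1]
            conv_lhs => rw [l2]
        _ = X^(h*(N+1-0)) * gb h (N+1) 0 + (gb h N 0 + X^(h*1) * gb h N 1) := by
            simp only [gb_succ_zero, gb_zero_right]
            linear_combination m1
        _ = X^(h*(N+1-0)) * gb h (N+1) 0 + gb h (N+1) 1 := by rw [← l3]
    | j+1 =>
      rcases le_or_gt N j with hNj | hjN
      · -- degenerate: j ≥ N
        rcases eq_or_lt_of_le hNj with rfl | hlt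
        · rw [gb_R1, gb_diag, gb_vanish h (N+1) (N+2) (by omega)]
          simp
        · rw [gb_vanish h (N+2) (j+2) (by omega), gb_vanish h (N+1) (j+1) (by omega),
            gb_vanish h (N+1) (j+2) (by omega)]
          ring
      · -- main case: j + 1 ≤ N
        have C' : gb h (N+1) (j+2) = X^(h*(N-j-1)) * gb h N (j+1) + gb h N (j+2) := by
          rw [ih (j+1), (by omega : N - (j+1) = N - j - 1)]
        have m1 : (X:ℤ⟦X⟧)^(h*(j+2)) * X^(h*(N-j-1)) = X^(h*(N+1)) :=
          hexp h (j+2) (N-j-1) (N+1) (by omega)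
        have m2 : (X:ℤ⟦X⟧)^(h*(N+1-(j+1))) * X^(h*(j+1)) = X^(h*(N+1)) :=
          hexp h (N+1-(j+1)) (j+1) (N+1) (by omega)
        calc gb h (N+2) (j+2)
            = gb h (N+1) (j+1) + X^(h*(j+2)) * gb h (N+1) (j+2) := gb_R1 h (N+1) (j+1)
          _ = (X^(h*(N-j)) * gb h N j + gb h N (j+1))
              + X^(h*(j+2)) * (X^(h*(N-j-1)) * gb h N (j+1) + gb h N (j+2)) := by
              rw [ih j, C']
          _ = X^(h*(N+1-(j+1))) * (gb h N j + X^(h*(j+1)) * gb h N (j+1))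
              + (gb h N (j+1) + X^(h*(j+2)) * gb h N (j+2)) := by
              rw [(by omega : N+1-(j+1) = N - j)] at m2 ⊢
              linear_combination gb h N (j+1) * m1 - gb h N (j+1) * m2
          _ = X^(h*(N+1-(j+1))) * gb h (N+1) (j+1) + gb h (N+1) (j+2) := by
              rw [← gb_R1, ← gb_R1]

lemma gb_DP (h N j : ℕ) (hj : j + 1 ≤ N) :
    gb h (N+2) (j+2) = X^(h*(N-j)) * gb h N j + (1 + X^(h*(N+1))) * gb h N (j+1)
      + X^(h*(j+2)) * gb h N (j+2) := by
  have C' : gb h (N+1) (j+2) = X^(h*(N-j-1)) * gb h N (j+1) + gb h N (j+2) := by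
    rw [gb_R2, (by omega : N - (j+1) = N - j - 1)]
  have m1 : (X:ℤ⟦X⟧)^(h*(j+2)) * X^(h*(N-j-1)) = X^(h*(N+1)) :=
    hexp h (j+2) (N-j-1) (N+1) (by omega)
  calc gb h (N+2) (j+2)
      = gb h (N+1) (j+1) + X^(h*(j+2)) * gb h (N+1) (j+2) := gb_R1 h (N+1) (j+1)
    _ = (X^(h*(N-j)) * gb h N j + gb h N (j+1))
        + X^(h*(j+2)) * (X^(h*(N-j-1)) * gb h N (j+1) + gb h N (j+2)) := by
        rw [gb_R2, C']
    _ = _ := by linear_combination gb h N (j+1) * m1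

lemma gb_one' (h N : ℕ) : gb h (N+2) 1 = 1 + X^(h*(N+1)) + X^(h*1) * gb h N 1 := by
  have := gb_R2 h (N+1) 0
  rw [gb_zero_right, (by omega : N + 1 - 0 = N+1)] at this
  rw [this, gb_R1, gb_zero_right]
  ring

lemma gb_PF (h : ℕ) : ∀ N j, j ≤ N → gb h N j * tp h j * tp h (N - j) = tp h N := by
  intro N
  induction N with
  | zero => intro j hj; interval_cases j; simp [tp]
  | succ N ih =>
    intro j hj
    match j with
    | 0 => simp [tp]
    | j+1 =>
      have hjN : j ≤ N := by omega
      rcases eq_or_lt_of_le hjN with rfl | hlt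
      · rw [gb_diag, Nat.sub_self]
        simp [tp]
      · -- j + 1 ≤ N
        rw [gb_R1, add_mul, add_mul]
        have e1 : tp h (j+1) = tp h j * (1 - X^(h*(j+1))) := Finset.prod_range_succ _ j
        have e2 : tp h (N - j) = tp h (N - j - 1) * (1 - X^(h*(N-j))) := by
          rw [(by omega : N - j = (N - j - 1) + 1)]
          exact Finset.prod_range_succ _ _
        have i1 : gb h N j * tp h (j+1) * tp h (N+1-(j+1))
            = (1 - X^(h*(j+1))) * tp h N := by
          rw [e1, (by omega : N+1-(j+1) = N - j)]
          calc gb h N j * (tp h j * (1 - X ^ (h * (j + 1)))) * tp h (N - j)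
              = (1 - X ^ (h * (j + 1))) * (gb h N j * tp h j * tp h (N - j)) := by ring
            _ = _ := by rw [ih j hjN]
        have i2 : X^(h*(j+1)) * gb h N (j+1) * tp h (j+1) * tp h (N+1-(j+1))
            = X^(h*(j+1)) * (1 - X^(h*(N-j))) * tp h N := by
          rw [(by omega : N+1-(j+1) = N - j), e2]
          calc X^(h*(j+1)) * gb h N (j+1) * tp h (j+1) * (tp h (N-j-1) * (1 - X^(h*(N-j))))
              = X^(h*(j+1)) * (1 - X^(h*(N-j)))
                  * (gb h N (j+1) * tp h (j+1) * tp h (N - (j+1))) := by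
                rw [(by omega : N - (j+1) = N - j - 1)]; ring
            _ = _ := by rw [ih (j+1) (by omega)]
        have hm : (X:ℤ⟦X⟧)^(h*(j+1)) * X^(h*(N-j)) = X^(h*(N+1)) :=
          hexp h (j+1) (N-j) (N+1) (by omega)
        have e3 : tp h (N+1) = tp h N * (1 - X^(h*(N+1))) := Finset.prod_range_succ _ N
        linear_combination i1 + i2 - e3 - tp h N * hm

lemma gb_stab (h : ℕ) (hh : 1 ≤ h) {d N j : ℕ} (h1 : d ≤ j) (h2 : d + j ≤ N) :
    (X:ℤ⟦X⟧)^(d+1) ∣ gb h N j - Pinv h := by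
  have hPF := gb_PF h N j (by omega)
  have hFP : Pinv h * F h = 1 := by rw [mul_comm]; exact F_mul_Pinv h hh
  have key : gb h N j - Pinv h = Pinv h * Pinv h * (gb h N j * (F h * F h) - F h) := by
    linear_combination (Pinv h - gb h N j * (Pinv h * F h + 1)) * hFP
  rw [key]
  apply Dvd.dvd.mul_left
  have s1 : (X:ℤ⟦X⟧)^(d+1) ∣ F h * F h - tp h j * tp h (N-j) :=
    dvd_sub_mul
      (dvd_trans (pow_dvd_pow _ (by omega : d+1 ≤ j+1)) (F_sub_tp h hh j))
      (dvd_trans (pow_dvd_pow _ (by omega : d+1 ≤ N-j+1)) (F_sub_tp h hh (N-j)))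
  have s2 : (X:ℤ⟦X⟧)^(d+1) ∣ tp h N - F h := by
    rw [← dvd_neg, neg_sub]
    exact dvd_trans (pow_dvd_pow _ (by omega : d+1 ≤ N+1)) (F_sub_tp h hh N)
  have expand : gb h N j * (F h * F h) - F h
      = gb h N j * (F h * F h - tp h j * tp h (N-j)) + (tp h N - F h) := by
    linear_combination hPF
  rw [expand]
  exact dvd_add (s1.mul_left _) s2

end OC
namespace OC

/-! ### triangular numbers and exponent functions -/

def tri (k : ℕ) : ℕ := k*(k+1)/2

lemma two_tri (k : ℕ) : 2 * tri k = k*(k+1) := by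
  rcases Nat.even_mul_succ_self k with ⟨c, hc⟩
  unfold tri; omega

lemma tri_succ (k : ℕ) : tri (k+1) = tri k + (k+1) := by
  have a := two_tri k
  have b := two_tri (k+1)
  have c : (k+1)*(k+2) = k*(k+1) + 2*(k+1) := by ring
  linarith

lemma tri_ge (k : ℕ) : k ≤ tri k := by
  induction k with
  | zero => simp [tri]
  | succ k ih => rw [tri_succ]; omega

lemma tri_injective : Function.Injective tri :=
  (strictMono_nat_of_lt_succ (fun k => by rw [tri_succ]; omega)).injective

lemma two_tri_pred (n : ℕ) : 2 * tri (n-1) + n = n*n := by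
  cases n with
  | zero => simp [tri]
  | succ n =>
    have h := two_tri n
    have c : (n+1)*(n+1) = n*(n+1) + (n+1) := by ring
    simp only [Nat.add_sub_cancel]
    linarith

def esq (n j : ℕ) : ℕ := (n*n + j*j) - 2*(n*j)
def etr (n j : ℕ) : ℕ := (tri j + tri (n-1)) - n*j

lemma esq_sub_ok (n j : ℕ) : 2*(n*j) ≤ n*n + j*j := by
  have h := two_mul_le_add_sq n j
  nlinarith [h]

lemma consec_nonneg (m : ℤ) : 0 ≤ m * (m+1) := by
  rcases le_or_gt 0 m with h | h
  · exact mul_nonneg h (by linarith)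
  · have e : m*(m+1) = (-m)*(-(m+1)) := by ring
    rw [e]; exact mul_nonneg (by linarith) (by linarith)

lemma etr_sub_ok (n j : ℕ) : n*j ≤ tri j + tri (n-1) := by
  have h1 := two_tri j
  have h2 := two_tri_pred n
  have c1 : (2 * tri j : ℤ) = (j:ℤ)*((j:ℤ)+1) := by exact_mod_cast congrArg (Nat.cast : ℕ → ℤ) h1
  have c2 : (2 * tri (n-1) : ℤ) + n = (n:ℤ)*n := by exact_mod_cast congrArg (Nat.cast : ℕ → ℤ) h2
  have key : ((n*j : ℕ) : ℤ) ≤ ((tri j + tri (n-1) : ℕ) : ℤ) := by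
    push_cast
    nlinarith [consec_nonneg ((j:ℤ)-n), c1, c2]
  exact_mod_cast key

lemma esq2 (n j : ℕ) : (esq n j : ℤ) = ((j:ℤ)-n) * ((j:ℤ)-n) := by
  have h := esq_sub_ok n j
  unfold esq
  push_cast [h]
  ring

lemma etr2 (n j : ℕ) : 2 * (etr n j : ℤ) = ((j:ℤ)-n) * (((j:ℤ)-n)+1) := by
  have h0 := etr_sub_ok n j
  have h1 := two_tri j
  have h2 := two_tri_pred n
  have c1 : (2 * tri j : ℤ) = (j:ℤ)*((j:ℤ)+1) := by exact_mod_cast congrArg (Nat.cast : ℕ → ℤ) h1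
  have c2 : (2 * tri (n-1) : ℤ) + n = (n:ℤ)*n := by exact_mod_cast congrArg (Nat.cast : ℕ → ℤ) h2
  unfold etr
  push_cast [h0]
  linarith [c1, c2, (by ring : ((j:ℤ)-n) * (((j:ℤ)-n)+1) = (j:ℤ)*((j:ℤ)+1) + ((n:ℤ)*n - n) - 2*((n:ℤ)*j))]

-- exponent identities for the triangular-sum recursion
lemma etrT1 (n j : ℕ) : etr (n+1) j + j = etr n j + n := by
  have h1 := etr2 n j
  have h2 := etr2 (n+1) j
  have key : 2*((etr (n+1) j : ℤ) + j) = 2*((etr n j : ℤ) + n) := by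
    push_cast at h1 h2 ⊢
    linarith [h1, h2, (by ring : ((j:ℤ)-(n+1)) * (((j:ℤ)-(n+1))+1) + 2*j = ((j:ℤ)-n) * (((j:ℤ)-n)+1) + 2*n)]
  omega

lemma etrT2 (n j : ℕ) : etr (n+1) (j+1) = etr n j := by
  have h1 := etr2 n j
  have h2 := etr2 (n+1) (j+1)
  have key : 2*((etr (n+1) (j+1) : ℤ)) = 2*((etr n j : ℤ)) := by
    push_cast at h1 h2 ⊢
    linarith [h1, h2, (by ring : (((j:ℤ)+1)-(n+1)) * ((((j:ℤ)+1)-(n+1))+1) = ((j:ℤ)-n) * (((j:ℤ)-n)+1))]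
  omega

lemma etrT3 (n j : ℕ) (hj : j ≤ 2*n) : etr (n+1) (j+2) + (2*n - j) = etr n j + (n+1) := by
  have h1 := etr2 n j
  have h2 := etr2 (n+1) (j+2)
  have key : 2*((etr (n+1) (j+2) : ℤ) + (2*n - j)) = 2*((etr n j : ℤ) + (n+1)) := by
    push_cast at h1 h2 ⊢
    linarith [h1, h2, (by ring : (((j:ℤ)+2)-(n+1)) * ((((j:ℤ)+2)-(n+1))+1) + 2*(2*(n:ℤ) - j) = ((j:ℤ)-n) * (((j:ℤ)-n)+1) + 2*((n:ℤ)+1))]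
  omega

-- exponent identities for the square-sum recursion
lemma esqS1 (n j : ℕ) : esq (n+1) j + 2*j = esq n j + (2*n+1) := by
  have h1 := esq2 n j
  have h2 := esq2 (n+1) j
  have key : ((esq (n+1) j : ℤ) + 2*j) = ((esq n j : ℤ) + (2*n+1)) := by
    push_cast at h1 h2 ⊢
    linarith [h1, h2, (by ring : ((j:ℤ)-(n+1)) * ((j:ℤ)-(n+1)) + 2*j = ((j:ℤ)-n)*((j:ℤ)-n) + (2*n+1))]
  omega

lemma esqS2 (n j : ℕ) : esq (n+1) (j+1) = esq n j := by
  have h1 := esq2 n j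
  have h2 := esq2 (n+1) (j+1)
  have key : ((esq (n+1) (j+1) : ℤ)) = ((esq n j : ℤ)) := by
    push_cast at h1 h2 ⊢
    linarith [h1, h2, (by ring : (((j:ℤ)+1)-(n+1)) * (((j:ℤ)+1)-(n+1)) = ((j:ℤ)-n)*((j:ℤ)-n))]
  omega

lemma esqS3 (n j : ℕ) (hj : j ≤ 2*n) : esq (n+1) (j+2) + 2*(2*n - j) = esq n j + (2*n+1) := by
  have h1 := esq2 n j
  have h2 := esq2 (n+1) (j+2)
  have key : ((esq (n+1) (j+2) : ℤ) + 2*(2*(n:ℤ) - j)) = ((esq n j : ℤ) + (2*n+1)) := by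
    push_cast at h1 h2 ⊢
    linarith [h1, h2, (by ring : (((j:ℤ)+2)-(n+1)) * (((j:ℤ)+2)-(n+1)) + 2*(2*(n:ℤ)-j) = ((j:ℤ)-n)*((j:ℤ)-n) + (2*(n:ℤ)+1))]
  omega

lemma esq_branch1 (n t : ℕ) : esq n (n+t) = t*t := by
  have h1 := esq2 n (n+t)
  have : ((n:ℤ)+t) - n = (t:ℤ) := by ring
  have key : (esq n (n+t) : ℤ) = (t:ℤ)*t := by push_cast at h1 ⊢; rw [h1]; ring
  exact_mod_cast key

lemma esq_branch2 (n t : ℕ) (ht : t < n) : esq n (n-1-t) = (t+1)*(t+1) := by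
  have h1 := esq2 n (n-1-t)
  have hc : ((n-1-t : ℕ) : ℤ) = (n:ℤ) - 1 - t := by omega
  have key : (esq n (n-1-t) : ℤ) = ((t:ℤ)+1)*((t:ℤ)+1) := by
    rw [h1, hc]; ring
  exact_mod_cast key

lemma etr_branch1 (n t : ℕ) : etr n (n+t) = tri t := by
  have h1 := etr2 n (n+t)
  have h2 := two_tri t
  have key : 2*(etr n (n+t) : ℤ) = 2*(tri t : ℤ) := by
    push_cast at h1 h2 ⊢
    linarith [h1, h2, (by ring : (((n:ℤ)+t)-n) * ((((n:ℤ)+t)-n)+1) = (t:ℤ)*((t:ℤ)+1))]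
  omega

lemma etr_branch2 (n t : ℕ) (ht : t < n) : etr n (n-1-t) = tri t := by
  have h1 := etr2 n (n-1-t)
  have h2 := two_tri t
  have hc : ((n-1-t : ℕ) : ℤ) = (n:ℤ) - 1 - t := by omega
  have key : 2*(etr n (n-1-t) : ℤ) = 2*(tri t : ℤ) := by
    rw [h1, hc]
    push_cast at h2 ⊢
    linarith [h2, (by ring : ((n:ℤ)-1-t-n) * (((n:ℤ)-1-t-n)+1) = (t:ℤ)*((t:ℤ)+1))]
  omega

end OC
namespace OC

lemma xmerge {a b c : ℕ} (H : a + b = c) : (X:ℤ⟦X⟧)^a * X^b = X^c := by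
  rw [← pow_add, H]

lemma gb_DP' (h N j : ℕ) (hj : j ≤ N) :
    gb h (N+2) (j+2) = X^(h*(N-j)) * gb h N j + (1 + X^(h*(N+1))) * gb h N (j+1)
      + X^(h*(j+2)) * gb h N (j+2) := by
  rcases eq_or_lt_of_le hj with rfl | hlt
  · rw [Nat.sub_self, gb_diag, gb_diag, gb_vanish h j (j+1) (by omega),
      gb_vanish h j (j+2) (by omega)]
    ring
  · exact gb_DP h N j (by omega)

lemma assemble (K : ℕ) (A U V W : ℕ → ℤ⟦X⟧)
    (hA : ∀ j, j < K → A (j+2) = U j + V (j+1) + W (j+2))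
    (hVK : V K = 0) (hWK : W K = 0) (hWK1 : W (K+1) = 0)
    (hb : A 0 + A 1 = V 0 + W 0 + W 1) :
    ∑ i ∈ Finset.range (K+2), A i
      = ∑ j ∈ Finset.range K, U j + ∑ j ∈ Finset.range K, V j + ∑ j ∈ Finset.range K, W j := by
  have norm1 : ∀ (f : ℕ → ℤ⟦X⟧), ∑ j ∈ Finset.range K, f (j+1+1) = ∑ j ∈ Finset.range K, f (j+2) :=
    fun f => Finset.sum_congr rfl (fun j _ => by norm_num)
  have h1 : ∑ i ∈ Finset.range (K+2), A i = (∑ j ∈ Finset.range K, A (j+2)) + A 1 + A 0 := by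
    rw [Finset.sum_range_succ' A (K+1), Finset.sum_range_succ' (fun i => A (i+1)) K, norm1 A]
  have h2 : ∑ j ∈ Finset.range K, A (j+2)
      = ∑ j ∈ Finset.range K, U j + ∑ j ∈ Finset.range K, V (j+1) + ∑ j ∈ Finset.range K, W (j+2) := by
    rw [← Finset.sum_add_distrib, ← Finset.sum_add_distrib]
    exact Finset.sum_congr rfl (fun j hj => hA j (Finset.mem_range.mp hj))
  have h3 : ∑ j ∈ Finset.range K, V (j+1) = ∑ j ∈ Finset.range K, V j - V 0 := by
    have t := Finset.sum_range_succ' V K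
    rw [Finset.sum_range_succ V K, hVK] at t
    linear_combination - t
  have h4 : ∑ j ∈ Finset.range K, W (j+2) = ∑ j ∈ Finset.range K, W j - W 0 - W 1 := by
    have t1 := Finset.sum_range_succ' W (K+1)
    have t2 := Finset.sum_range_succ' (fun i => W (i+1)) K
    rw [Finset.sum_range_succ W (K+1), Finset.sum_range_succ W K, hWK, hWK1, t2, norm1 W] at t1
    norm_num at t1
    linear_combination - t1
  rw [h1, h2, h3, h4]
  linear_combination hb

/-- triangular-exponent Gauss sum -/
def RT (h n : ℕ) : ℤ⟦X⟧ := ∑ j ∈ Finset.range (2*n+1), gb h (2*n) j * X^(h * etr n j)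
/-- square-exponent Gauss sum -/
def RR (h n : ℕ) : ℤ⟦X⟧ :=
  ∑ j ∈ Finset.range (2*n+1), (-1:ℤ⟦X⟧)^(n+j) * gb (2*h) (2*n) j * X^(h * esq n j)

def mp0 (h N : ℕ) : ℤ⟦X⟧ := ∏ k ∈ Finset.range N, (1 + X ^ (h * k))

lemma RT_succ (h n : ℕ) : RT h (n+1) = (1 + X^(h*n)) * (1 + X^(h*(n+1))) * RT h n := by
  have hA : ∀ j, j < 2*n+1 →
      gb h (2*n+2) (j+2) * X^(h * etr (n+1) (j+2))
        = (fun j => gb h (2*n) j * X^(h * (etr n j + (n+1)))) j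
          + (fun j => gb h (2*n) j * (X^(h * etr n j) + X^(h * (etr n j + (2*n+1))))) (j+1)
          + (fun j => gb h (2*n) j * X^(h * (etr (n+1) j + j))) (j+2) := by
    intro j hj
    simp only
    have hDP := gb_DP' h (2*n) j (by omega)
    have m0 : (X:ℤ⟦X⟧)^(h*(2*n-j)) * X^(h * etr (n+1) (j+2)) = X^(h*(etr n j + (n+1))) :=
      hexp h _ _ _ (by have := etrT3 n j (by omega); omega)
    have me : etr (n+1) (j+2) = etr n (j+1) := etrT2 n (j+1)
    have m1 : (X:ℤ⟦X⟧)^(h * etr (n+1) (j+2)) = X^(h * etr n (j+1)) := by rw [me]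
    have m2 : (X:ℤ⟦X⟧)^(h*(2*n+1)) * X^(h * etr (n+1) (j+2)) = X^(h*(etr n (j+1) + (2*n+1))) :=
      hexp h _ _ _ (by omega)
    have m3 : (X:ℤ⟦X⟧)^(h*(j+2)) * X^(h * etr (n+1) (j+2)) = X^(h*(etr (n+1) (j+2) + (j+2))) :=
      hexp h _ _ _ (by omega)
    linear_combination X^(h * etr (n+1) (j+2)) * hDP + gb h (2*n) j * m0
      + gb h (2*n) (j+1) * m1 + gb h (2*n) (j+1) * m2 + gb h (2*n) (j+2) * m3
  have hVK : (fun j => gb h (2*n) j * (X^(h * etr n j) + X^(h * (etr n j + (2*n+1))))) (2*n+1) = 0 := by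
    simp only
    rw [gb_vanish h (2*n) (2*n+1) (by omega)]
    ring
  have hWK : (fun j => gb h (2*n) j * X^(h * (etr (n+1) j + j))) (2*n+1) = 0 := by
    simp only
    rw [gb_vanish h (2*n) (2*n+1) (by omega)]
    ring
  have hWK1 : (fun j => gb h (2*n) j * X^(h * (etr (n+1) j + j))) (2*n+1+1) = 0 := by
    simp only
    rw [gb_vanish h (2*n) (2*n+2) (by omega)]
    ring
  have hb : gb h (2*n+2) 0 * X^(h * etr (n+1) 0) + gb h (2*n+2) 1 * X^(h * etr (n+1) 1)
      = (fun j => gb h (2*n) j * (X^(h * etr n j) + X^(h * (etr n j + (2*n+1))))) 0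
        + (fun j => gb h (2*n) j * X^(h * (etr (n+1) j + j))) 0
        + (fun j => gb h (2*n) j * X^(h * (etr (n+1) j + j))) 1 := by
    simp only
    have z0 : gb h (2*n+2) 0 = 1 := gb_zero_right h (2*n+2)
    have z00 : gb h (2*n) 0 = 1 := gb_zero_right h (2*n)
    have g1top : gb h (2*n+2) 1 = 1 + X^(h*(2*n+1)) + X^(h*1) * gb h (2*n) 1 := gb_one' h (2*n)
    have me0 : etr (n+1) 1 = etr n 0 := etrT2 n 0
    have mb1 : (X:ℤ⟦X⟧)^(h * etr (n+1) 1) = X^(h * etr n 0) := by rw [me0]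
    have mb2 : (X:ℤ⟦X⟧)^(h*(2*n+1)) * X^(h * etr (n+1) 1) = X^(h*(etr n 0 + (2*n+1))) :=
      hexp h _ _ _ (by omega)
    have mb3 : (X:ℤ⟦X⟧)^(h*1) * X^(h * etr (n+1) 1) = X^(h*(etr (n+1) 1 + 1)) :=
      hexp h _ _ _ (by omega)
    have mw0 : (X:ℤ⟦X⟧)^(h*(etr (n+1) 0 + 0)) = X^(h * etr (n+1) 0) := by rw [Nat.add_zero]
    linear_combination X^(h * etr (n+1) 0) * z0 + X^(h * etr (n+1) 1) * g1top
      + mb1 + mb2 + gb h (2*n) 1 * mb3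
      - (X^(h * etr n 0) + X^(h*(etr n 0 + (2*n+1))) + X^(h*(etr (n+1) 0 + 0))) * z00 - mw0
  have key := assemble (2*n+1) (fun i => gb h (2*n+2) i * X^(h * etr (n+1) i))
      (fun j => gb h (2*n) j * X^(h * (etr n j + (n+1))))
      (fun j => gb h (2*n) j * (X^(h * etr n j) + X^(h * (etr n j + (2*n+1)))))
      (fun j => gb h (2*n) j * X^(h * (etr (n+1) j + j)))
      hA hVK hWK hWK1 hb
  have lhs_eq : RT h (n+1)
      = ∑ i ∈ Finset.range ((2*n+1)+2), gb h (2*n+2) i * X^(h * etr (n+1) i) := by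
    unfold RT
    rw [show 2*(n+1)+1 = (2*n+1)+2 from by omega]
    apply Finset.sum_congr rfl
    intro x _
    rw [show 2*(n+1) = 2*n+2 from by ring]
  rw [lhs_eq, key]
  unfold RT
  rw [Finset.mul_sum, ← Finset.sum_add_distrib, ← Finset.sum_add_distrib]
  apply Finset.sum_congr rfl
  intro j _
  have p1 : (X:ℤ⟦X⟧)^(h * etr n j) * X^(h*n) = X^(h*(etr n j + n)) := hexp h _ _ _ rfl
  have p2 : (X:ℤ⟦X⟧)^(h * etr n j) * X^(h*(n+1)) = X^(h*(etr n j + (n+1))) := hexp h _ _ _ rfl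
  have p3 : (X:ℤ⟦X⟧)^(h*n) * X^(h*(n+1)) = X^(h*(2*n+1)) := hexp h _ _ _ (by omega)
  have p4 : (X:ℤ⟦X⟧)^(h * etr n j) * X^(h*(2*n+1)) = X^(h*(etr n j + (2*n+1))) := hexp h _ _ _ rfl
  have pw : (X:ℤ⟦X⟧)^(h*(etr (n+1) j + j)) = X^(h*(etr n j + n)) := by rw [etrT1 n j]
  linear_combination gb h (2*n) j
      * (pw - p1 - p2 - p4 - X^(h * etr n j) * p3)

end OC
namespace OC

lemma RR_succ (h n : ℕ) : RR h (n+1) = (1 - X^(h*(2*n+1)))^2 * RR h n := by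
  have hA : ∀ j, j < 2*n+1 →
      (-1:ℤ⟦X⟧)^(n+1+(j+2)) * gb (2*h) (2*n+2) (j+2) * X^(h * esq (n+1) (j+2))
        = (fun j => -((-1:ℤ⟦X⟧)^(n+j) * gb (2*h) (2*n) j * X^(h * (esq n j + (2*n+1))))) j
          + (fun j => (-1:ℤ⟦X⟧)^(n+j) * gb (2*h) (2*n) j
              * (X^(h * esq n j) + X^(h * (esq n j + (4*n+2))))) (j+1)
          + (fun j => -((-1:ℤ⟦X⟧)^(n+j) * gb (2*h) (2*n) j * X^(h * (esq (n+1) j + 2*j)))) (j+2) := by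
    intro j hj
    simp only
    have hDP := gb_DP' (2*h) (2*n) j (by omega)
    rw [show 2*h*(2*n-j) = h*(2*(2*n-j)) from by ring, show 2*h*(2*n+1) = h*(2*(2*n+1)) from by ring,
      show 2*h*(j+2) = h*(2*(j+2)) from by ring] at hDP
    have m0 : (X:ℤ⟦X⟧)^(h*(2*(2*n-j))) * X^(h * esq (n+1) (j+2)) = X^(h*(esq n j + (2*n+1))) :=
      hexp h _ _ _ (by have := esqS3 n j (by omega); omega)
    have me : esq (n+1) (j+2) = esq n (j+1) := esqS2 n (j+1)
    have m1 : (X:ℤ⟦X⟧)^(h * esq (n+1) (j+2)) = X^(h * esq n (j+1)) := by rw [me]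
    have m2 : (X:ℤ⟦X⟧)^(h*(2*(2*n+1))) * X^(h * esq (n+1) (j+2)) = X^(h*(esq n (j+1) + (4*n+2))) :=
      hexp h _ _ _ (by omega)
    have m3 : (X:ℤ⟦X⟧)^(h*(2*(j+2))) * X^(h * esq (n+1) (j+2)) = X^(h*(esq (n+1) (j+2) + 2*(j+2))) :=
      hexp h _ _ _ (by omega)
    linear_combination (-1:ℤ⟦X⟧)^(n+1+(j+2)) * X^(h * esq (n+1) (j+2)) * hDP
      + (-1:ℤ⟦X⟧)^(n+j+1) * gb (2*h) (2*n) j * m0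
      + (-1:ℤ⟦X⟧)^(n+j+1) * gb (2*h) (2*n) (j+1) * m1
      + (-1:ℤ⟦X⟧)^(n+j+1) * gb (2*h) (2*n) (j+1) * m2
      + (-1:ℤ⟦X⟧)^(n+j+1) * gb (2*h) (2*n) (j+2) * m3
  have hVK : (fun j => (-1:ℤ⟦X⟧)^(n+j) * gb (2*h) (2*n) j
      * (X^(h * esq n j) + X^(h * (esq n j + (4*n+2))))) (2*n+1) = 0 := by
    simp only
    rw [gb_vanish (2*h) (2*n) (2*n+1) (by omega)]
    ring
  have hWK : (fun j => -((-1:ℤ⟦X⟧)^(n+j) * gb (2*h) (2*n) j * X^(h * (esq (n+1) j + 2*j)))) (2*n+1)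
      = 0 := by
    simp only
    rw [gb_vanish (2*h) (2*n) (2*n+1) (by omega)]
    ring
  have hWK1 : (fun j => -((-1:ℤ⟦X⟧)^(n+j) * gb (2*h) (2*n) j * X^(h * (esq (n+1) j + 2*j)))) (2*n+1+1)
      = 0 := by
    simp only
    rw [gb_vanish (2*h) (2*n) (2*n+2) (by omega)]
    ring
  have hb : (-1:ℤ⟦X⟧)^(n+1+0) * gb (2*h) (2*n+2) 0 * X^(h * esq (n+1) 0)
        + (-1:ℤ⟦X⟧)^(n+1+1) * gb (2*h) (2*n+2) 1 * X^(h * esq (n+1) 1)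
      = (fun j => (-1:ℤ⟦X⟧)^(n+j) * gb (2*h) (2*n) j
          * (X^(h * esq n j) + X^(h * (esq n j + (4*n+2))))) 0
        + (fun j => -((-1:ℤ⟦X⟧)^(n+j) * gb (2*h) (2*n) j * X^(h * (esq (n+1) j + 2*j)))) 0
        + (fun j => -((-1:ℤ⟦X⟧)^(n+j) * gb (2*h) (2*n) j * X^(h * (esq (n+1) j + 2*j)))) 1 := by
    simp only
    have z0 : gb (2*h) (2*n+2) 0 = 1 := gb_zero_right (2*h) (2*n+2)
    have z00 : gb (2*h) (2*n) 0 = 1 := gb_zero_right (2*h) (2*n)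
    have g1top := gb_one' (2*h) (2*n)
    rw [show 2*h*(2*n+1) = h*(2*(2*n+1)) from by ring, show 2*h*1 = h*2 from by ring] at g1top
    have me0 : esq (n+1) 1 = esq n 0 := esqS2 n 0
    have mb1 : (X:ℤ⟦X⟧)^(h * esq (n+1) 1) = X^(h * esq n 0) := by rw [me0]
    have mb2 : (X:ℤ⟦X⟧)^(h*(2*(2*n+1))) * X^(h * esq (n+1) 1) = X^(h*(esq n 0 + (4*n+2))) :=
      hexp h _ _ _ (by omega)
    have mb3 : (X:ℤ⟦X⟧)^(h*2) * X^(h * esq (n+1) 1) = X^(h*(esq (n+1) 1 + 2*1)) :=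
      hexp h _ _ _ (by omega)
    have mw0 : (X:ℤ⟦X⟧)^(h*(esq (n+1) 0 + 2*0)) = X^(h * esq (n+1) 0) := by norm_num
    linear_combination (-1:ℤ⟦X⟧)^(n+1) * X^(h * esq (n+1) 0) * z0
      + (-1:ℤ⟦X⟧)^(n+2) * X^(h * esq (n+1) 1) * g1top
      + (-1:ℤ⟦X⟧)^n * mb1 + (-1:ℤ⟦X⟧)^n * mb2 + (-1:ℤ⟦X⟧)^n * gb (2*h) (2*n) 1 * mb3
      - ((-1:ℤ⟦X⟧)^n * (X^(h * esq n 0) + X^(h*(esq n 0 + (4*n+2))))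
          - (-1:ℤ⟦X⟧)^n * X^(h*(esq (n+1) 0 + 2*0))) * z00
      + (-1:ℤ⟦X⟧)^n * mw0
  have key := assemble (2*n+1)
      (fun i => (-1:ℤ⟦X⟧)^(n+1+i) * gb (2*h) (2*n+2) i * X^(h * esq (n+1) i))
      (fun j => -((-1:ℤ⟦X⟧)^(n+j) * gb (2*h) (2*n) j * X^(h * (esq n j + (2*n+1)))))
      (fun j => (-1:ℤ⟦X⟧)^(n+j) * gb (2*h) (2*n) j
          * (X^(h * esq n j) + X^(h * (esq n j + (4*n+2)))))
      (fun j => -((-1:ℤ⟦X⟧)^(n+j) * gb (2*h) (2*n) j * X^(h * (esq (n+1) j + 2*j))))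
      hA hVK hWK hWK1 hb
  have lhs_eq : RR h (n+1)
      = ∑ i ∈ Finset.range ((2*n+1)+2),
          (-1:ℤ⟦X⟧)^(n+1+i) * gb (2*h) (2*n+2) i * X^(h * esq (n+1) i) := by
    unfold RR
    rw [show 2*(n+1)+1 = (2*n+1)+2 from by omega]
    apply Finset.sum_congr rfl
    intro x _
    rw [show 2*(n+1) = 2*n+2 from by ring]
  rw [lhs_eq, key]
  unfold RR
  rw [Finset.mul_sum, ← Finset.sum_add_distrib, ← Finset.sum_add_distrib]
  apply Finset.sum_congr rfl
  intro j _
  have p4 : (X:ℤ⟦X⟧)^(h * esq n j) * X^(h*(2*n+1)) = X^(h*(esq n j + (2*n+1))) := hexp h _ _ _ rfl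
  have p5 : (X:ℤ⟦X⟧)^(h * esq n j) * X^(h*(2*(2*n+1))) = X^(h*(esq n j + (4*n+2))) :=
    hexp h _ _ _ (by omega)
  have p6 : (X:ℤ⟦X⟧)^(h*(2*n+1)) * X^(h*(2*n+1)) = X^(h*(2*(2*n+1))) := hexp h _ _ _ (by omega)
  have pw : (X:ℤ⟦X⟧)^(h*(esq (n+1) j + 2*j)) = X^(h*(esq n j + (2*n+1))) := by rw [esqS1 n j]
  linear_combination (-1:ℤ⟦X⟧)^(n+j) * gb (2*h) (2*n) j
    * (2*p4 - pw - X^(h * esq n j) * p6 - p5)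

lemma esq_zero : esq 0 0 = 0 := by simp [esq]
lemma etr_zero : etr 0 0 = 0 := by simp [etr, tri]

lemma op_succ (h n : ℕ) : op h (n+1) = op h n * (1 - X^(h*(2*n+1))) := Finset.prod_range_succ _ _
lemma mp_succ (h n : ℕ) : mp h (n+1) = mp h n * (1 + X^(h*(n+1))) := Finset.prod_range_succ _ _
lemma mp0_succ (h n : ℕ) : mp0 h (n+1) = mp0 h n * (1 + X^(h*n)) := Finset.prod_range_succ _ _

lemma RR_closed (h n : ℕ) : RR h n = op h n ^ 2 := by
  induction n with
  | zero =>
    unfold RR op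
    rw [show 2*0+1 = 1 from rfl, Finset.sum_range_one, esq_zero]
    simp
  | succ n ih =>
    rw [RR_succ, ih, op_succ]
    ring

lemma RT_closed (h n : ℕ) : RT h n = mp h n * mp0 h n := by
  induction n with
  | zero =>
    unfold RT mp mp0
    rw [show 2*0+1 = 1 from rfl, Finset.sum_range_one, etr_zero]
    simp
  | succ n ih =>
    rw [RT_succ, ih, mp_succ, mp0_succ]
    ring

lemma mp0_eq (h n : ℕ) : mp0 h (n+1) = 2 * mp h n := by
  have t := Finset.prod_range_succ' (fun k => (1:ℤ⟦X⟧) + X^(h*k)) n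
  unfold mp0 mp
  rw [t]
  norm_num
  ring

end OC
namespace OC

/-- the theta-type series -/
def Sq (h : ℕ) : ℤ⟦X⟧ := mkS (fun k => h*((k+1)*(k+1))) (fun k => (-1)^(k+1))
def Phi (h : ℕ) : ℤ⟦X⟧ := 1 + 2 * Sq h
def Psi (h : ℕ) : ℤ⟦X⟧ := mkS (fun t => h * tri t) (fun _ => 1)

lemma coeff_two_mul (f : ℤ⟦X⟧) (n : ℕ) : coeff (R := ℤ) n (2*f) = 2 * coeff (R := ℤ) n f := by
  rw [← map_ofNat (C (R := ℤ)) 2, coeff_C_mul]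

lemma coeff_four_mul (f : ℤ⟦X⟧) (n : ℕ) : coeff (R := ℤ) n (4*f) = 4 * coeff (R := ℤ) n f := by
  rw [← map_ofNat (C (R := ℤ)) 4, coeff_C_mul]

lemma coeff_mkS_mul (e : ℕ → ℕ) (v : ℕ → ℤ) (hinj : Function.Injective e) (hge : ∀ t, t ≤ e t)
    (P : ℤ⟦X⟧) (d : ℕ) :
    coeff (R := ℤ) d (mkS e v * P)
      = ∑ t ∈ Finset.range (d+1), if e t ≤ d then v t * coeff (R := ℤ) (d - e t) P else 0 := by
  rw [coeff_mul, Finset.Nat.sum_antidiagonal_eq_sum_range_succ_mk]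
  have step1 : ∀ i ∈ Finset.range (d+1),
      coeff (R := ℤ) i (mkS e v) * coeff (R := ℤ) (d - i) P
        = ∑ t ∈ Finset.range (d+1), (if i = e t then v t * coeff (R := ℤ) (d - i) P else 0) := by
    intro i hi
    rw [mkS, coeff_mk, Finset.sum_mul]
    have hsub : Finset.range (i+1) ⊆ Finset.range (d+1) :=
      Finset.range_subset_range.mpr (by simp at hi; omega)
    rw [Finset.sum_subset hsub (by
      intro t ht hnt
      simp only [Finset.mem_range] at ht hnt
      rw [if_neg, zero_mul]
      intro hc
      have := hge t
      omega)]
    apply Finset.sum_congr rfl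
    intro t _
    split
    · rfl
    · rw [zero_mul]
  rw [Finset.sum_congr rfl step1, Finset.sum_comm]
  apply Finset.sum_congr rfl
  intro t _
  rw [Finset.sum_ite_eq' (Finset.range (d+1)) (e t) (fun i => v t * coeff (R := ℤ) (d - i) P)]
  simp only [Finset.mem_range]
  split
  · rw [if_pos (by omega)]
  · rw [if_neg (by omega)]

lemma tp_mp (h N : ℕ) : tp h N * mp h N = tp (2*h) N := by
  induction N with
  | zero => simp [tp, mp]
  | succ N ih =>
    unfold tp mp at *
    rw [Finset.prod_range_succ, Finset.prod_range_succ,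
      Finset.prod_range_succ (f := fun k => (1:ℤ⟦X⟧) - X^(2*h*(k+1)))]
    have m : (X:ℤ⟦X⟧)^(h*(N+1)) * X^(h*(N+1)) = X^(2*h*(N+1)) := by
      rw [← pow_add]; congr 1; ring
    linear_combination (1 - X^(h*(N+1))) * (1 + X^(h*(N+1))) * ih
      + tp (2*h) N * m - (X^(h*(N+1)) * X^(h*(N+1)) - X^(2*h*(N+1))) * tp h N * mp h N
  
lemma tp_op (h N : ℕ) : tp (2*h) N * op h N = tp h (2*N) := by
  induction N with
  | zero => simp [tp, op]
  | succ N ih =>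
    unfold tp op at *
    rw [show 2*(N+1) = (2*N+1)+1 from by ring, Finset.prod_range_succ, Finset.prod_range_succ,
      Finset.prod_range_succ (f := fun k => (1:ℤ⟦X⟧) - X^(h*(k+1))),
      Finset.prod_range_succ (f := fun k => (1:ℤ⟦X⟧) - X^(h*(k+1)))]
    have e1 : h*(2*N+1+1) = 2*h*(N+1) := by ring
    rw [e1]
    linear_combination (1 - X^(2*h*(N+1))) * (1 - X^(h*(2*N+1))) * ih

lemma mp_near (h : ℕ) (hh : 1 ≤ h) (M : ℕ) :
    (X:ℤ⟦X⟧)^(M+1) ∣ mp h M - F (2*h) * Pinv h := by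
  have hFP : F h * Pinv h = 1 := F_mul_Pinv h hh
  have key : mp h M - F (2*h) * Pinv h
      = Pinv h * (mp h M * (F h - tp h M) + (tp (2*h) M - F (2*h))) := by
    have htm := tp_mp h M
    linear_combination - (mp h M * hFP) + Pinv h * htm
  rw [key]
  apply Dvd.dvd.mul_left
  exact dvd_add ((F_sub_tp h hh M).mul_left _) (by
    rw [← dvd_neg, neg_sub]
    exact F_sub_tp (2*h) (by omega) M)

lemma op_near (h : ℕ) (hh : 1 ≤ h) (M : ℕ) :
    (X:ℤ⟦X⟧)^(M+1) ∣ op h M - F h * Pinv (2*h) := by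
  have hFP : F (2*h) * Pinv (2*h) = 1 := F_mul_Pinv (2*h) (by omega)
  have key : op h M - F h * Pinv (2*h)
      = Pinv (2*h) * (op h M * (F (2*h) - tp (2*h) M) + (tp h (2*M) - F h)) := by
    have hto := tp_op h M
    linear_combination - (op h M * hFP) + Pinv (2*h) * hto
  rw [key]
  apply Dvd.dvd.mul_left
  refine dvd_add ((F_sub_tp (2*h) (by omega) M).mul_left _) ?_
  rw [← dvd_neg, neg_sub]
  exact dvd_trans (pow_dvd_pow _ (by omega : M+1 ≤ 2*M+1)) (F_sub_tp h hh (2*M))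

lemma gb_coeff_pinv (h : ℕ) (hh : 1 ≤ h) {d' N j : ℕ} (h1 : d' ≤ j) (h2 : d' + j ≤ N) :
    coeff (R := ℤ) d' (gb h N j) = coeff (R := ℤ) d' (Pinv h) :=
  coeff_dvd_sub_eq (gb_stab h hh h1 h2) (by omega)

lemma PsiF (h : ℕ) (hh : 1 ≤ h) : F h * Psi h = F (2*h) ^ 2 := by
  have hFP : F h * Pinv h = 1 := F_mul_Pinv h hh
  have P2 : F (2*h) ^ 2 * Pinv h ^ 2 = Psi h * Pinv h := by
    ext d
    set n := 2*d + 2 with hn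
    -- LHS sum computation
    have einj : Function.Injective (fun t => h * tri t) := fun a b hab =>
      tri_injective (Nat.eq_of_mul_eq_mul_left (by omega) hab)
    have ege : ∀ t, t ≤ h * tri t := fun t =>
      le_trans (tri_ge t) (Nat.le_mul_of_pos_left _ (by omega))
    have hR : coeff (R := ℤ) d (Psi h * Pinv h)
        = ∑ t ∈ Finset.range (d+1),
            if h * tri t ≤ d then coeff (R := ℤ) (d - h * tri t) (Pinv h) else 0 := by
      rw [Psi, coeff_mkS_mul _ _ einj ege]
      apply Finset.sum_congr rfl
      intro t _
      split <;> simp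
    have trim : ∀ m, d+1 ≤ m →
        (∑ t ∈ Finset.range m,
          if h * tri t ≤ d then coeff (R := ℤ) (d - h * tri t) (Pinv h) else 0)
        = ∑ t ∈ Finset.range (d+1),
            if h * tri t ≤ d then coeff (R := ℤ) (d - h * tri t) (Pinv h) else 0 := by
      intro m hm
      refine (Finset.sum_subset (Finset.range_subset_range.mpr hm) ?_).symm
      intro t _ hnt
      simp only [Finset.mem_range] at hnt
      rw [if_neg]
      intro hc
      have := ege t
      omega
    have hL : coeff (R := ℤ) d (RT h n) = 2 * coeff (R := ℤ) d (Psi h * Pinv h) := by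
      unfold RT
      rw [map_sum]
      have term : ∀ j ∈ Finset.range (2*n+1),
          coeff (R := ℤ) d (gb h (2*n) j * X^(h * etr n j))
            = if h * etr n j ≤ d then coeff (R := ℤ) (d - h * etr n j) (gb h (2*n) j) else 0 :=
        fun j _ => coeff_mul_X_pow' _ _ _
      rw [Finset.sum_congr rfl term, show 2*n+1 = n + (n+1) from by omega,
        Finset.sum_range_add]
      have br2 : ∀ t ∈ Finset.range (n+1),
          (if h * etr n (n+t) ≤ d then coeff (R := ℤ) (d - h * etr n (n+t)) (gb h (2*n) (n+t)) else 0)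
            = if h * tri t ≤ d then coeff (R := ℤ) (d - h * tri t) (Pinv h) else 0 := by
        intro t _
        rw [etr_branch1 n t]
        by_cases hc : h * tri t ≤ d
        · rw [if_pos hc, if_pos hc]
          have ht : t ≤ d := le_trans (ege t) hc
          exact gb_coeff_pinv h hh (by omega) (by omega)
        · rw [if_neg hc, if_neg hc]
      have br1 : (∑ j ∈ Finset.range n,
          if h * etr n j ≤ d then coeff (R := ℤ) (d - h * etr n j) (gb h (2*n) j) else 0)
          = ∑ t ∈ Finset.range n,
              if h * tri t ≤ d then coeff (R := ℤ) (d - h * tri t) (Pinv h) else 0 := by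
        rw [← Finset.sum_range_reflect]
        apply Finset.sum_congr rfl
        intro t ht
        simp only [Finset.mem_range] at ht
        rw [etr_branch2 n t ht]
        by_cases hc : h * tri t ≤ d
        · rw [if_pos hc, if_pos hc]
          have htd : t ≤ d := le_trans (ege t) hc
          exact gb_coeff_pinv h hh (by omega) (by omega)
        · rw [if_neg hc, if_neg hc]
      rw [Finset.sum_congr rfl br2, br1, trim n (by omega), trim (n+1) (by omega), hR]
      ring
    -- now the product comparison
    have hA : RT h n = 2 * (mp h n * mp h (n-1)) := by
      have hn1 : n = (n-1)+1 := by omega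
      have hmp0 : mp0 h n = 2 * mp h (n-1) := by
        conv_lhs => rw [hn1]
        exact mp0_eq h (n-1)
      rw [RT_closed, hmp0]
      ring
    have c2 : coeff (R := ℤ) d (mp h n * mp h (n-1)) = coeff (R := ℤ) d ((F (2*h) * Pinv h) * (F (2*h) * Pinv h)) := by
      apply coeff_dvd_sub_eq (N := d+1) _ (by omega)
      exact dvd_sub_mul
        (dvd_trans (pow_dvd_pow _ (by omega : d+1 ≤ n+1)) (mp_near h hh n))
        (dvd_trans (pow_dvd_pow _ (by omega : d+1 ≤ (n-1)+1)) (mp_near h hh (n-1)))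
    have hL2 : coeff (R := ℤ) d (RT h n) = 2 * coeff (R := ℤ) d ((F (2*h) * Pinv h) * (F (2*h) * Pinv h)) := by
      rw [hA, coeff_two_mul, c2]
    have heq : coeff (R := ℤ) d ((F (2*h) * Pinv h) * (F (2*h) * Pinv h)) = coeff (R := ℤ) d (Psi h * Pinv h) := by
      have := hL.symm.trans hL2
      omega
    rw [← heq]
    congr 1
    ring
  linear_combination (-(F h^2)) * P2 + (-(Psi h * F h) + F (2*h)^2 * (F h * Pinv h + 1)) * hFP

end OC
namespace OC

lemma negpow_int {a b : ℕ} (hab : a % 2 = b % 2) : (-1:ℤ)^a = (-1)^b := by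
  rcases Nat.even_or_odd a with he | ho
  · rw [Even.neg_one_pow he, Even.neg_one_pow (by rw [Nat.even_iff] at he ⊢; omega)]
  · rw [Odd.neg_one_pow ho, Odd.neg_one_pow (by rw [Nat.odd_iff] at ho ⊢; omega)]

lemma sgnC (k : ℕ) : ((-1:ℤ⟦X⟧))^k = C (R := ℤ) ((-1)^k) := by rw [map_pow, map_neg, map_one]

lemma le_mul_self (t : ℕ) : t ≤ t*t := by
  rcases Nat.eq_zero_or_pos t with rfl | ht
  · simp
  · exact Nat.le_mul_of_pos_left t ht

lemma PhiF (h : ℕ) (hh : 1 ≤ h) : F h ^ 2 = F (2*h) * Phi h := by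
  have hFP : F (2*h) * Pinv (2*h) = 1 := F_mul_Pinv (2*h) (by omega)
  have P1 : F h ^ 2 * Pinv (2*h) ^ 2 = Phi h * Pinv (2*h) := by
    ext d
    set n := 2*d + 2 with hn
    have einj : Function.Injective (fun k => h * ((k+1)*(k+1))) := by
      intro a b hab
      simp only at hab
      have h2 := Nat.eq_of_mul_eq_mul_left (show 0 < h by omega) hab
      have h3 : a + 1 = b + 1 := Nat.mul_self_inj.mp h2
      omega
    have ege : ∀ k, k ≤ h * ((k+1)*(k+1)) := by
      intro k
      calc k ≤ (k+1)*(k+1) := le_trans (by omega) (le_mul_self (k+1))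
      _ ≤ h * ((k+1)*(k+1)) := Nat.le_mul_of_pos_left _ (by omega)
    have hSq : coeff (R := ℤ) d (Sq h * Pinv (2*h))
        = ∑ k ∈ Finset.range (d+1), if h*((k+1)*(k+1)) ≤ d
            then (-1:ℤ)^(k+1) * coeff (R := ℤ) (d - h*((k+1)*(k+1))) (Pinv (2*h)) else 0 :=
      coeff_mkS_mul _ _ einj ege _ d
    have hR : coeff (R := ℤ) d (Phi h * Pinv (2*h))
        = coeff (R := ℤ) d (Pinv (2*h)) + 2 * coeff (R := ℤ) d (Sq h * Pinv (2*h)) := by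
      rw [Phi, show ((1:ℤ⟦X⟧) + 2*Sq h) * Pinv (2*h) = Pinv (2*h) + 2*(Sq h * Pinv (2*h)) from by
        ring, map_add, coeff_two_mul]
    -- LHS sum computation
    have hL : coeff (R := ℤ) d (RR h n)
        = coeff (R := ℤ) d (Pinv (2*h)) + 2 * coeff (R := ℤ) d (Sq h * Pinv (2*h)) := by
      unfold RR
      rw [map_sum]
      have term : ∀ j ∈ Finset.range (2*n+1),
          coeff (R := ℤ) d ((-1:ℤ⟦X⟧)^(n+j) * gb (2*h) (2*n) j * X^(h * esq n j))
            = (-1:ℤ)^(n+j) * (if h * esq n j ≤ d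
                then coeff (R := ℤ) (d - h * esq n j) (gb (2*h) (2*n) j) else 0) := by
        intro j _
        rw [sgnC (n+j), mul_assoc, coeff_C_mul, coeff_mul_X_pow']
      rw [Finset.sum_congr rfl term, show 2*n+1 = n + (n+1) from by omega,
        Finset.sum_range_add]
      have br2 : ∀ t ∈ Finset.range (n+1),
          (-1:ℤ)^(n+(n+t)) * (if h * esq n (n+t) ≤ d
              then coeff (R := ℤ) (d - h * esq n (n+t)) (gb (2*h) (2*n) (n+t)) else 0)
            = (-1:ℤ)^t * (if h*(t*t) ≤ d then coeff (R := ℤ) (d - h*(t*t)) (Pinv (2*h)) else 0) := by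
        intro t _
        rw [esq_branch1 n t, negpow_int (show (n+(n+t)) % 2 = t % 2 by omega)]
        congr 1
        by_cases hc : h * (t*t) ≤ d
        · rw [if_pos hc, if_pos hc]
          have ht : t ≤ d := le_trans (le_trans (le_mul_self t) (Nat.le_mul_of_pos_left _ (by omega))) hc
          exact gb_coeff_pinv (2*h) (by omega) (by omega) (by omega)
        · rw [if_neg hc, if_neg hc]
      have br1 : (∑ j ∈ Finset.range n, (-1:ℤ)^(n+j) * (if h * esq n j ≤ d
              then coeff (R := ℤ) (d - h * esq n j) (gb (2*h) (2*n) j) else 0))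
          = ∑ t ∈ Finset.range n,
              (-1:ℤ)^(t+1) * (if h*((t+1)*(t+1)) ≤ d
                then coeff (R := ℤ) (d - h*((t+1)*(t+1))) (Pinv (2*h)) else 0) := by
        rw [← Finset.sum_range_reflect]
        apply Finset.sum_congr rfl
        intro t ht
        simp only [Finset.mem_range] at ht
        rw [esq_branch2 n t ht, negpow_int (show (n+(n-1-t)) % 2 = (t+1) % 2 by omega)]
        congr 1
        by_cases hc : h * ((t+1)*(t+1)) ≤ d
        · rw [if_pos hc, if_pos hc]
          have ht1 : t + 1 ≤ d :=
            le_trans (le_trans (le_mul_self (t+1)) (Nat.le_mul_of_pos_left _ (by omega))) hc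
          exact gb_coeff_pinv (2*h) (by omega) (by omega) (by omega)
        · rw [if_neg hc, if_neg hc]
      rw [Finset.sum_congr rfl br2, br1]
      -- branch2 : peel off t = 0
      rw [Finset.sum_range_succ' (fun t => (-1:ℤ)^t
          * (if h*(t*t) ≤ d then coeff (R := ℤ) (d - h*(t*t)) (Pinv (2*h)) else 0)) n]
      simp only [pow_zero, one_mul, Nat.zero_mul, Nat.mul_zero, Nat.sub_zero,
        if_pos (Nat.zero_le d)]
      -- now terms over range n are equal in both branches
      have trim : ∀ m, d+1 ≤ m →
          (∑ t ∈ Finset.range m, (-1:ℤ)^(t+1) * (if h*((t+1)*(t+1)) ≤ d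
              then coeff (R := ℤ) (d - h*((t+1)*(t+1))) (Pinv (2*h)) else 0))
          = ∑ t ∈ Finset.range (d+1), (-1:ℤ)^(t+1) * (if h*((t+1)*(t+1)) ≤ d
              then coeff (R := ℤ) (d - h*((t+1)*(t+1))) (Pinv (2*h)) else 0) := by
        intro m hm
        refine (Finset.sum_subset (Finset.range_subset_range.mpr hm) ?_).symm
        intro t _ hnt
        simp only [Finset.mem_range] at hnt
        rw [if_neg, mul_zero]
        intro hc
        have h1 : t + 1 ≤ h*((t+1)*(t+1)) :=
          le_trans (le_mul_self (t+1)) (Nat.le_mul_of_pos_left _ (by omega))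
        omega
      rw [trim n (by omega)]
      rw [hSq]
      have sqcongr : (∑ k ∈ Finset.range (d+1), if h*((k+1)*(k+1)) ≤ d
            then (-1:ℤ)^(k+1) * coeff (R := ℤ) (d - h*((k+1)*(k+1))) (Pinv (2*h)) else 0)
          = ∑ t ∈ Finset.range (d+1), (-1:ℤ)^(t+1) * (if h*((t+1)*(t+1)) ≤ d
              then coeff (R := ℤ) (d - h*((t+1)*(t+1))) (Pinv (2*h)) else 0) := by
        apply Finset.sum_congr rfl
        intro k _
        rw [mul_ite, mul_zero]
      rw [sqcongr]
      ring
    have c2 : coeff (R := ℤ) d (RR h n)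
        = coeff (R := ℤ) d ((F h * Pinv (2*h)) * (F h * Pinv (2*h))) := by
      rw [RR_closed, pow_two]
      apply coeff_dvd_sub_eq (N := d+1) _ (by omega)
      exact dvd_sub_mul
        (dvd_trans (pow_dvd_pow _ (by omega : d+1 ≤ n+1)) (op_near h hh n))
        (dvd_trans (pow_dvd_pow _ (by omega : d+1 ≤ n+1)) (op_near h hh n))
    have : coeff (R := ℤ) d ((F h * Pinv (2*h)) * (F h * Pinv (2*h)))
        = coeff (R := ℤ) d (Phi h * Pinv (2*h)) := by
      rw [← c2, hL, hR]
    rw [← this]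
    congr 1
    ring
  linear_combination F (2*h)^2 * P1
    + (Phi h * F (2*h) - F h^2 * (1 + F (2*h) * Pinv (2*h))) * hFP

lemma PhiPsiF (h : ℕ) (hh : 1 ≤ h) : Phi h * Psi h = F h * F (2*h) := by
  have h1 := PhiF h hh
  have h2 := PsiF h hh
  have hne : F h * F (2*h) ≠ 0 := mul_ne_zero (F_ne_zero h hh) (F_ne_zero (2*h) (by omega))
  apply mul_right_cancel₀ hne
  linear_combination Phi h * F (2*h) * h2 - F (2*h)^2 * h1

end OC
namespace OC

/-! ### the even/odd split series -/

def SqE : ℤ⟦X⟧ := mkS (fun i => (2*(i+1))*(2*(i+1))) (fun _ => 1)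
def SqOp : ℤ⟦X⟧ := mkS (fun j => (2*j+1)*(2*j+1)) (fun _ => 1)
def S2E : ℤ⟦X⟧ := mkS (fun i => 8*((i+1)*(i+1))) (fun _ => 1)
def S2O : ℤ⟦X⟧ := mkS (fun j => 2*((2*j+1)*(2*j+1))) (fun _ => 1)
def Wk : ℤ⟦X⟧ := mkS (fun k => 8*((k+1)*(k+1))) (fun k => if Odd k then 1 else 0)

lemma sq_odd_tri (j : ℕ) : (2*j+1)*(2*j+1) = 8 * tri j + 1 := by
  have h := two_tri j
  have e : (2*j+1)*(2*j+1) = 4*(j*(j+1)) + 1 := by ring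
  omega

-- injectivity and growth of the exponent functions
lemma inj_sq (c : ℕ) (hc : 1 ≤ c) : Function.Injective (fun k => c*((k+1)*(k+1))) := by
  intro a b hab
  simp only at hab
  have h2 := Nat.eq_of_mul_eq_mul_left (show 0 < c by omega) hab
  have h3 : a + 1 = b + 1 := Nat.mul_self_inj.mp h2
  omega

lemma ge_sq (c : ℕ) (hc : 1 ≤ c) : ∀ k, k ≤ c*((k+1)*(k+1)) := by
  intro k
  calc k ≤ (k+1)*(k+1) := le_trans (by omega) (le_mul_self (k+1))
  _ ≤ c * ((k+1)*(k+1)) := Nat.le_mul_of_pos_left _ (by omega)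

lemma inj_sqE : Function.Injective (fun i => (2*(i+1))*(2*(i+1))) := by
  intro a b hab
  simp only at hab
  have h3 := Nat.mul_self_inj.mp hab
  omega

lemma ge_sqE : ∀ i, i ≤ (2*(i+1))*(2*(i+1)) := by
  intro i
  calc i ≤ 2*(i+1) := by omega
  _ ≤ (2*(i+1))*(2*(i+1)) := le_mul_self _

lemma inj_sqO : Function.Injective (fun j => (2*j+1)*(2*j+1)) := by
  intro a b hab
  simp only at hab
  have h3 := Nat.mul_self_inj.mp hab
  omega

lemma ge_sqO : ∀ j, j ≤ (2*j+1)*(2*j+1) := by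
  intro j
  calc j ≤ 2*j+1 := by omega
  _ ≤ (2*j+1)*(2*j+1) := le_mul_self _

lemma inj_s2O : Function.Injective (fun j => 2*((2*j+1)*(2*j+1))) := by
  intro a b hab
  simp only at hab
  have h2 := Nat.eq_of_mul_eq_mul_left (show 0 < 2 by omega) hab
  have h3 := Nat.mul_self_inj.mp h2
  omega

lemma ge_s2O : ∀ j, j ≤ 2*((2*j+1)*(2*j+1)) := by
  intro j
  have := ge_sqO j
  omega

/-! ### decompositions -/

lemma Sq1_decomp : Sq 1 = SqE - SqOp := by
  ext i
  rw [map_sub]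
  by_cases h1 : ∃ k, i = 1*((k+1)*(k+1))
  · obtain ⟨k, rfl⟩ := h1
    rw [Sq, coeff_mkS_eq (inj_sq 1 le_rfl) (ge_sq 1 le_rfl)]
    rcases Nat.even_or_odd k with ⟨j, hj⟩ | ⟨j, hj⟩
    · -- k = j + j even, root k+1 odd : SqOp part
      subst hj
      rw [Odd.neg_one_pow ⟨j, by omega⟩]
      have eidx : 1*((j+j+1)*(j+j+1)) = (2*j+1)*(2*j+1) := by ring
      rw [eidx, show ((2*j+1)*(2*j+1) : ℕ) = (fun j => (2*j+1)*(2*j+1)) j from rfl]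
      rw [SqOp, coeff_mkS_eq inj_sqO ge_sqO, SqE, coeff_mkS_zero]
      · ring
      · intro t hc
        simp only at hc
        have h3 := Nat.mul_self_inj.mp hc
        omega
    · -- k = 2j+1 odd, root k+1 = 2(j+1) even : SqE part
      subst hj
      rw [Even.neg_one_pow ⟨j+1, by omega⟩]
      have eidx : 1*((2*j+1+1)*(2*j+1+1)) = (2*(j+1))*(2*(j+1)) := by ring
      rw [eidx, show ((2*(j+1))*(2*(j+1)) : ℕ) = (fun i => (2*(i+1))*(2*(i+1))) j from rfl]
      rw [SqE, coeff_mkS_eq inj_sqE ge_sqE, SqOp, coeff_mkS_zero]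
      · ring
      · intro t hc
        simp only at hc
        have h3 := Nat.mul_self_inj.mp hc
        omega
  · push_neg at h1
    rw [Sq, coeff_mkS_zero (by exact_mod_cast h1), SqE, coeff_mkS_zero, SqOp, coeff_mkS_zero]
    · ring
    · intro t hc
      exact h1 (2*t) (by rw [hc]; ring)
    · intro t hc
      exact h1 (2*t+1) (by rw [hc]; ring)

lemma Sq2_decomp : Sq 2 = S2E - S2O := by
  ext i
  rw [map_sub]
  by_cases h1 : ∃ k, i = 2*((k+1)*(k+1))
  · obtain ⟨k, rfl⟩ := h1
    rw [Sq, coeff_mkS_eq (inj_sq 2 (by omega)) (ge_sq 2 (by omega))]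
    rcases Nat.even_or_odd k with ⟨j, hj⟩ | ⟨j, hj⟩
    · subst hj
      rw [Odd.neg_one_pow ⟨j, by omega⟩]
      have eidx : 2*((j+j+1)*(j+j+1)) = 2*((2*j+1)*(2*j+1)) := by ring
      rw [eidx, show (2*((2*j+1)*(2*j+1)) : ℕ) = (fun j => 2*((2*j+1)*(2*j+1))) j from rfl]
      rw [S2O, coeff_mkS_eq inj_s2O ge_s2O, S2E, coeff_mkS_zero]
      · ring
      · intro t hc
        simp only at hc
        have e2 : 2*((2*(t+1))*(2*(t+1))) = 8*((t+1)*(t+1)) := by ring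
        rw [← e2] at hc
        have h2 := Nat.eq_of_mul_eq_mul_left (show 0 < 2 by omega) hc
        have h3 := Nat.mul_self_inj.mp h2
        omega
    · subst hj
      rw [Even.neg_one_pow ⟨j+1, by omega⟩]
      have eidx : 2*((2*j+1+1)*(2*j+1+1)) = 8*((j+1)*(j+1)) := by ring
      rw [eidx, show (8*((j+1)*(j+1)) : ℕ) = (fun i => 8*((i+1)*(i+1))) j from rfl]
      rw [S2E, coeff_mkS_eq (inj_sq 8 (by omega)) (ge_sq 8 (by omega)), S2O, coeff_mkS_zero]
      · ring
      · intro t hc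
        simp only at hc
        have e2 : 8*((j+1)*(j+1)) = 2*((2*(j+1))*(2*(j+1))) := by ring
        rw [e2] at hc
        have h2 := Nat.eq_of_mul_eq_mul_left (show 0 < 2 by omega) hc
        have h3 := Nat.mul_self_inj.mp h2
        omega
  · push_neg at h1
    rw [Sq, coeff_mkS_zero (by exact_mod_cast h1), S2E, coeff_mkS_zero, S2O, coeff_mkS_zero]
    · ring
    · intro t hc
      exact h1 (2*t) hc
    · intro t hc
      exact h1 (2*t+1) (by rw [hc]; ring)

lemma S2E_Sq8 : S2E + Sq 8 = 2 * Wk := by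
  ext i
  rw [map_add, coeff_two_mul]
  by_cases h1 : ∃ k, i = 8*((k+1)*(k+1))
  · obtain ⟨k, rfl⟩ := h1
    rw [show (8*((k+1)*(k+1)) : ℕ) = (fun k => 8*((k+1)*(k+1))) k from rfl]
    rw [S2E, coeff_mkS_eq (inj_sq 8 (by omega)) (ge_sq 8 (by omega)),
      Sq, coeff_mkS_eq (inj_sq 8 (by omega)) (ge_sq 8 (by omega)),
      Wk, coeff_mkS_eq (inj_sq 8 (by omega)) (ge_sq 8 (by omega))]
    rcases Nat.even_or_odd k with he | ho
    · rw [if_neg (by simp [Nat.not_odd_iff_even.mpr he]), Odd.neg_one_pow (by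
        rcases he with ⟨j, hj⟩; exact ⟨j, by omega⟩)]
      ring
    · rw [if_pos ho, Even.neg_one_pow (by rcases ho with ⟨j, hj⟩; exact ⟨j+1, by omega⟩)]
      ring
  · push_neg at h1
    rw [S2E, coeff_mkS_zero h1, Sq, coeff_mkS_zero h1, Wk, coeff_mkS_zero h1]
    ring

lemma SqOp_eq : SqOp = X * Psi 8 := by
  ext m
  cases m with
  | zero =>
    rw [SqOp, coeff_mkS_zero (fun t hc => by have := sq_odd_tri t; omega)]
    simp [coeff_zero_eq_constantCoeff]
  | succ m =>
    rw [coeff_succ_X_mul]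
    by_cases hex : ∃ j, m = 8 * tri j
    · obtain ⟨j, rfl⟩ := hex
      have einj : Function.Injective (fun t => 8 * tri t) := fun a b hab =>
        tri_injective (Nat.eq_of_mul_eq_mul_left (by omega) hab)
      have ege : ∀ t, t ≤ 8 * tri t := fun t =>
        le_trans (tri_ge t) (Nat.le_mul_of_pos_left _ (by omega))
      rw [show (8 * tri j : ℕ) = (fun t => 8 * tri t) j from rfl, Psi,
        coeff_mkS_eq einj ege]
      have eidx : (fun t => 8 * tri t) j + 1 = (2*j+1)*(2*j+1) := by
        simp only
        rw [sq_odd_tri]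
      rw [eidx, show ((2*j+1)*(2*j+1) : ℕ) = (fun j => (2*j+1)*(2*j+1)) j from rfl,
        SqOp, coeff_mkS_eq inj_sqO ge_sqO]
    · push_neg at hex
      rw [Psi, coeff_mkS_zero hex, SqOp, coeff_mkS_zero]
      intro t hc
      have := sq_odd_tri t
      exact hex t (by omega)

/-! ### parity of the series -/

lemma esE_mkS {e : ℕ → ℕ} {v : ℕ → ℤ} (he : ∀ t, e t % 2 = 0) : esE (mkS e v) :=
  (esE_iff _).mpr (fun m hm => coeff_mkS_zero (fun t hc => by have := he t; omega))

lemma esO_mkS {e : ℕ → ℕ} {v : ℕ → ℤ} (he : ∀ t, e t % 2 = 1) : esO (mkS e v) :=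
  (esO_iff _).mpr (fun m hm => coeff_mkS_zero (fun t hc => by have := he t; omega))

lemma esE_Sq2 : esE (Sq 2) := esE_mkS (fun t => by omega)
lemma esE_SqE : esE SqE := esE_mkS (fun t => by
  have e : (2*(t+1))*(2*(t+1)) = 2*((t+1)*(2*(t+1))) := by ring
  omega)
lemma esO_SqOp : esO SqOp := esO_mkS (fun t => by have := sq_odd_tri t; omega)
lemma esE_S2E : esE S2E := esE_mkS (fun t => by omega)
lemma esE_Wk : esE Wk := esE_mkS (fun t => by omega)

lemma SqOp_supp : ∀ m, coeff (R := ℤ) m SqOp ≠ 0 → m % 8 = 1 := by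
  intro m hm
  obtain ⟨t, rfl⟩ := mkS_supp hm
  have := sq_odd_tri t
  omega

lemma S2O_supp : ∀ m, coeff (R := ℤ) m S2O ≠ 0 → m % 4 = 2 := by
  intro m hm
  obtain ⟨t, rfl⟩ := mkS_supp hm
  have := sq_odd_tri t
  omega

lemma kill_supp {f g : ℤ⟦X⟧} (hf : ∀ m, coeff (R := ℤ) m f ≠ 0 → m % 8 = 1)
    (hg : ∀ m, coeff (R := ℤ) m g ≠ 0 → m % 4 = 2) (n : ℕ) : coeff (R := ℤ) (4*n+1) (f*g) = 0 := by
  rw [coeff_mul]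
  apply Finset.sum_eq_zero
  intro p hp
  have hpsum := Finset.HasAntidiagonal.mem_antidiagonal.mp hp
  by_contra hne
  have hf' := hf p.1 (left_ne_zero_of_mul hne)
  have hg' := hg p.2 (right_ne_zero_of_mul hne)
  omega

/-! ### divisibility tools -/

lemma C2eq : (C (R := ℤ)) 2 = (2:ℤ⟦X⟧) := map_ofNat _ 2
lemma C4eq : (C (R := ℤ)) 4 = (4:ℤ⟦X⟧) := map_ofNat _ 4
lemma C8eq : (C (R := ℤ)) 8 = (8:ℤ⟦X⟧) := map_ofNat _ 8

lemma intdvd_coeff {c : ℤ} {f : ℤ⟦X⟧} (h : (C (R := ℤ) c) ∣ f) (n : ℕ) : c ∣ coeff (R := ℤ) n f := by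
  obtain ⟨g, rfl⟩ := h
  rw [coeff_C_mul]
  exact Dvd.intro _ rfl

lemma coeff_intdvd {c : ℤ} {f : ℤ⟦X⟧} (h : ∀ n, c ∣ coeff (R := ℤ) n f) : (C (R := ℤ) c) ∣ f :=
  ⟨mk fun n => (h n).choose, by
    ext n
    rw [coeff_C_mul, coeff_mk]
    exact (h n).choose_spec⟩

lemma tp_sq_mod2 (h N : ℕ) : (C (R := ℤ) 2) ∣ tp h N ^ 2 - tp (2*h) N := by
  induction N with
  | zero => simp [tp]
  | succ N ih =>
    have e1 : tp h (N+1) = tp h N * (1 - X^(h*(N+1))) := Finset.prod_range_succ _ _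
    have e2 : tp (2*h) (N+1) = tp (2*h) N * (1 - X^(2*h*(N+1))) := Finset.prod_range_succ _ _
    have e3 : (X:ℤ⟦X⟧)^(2*h*(N+1)) = X^(h*(N+1)) * X^(h*(N+1)) := by
      rw [← pow_add]; congr 1; ring
    have key : tp h (N+1)^2 - tp (2*h) (N+1)
        = (1 - X^(h*(N+1)))^2 * (tp h N^2 - tp (2*h) N)
          + (C (R := ℤ) 2) * (tp (2*h) N * (X^(h*(N+1)) * X^(h*(N+1)) - X^(h*(N+1)))) := by
      rw [e1, e2, e3, C2eq]
      ring
    rw [key]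
    exact dvd_add (ih.mul_left _) (Dvd.intro _ rfl)

lemma Fsq_mod2 (h : ℕ) (hh : 1 ≤ h) : (C (R := ℤ) 2) ∣ F h ^ 2 - F (2*h) := by
  apply coeff_intdvd
  intro n
  have stab : coeff (R := ℤ) n (F h ^ 2 - F (2*h)) = coeff (R := ℤ) n (tp h n ^ 2 - tp (2*h) n) := by
    apply coeff_dvd_sub_eq (N := n+1) _ (by omega)
    have d1 : (X:ℤ⟦X⟧)^(n+1) ∣ F h ^2 - tp h n ^2 := by
      rw [pow_two, pow_two]
      exact dvd_sub_mul (F_sub_tp h hh n) (F_sub_tp h hh n)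
    have d2 : (X:ℤ⟦X⟧)^(n+1) ∣ F (2*h) - tp (2*h) n := F_sub_tp (2*h) (by omega) n
    have e : F h ^ 2 - F (2*h) - (tp h n ^ 2 - tp (2*h) n)
        = (F h ^2 - tp h n ^2) - (F (2*h) - tp (2*h) n) := by ring
    rw [e]
    exact dvd_sub d1 d2
  rw [stab]
  exact intdvd_coeff (tp_sq_mod2 h n) n

/-! ### dilation by 4 -/

lemma coeff_dil4_zero (e : ℕ → ℕ) (N : ℕ) : ∀ m, ¬ 4 ∣ m →
    coeff (R := ℤ) m (∏ k ∈ Finset.range N, (1 - X^(4 * e k))) = 0 := by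
  induction N with
  | zero =>
    intro m hm
    rw [Finset.prod_range_zero, coeff_one, if_neg (by omega)]
  | succ N ih =>
    intro m hm
    rw [Finset.prod_range_succ, mul_sub, mul_one, map_sub, ih m hm, coeff_mul_X_pow']
    rcases le_or_gt (4*e N) m with hE | hE
    · rw [if_pos hE, ih _ (by omega), sub_zero]
    · rw [if_neg (by omega), sub_zero]

lemma coeff_dil4_prod (e : ℕ → ℕ) (N : ℕ) : ∀ a,
    coeff (R := ℤ) (4*a) (∏ k ∈ Finset.range N, (1 - X^(4 * e k)))
      = coeff (R := ℤ) a (∏ k ∈ Finset.range N, (1 - X^(e k))) := by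
  induction N with
  | zero =>
    intro a
    rw [Finset.prod_range_zero, Finset.prod_range_zero, coeff_one, coeff_one]
    by_cases ha : a = 0
    · subst ha; norm_num
    · rw [if_neg (by omega), if_neg (by omega)]
  | succ N ih =>
    intro a
    rw [Finset.prod_range_succ, Finset.prod_range_succ, mul_sub, mul_one, mul_sub, mul_one,
      map_sub, map_sub, ih a, coeff_mul_X_pow', coeff_mul_X_pow']
    congr 1
    rcases le_or_gt (e N) a with hE | hE
    · rw [if_pos hE, if_pos (by omega), show 4*a - 4*e N = 4*(a - e N) from by omega, ih]
    · rw [if_neg (by omega), if_neg (by omega)]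

lemma tp_dil4 (g N : ℕ) : tp (4*g) N = ∏ k ∈ Finset.range N, (1 - X^(4 * (g * (k+1)))) :=
  Finset.prod_congr rfl (fun k _ => by rw [show 4*g*(k+1) = 4*(g*(k+1)) from by ring])

lemma coeff_F_dil4 (g : ℕ) (hg : 1 ≤ g) (a : ℕ) : coeff (R := ℤ) (4*a) (F (4*g)) = coeff (R := ℤ) a (F g) := by
  rw [coeff_F_tp (4*g) (by omega) (le_refl (4*a)), coeff_F_tp g hg (show a ≤ 4*a by omega),
    tp_dil4, coeff_dil4_prod (fun k => g*(k+1)) (4*a) a]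
  rfl

lemma coeff_F_ndvd4 (g : ℕ) (hg : 1 ≤ g) (m : ℕ) (hm : ¬ 4 ∣ m) : coeff (R := ℤ) m (F (4*g)) = 0 := by
  rw [coeff_F_tp (4*g) (by omega) (le_refl m), tp_dil4]
  exact coeff_dil4_zero (fun k => g*(k+1)) m m hm

lemma coeff_mul_dil4 (f g' : ℤ⟦X⟧) (hf : ∀ m, ¬ 4 ∣ m → coeff (R := ℤ) m f = 0)
    (hg : ∀ m, ¬ 4 ∣ m → coeff (R := ℤ) m g' = 0) (a : ℕ) :
    coeff (R := ℤ) (4*a) (f * g') = ∑ i ∈ Finset.range (a+1), coeff (R := ℤ) (4*i) f * coeff (R := ℤ) (4*(a-i)) g' := by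
  rw [coeff_mul, Finset.Nat.sum_antidiagonal_eq_sum_range_succ_mk]
  have hfil : ∑ i ∈ Finset.range (4*a+1), coeff (R := ℤ) i f * coeff (R := ℤ) (4*a - i) g'
      = ∑ i ∈ (Finset.range (4*a+1)).filter (fun i => 4 ∣ i),
          coeff (R := ℤ) i f * coeff (R := ℤ) (4*a - i) g' := by
    refine (Finset.sum_filter_of_ne ?_).symm
    intro i hi hne
    by_contra hdvd
    exact hne (by rw [hf i hdvd, zero_mul])
  rw [hfil]
  refine Finset.sum_bij' (fun i _ => i / 4) (fun t _ => 4*t) ?hi ?hj ?left ?right ?val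
  case hi =>
    intro i hi
    simp only [Finset.mem_filter, Finset.mem_range] at hi
    simp only [Finset.mem_range]
    omega
  case hj =>
    intro t ht
    simp only [Finset.mem_range] at ht
    simp only [Finset.mem_filter, Finset.mem_range]
    omega
  case left =>
    intro i hi
    simp only [Finset.mem_filter, Finset.mem_range] at hi
    omega
  case right =>
    intro t _
    omega
  case val =>
    intro i hi
    simp only [Finset.mem_filter, Finset.mem_range] at hi
    rw [show 4*(i/4) = i from by omega, show 4*(a - i/4) = 4*a - i from by omega]

lemma coeff_F8F16 (n : ℕ) : coeff (R := ℤ) (4*n) (F 8 * F 16) = coeff (R := ℤ) n (F 2 * F 4) := by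
  have h8 : (8:ℕ) = 4*2 := by norm_num
  have h16 : (16:ℕ) = 4*4 := by norm_num
  rw [coeff_mul_dil4 (F 8) (F 16)
      (fun m hm => by rw [h8]; exact coeff_F_ndvd4 2 (by omega) m hm)
      (fun m hm => by rw [h16]; exact coeff_F_ndvd4 4 (by omega) m hm),
    coeff_mul, Finset.Nat.sum_antidiagonal_eq_sum_range_succ_mk]
  apply Finset.sum_congr rfl
  intro i _
  rw [h8, h16, coeff_F_dil4 2 (by omega), coeff_F_dil4 4 (by omega)]

end OC
namespace OC

lemma esE_zero : esE 0 := map_zero _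

lemma esE_C (a : ℤ) : esE (C (R := ℤ) a) :=
  (esE_iff _).mpr fun m hm => by rw [coeff_C, if_neg (by omega)]

lemma esE_four : esE (4:ℤ⟦X⟧) := by rw [← C4eq]; exact esE_C 4

lemma esE_F_even' {h : ℕ} (h2 : 2 ∣ h) (hh : 1 ≤ h) : esE (F h) := by
  obtain ⟨k, rfl⟩ := h2
  exact esE_F_even k (by omega)

lemma coeff_eight_mul (f : ℤ⟦X⟧) (n : ℕ) : coeff (R := ℤ) n (8*f) = 8 * coeff (R := ℤ) n f := by
  rw [← map_ofNat (C (R := ℤ)) 8, coeff_C_mul]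

lemma pow_add_four {A V : ℤ⟦X⟧} (hA : esE A) (hV : esE V) :
    ∀ m, ∃ W, esE W ∧ (A + 4*V)^m = A^m + 4*W := by
  intro m
  induction m with
  | zero => exact ⟨0, esE_zero, by ring⟩
  | succ m ih =>
    obtain ⟨W, hWe, hWeq⟩ := ih
    refine ⟨W*A + A^m*V + 4*(W*V), ?_, ?_⟩
    · exact esE_add (esE_add (esE_mul hWe hA) (esE_mul (esE_pow hA m) hV))
        (esE_mul esE_four (esE_mul hWe hV))
    · rw [pow_succ, hWeq]
      ring

end OC


open OC PowerSeries

/-- For all `m, n ≥ 0`, `a̅_{2m+2}(4n+1) ≡ 2 h(n) (mod 8)`, where `h(n)` is the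
coefficient of `qⁿ` in `f₂ f₄ = (q²;q²)_∞ (q⁴;q⁴)_∞`. -/
theorem overcubic_even_congr_f2f4 (abar : ℕ → ℕ → ℕ)
    (habar : IsGenOvercubic abar) (m n : ℕ) :
    (abar (2 * m + 2) (4 * n + 1) : ℤ) ≡
      2 * PowerSeries.coeff (R := ℤ) n (qPochInf ℤ 2 * qPochInf ℤ 4) [ZMOD 8] := by
  classical
  have nz1 : F 1 ≠ 0 := F_ne_zero 1 le_rfl
  have nz2 : F 2 ≠ 0 := F_ne_zero 2 (by omega)
  have nz4 : F 4 ≠ 0 := F_ne_zero 4 (by omega)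
  have hF2e : esE (F 2) := esE_F_even' (by norm_num) (by norm_num)
  have hF4e : esE (F 4) := esE_F_even' (by norm_num) (by norm_num)
  set A : ℤ⟦X⟧ := PowerSeries.mk fun k => ((abar (2*m+2) k : ℤ)) with hAdef
  set A2 : ℤ⟦X⟧ := PowerSeries.mk fun k => ((abar 2 k : ℤ)) with hA2def
  have H2 := habar (2*m+2) (by omega)
  have H1 := habar 2 (by omega)
  rw [show 2*(2*m+2) = 4*m+4 from by ring, show 2*m+2-1 = 2*m+1 from by omega] at H2
  have H2' : A * F 1^2 * F 2^(4*m+4) = F 4^(2*m+1) * F 2^3 := H2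
  have H1' : A2 * F 1^2 * F 2^(2*2) = F 4^(2-1) * F 2^3 := H1
  rw [show (2*2 : ℕ) = 4 from by norm_num, show (2-1:ℕ) = 1 from by norm_num, pow_one] at H1'
  -- Step 1 : A * F2^{4m} = A2 * F4^{2m}
  have key1 : A * F 2^(4*m) = A2 * F 4^(2*m) := by
    have hcan : (A * F 2^(4*m)) * (F 1^2 * F 2^4 * F 4)
        = (A2 * F 4^(2*m)) * (F 1^2 * F 2^4 * F 4) := by
      linear_combination F 4 * H2' - F 4^(2*m+1) * H1'
    exact mul_right_cancel₀
      (mul_ne_zero (mul_ne_zero (pow_ne_zero _ nz1) (pow_ne_zero _ nz2)) nz4) hcan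
  -- mod 2 facts
  have hF12 : (C (R := ℤ) 2) ∣ F 1^2 - F 2 := by
    have := Fsq_mod2 1 le_rfl
    rwa [show (2*1:ℕ) = 2 from by norm_num] at this
  have hF24 : (C (R := ℤ) 2) ∣ F 2^2 - F 4 := by
    have := Fsq_mod2 2 (by omega)
    rwa [show (2*2:ℕ) = 4 from by norm_num] at this
  obtain ⟨U, hU⟩ := hF24
  have hUe : esE U := by
    apply esE_of_two_mul
    rw [← C2eq, ← hU]
    exact esE_sub (esE_pow hF2e 2) hF4e
  have hU' : F 2^2 = F 4 + 2*U := by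
    have h := hU
    rw [C2eq] at h
    linear_combination h
  have hV : F 2^4 = F 4^2 + 4*(F 4 * U + U^2) := by
    linear_combination (F 2^2 + F 4 + 2*U) * hU'
  have hVe : esE (F 4 * U + U^2) := esE_add (esE_mul hF4e hUe) (esE_pow hUe 2)
  obtain ⟨W, hWe, hWeq⟩ := pow_add_four (esE_pow hF4e 2) hVe m
  have key2 : A * ((F 4^2)^m + 4*W) = A2 * (F 4^2)^m := by
    calc A * ((F 4^2)^m + 4*W) = A * (F 4^2 + 4*(F 4 * U + U^2))^m := by rw [hWeq]
    _ = A * (F 2^4)^m := by rw [← hV]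
    _ = A * F 2^(4*m) := by rw [← pow_mul]
    _ = A2 * F 4^(2*m) := key1
    _ = A2 * (F 4^2)^m := by rw [← pow_mul]
  obtain ⟨B, hB⟩ := (((isUnit_F 4 (by norm_num)).pow 2).pow m).exists_right_inv
  have hBe : esE B := esE_of_inv hB (esE_pow (esE_pow hF4e 2) m)
  have hAA2 : A - A2 = -(4*(A*(W*B))) := by
    linear_combination B * key2 - (A - A2) * hB
  -- A ≡ 1 mod 2
  have hu12 : IsUnit (F 1^2 * F 2^(4*m+4)) :=
    ((isUnit_F 1 le_rfl).pow 2).mul ((isUnit_F 2 (by omega)).pow (4*m+4))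
  have h42 : (C (R := ℤ) 2) ∣ F 4 - F 2^2 := ⟨-U, by linear_combination - hU⟩
  have hdvd0 : (C (R := ℤ) 2) ∣ (A - 1) * (F 1^2 * F 2^(4*m+4)) := by
    have expand : (A - 1) * (F 1^2 * F 2^(4*m+4))
        = F 2^3 * (F 4^(2*m+1) - (F 2^2)^(2*m+1)) - F 2^(4*m+4) * (F 1^2 - F 2) := by
      linear_combination H2'
    rw [expand]
    exact dvd_sub
      (Dvd.dvd.mul_left (dvd_trans h42 (sub_dvd_pow_sub_pow _ _ _)) _)
      (hF12.mul_left _)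
  obtain ⟨Y, hY⟩ := (IsUnit.dvd_mul_right hu12).mp hdvd0
  -- κ-comparison between A and A2
  have e9 : coeff (R := ℤ) (4*n+1) A - coeff (R := ℤ) (4*n+1) A2 = -(4 * coeff (R := ℤ) (4*n+1) (A*(W*B))) := by
    have h := congrArg (coeff (R := ℤ) (4*n+1)) hAA2
    rwa [map_sub, map_neg, coeff_four_mul] at h
  have e9b : coeff (R := ℤ) (4*n+1) (A*(W*B)) = 2 * coeff (R := ℤ) (4*n+1) (Y*(W*B)) := by
    have hexp : A*(W*B) = W*B + C (R := ℤ) 2 * (Y*(W*B)) := by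
      linear_combination (W*B) * hY
    rw [hexp, map_add, coeff_C_mul, coeff_eq_zero_of_esE (esE_mul hWe hBe) n, zero_add]
  -- A2 in terms of the theta series
  have hPhi1 : F 1^2 = F 2 * Phi 1 := by
    have := PhiF 1 le_rfl
    rwa [show (2*1:ℕ) = 2 from by norm_num] at this
  have hPhi2 : F 2^2 = F 4 * Phi 2 := by
    have := PhiF 2 (by omega)
    rwa [show (2*2:ℕ) = 4 from by norm_num] at this
  have hA2Phi : A2 * (Phi 1 * Phi 2) = 1 := by
    have hcan : (A2 * (Phi 1 * Phi 2)) * (F 1^2 * F 2^4) = 1 * (F 1^2 * F 2^4) := by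
      linear_combination Phi 1 * Phi 2 * H1' - F 2^4 * hPhi1 - Phi 1 * F 2^3 * hPhi2
    exact mul_right_cancel₀ (mul_ne_zero (pow_ne_zero _ nz1) (pow_ne_zero _ nz2)) hcan
  set E1 : ℤ⟦X⟧ := 1 - 2*Sq 1 + 4*(Sq 1)^2 with hE1def
  set E2 : ℤ⟦X⟧ := 1 - 2*Sq 2 + 4*(Sq 2)^2 with hE2def
  have hA2E : A2 = E1*E2 - 8*(A2 * ((Sq 1)^3 + (Sq 2)^3 + 8*((Sq 1)^3*(Sq 2)^3))) := by
    have p1 : Phi 1 * E1 = 1 + 8*(Sq 1)^3 := by rw [Phi, hE1def]; ring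
    have p2 : Phi 2 * E2 = 1 + 8*(Sq 2)^3 := by rw [Phi, hE2def]; ring
    linear_combination (-(A2*(1+8*(Sq 2)^3))) * p1 + (-(A2*(Phi 1 * E1))) * p2
      + E1*E2 * hA2Phi
  have e10 : coeff (R := ℤ) (4*n+1) A2 = coeff (R := ℤ) (4*n+1) (E1*E2)
      - 8 * coeff (R := ℤ) (4*n+1) (A2 * ((Sq 1)^3 + (Sq 2)^3 + 8*((Sq 1)^3*(Sq 2)^3))) := by
    have h := congrArg (coeff (R := ℤ) (4*n+1)) hA2E
    rwa [map_sub, coeff_eight_mul] at h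
  -- expansion of E1 * E2 and coefficient extraction at 4n+1
  have hE2e : esE E2 := by
    rw [hE2def]
    exact esE_add (esE_sub esE_one (esE_mul esE_two esE_Sq2))
      (esE_mul esE_four (esE_pow esE_Sq2 2))
  have expand : E1*E2 = E2 - 2*(SqE*E2) + 2*(SqOp*(1-2*S2E)) + 4*(SqOp*S2O)
      + 8*(SqOp*(S2E-S2O)^2) + 4*((SqE^2)*E2) + 4*((SqOp^2)*E2) - 8*((SqE*SqOp)*E2) := by
    have hE1x : E1 = 1 - 2*(SqE - SqOp) + 4*(SqE - SqOp)^2 := by rw [hE1def, Sq1_decomp]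
    have hE2x : E2 = 1 - 2*(S2E - S2O) + 4*(S2E - S2O)^2 := by rw [hE2def, Sq2_decomp]
    calc E1*E2 = (1 - 2*(SqE - SqOp) + 4*(SqE - SqOp)^2) * E2 := by rw [← hE1x]
    _ = E2 - 2*(SqE*E2) + 2*(SqOp*E2) + 4*((SqE^2)*E2) + 4*((SqOp^2)*E2)
        - 8*((SqE*SqOp)*E2) := by ring
    _ = _ := by linear_combination 2*SqOp*hE2x
  have e11 : coeff (R := ℤ) (4*n+1) (E1*E2) = 2 * coeff (R := ℤ) (4*n+1) (SqOp*(1-2*S2E))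
      + 8 * coeff (R := ℤ) (4*n+1) (SqOp*(S2E-S2O)^2) - 8 * coeff (R := ℤ) (4*n+1) ((SqE*SqOp)*E2) := by
    have h := congrArg (coeff (R := ℤ) (4*n+1)) expand
    simp only [map_sub, map_add, coeff_two_mul, coeff_four_mul, coeff_eight_mul] at h
    rw [coeff_eq_zero_of_esE hE2e n, coeff_eq_zero_of_esE (esE_mul esE_SqE hE2e) n,
      kill_supp SqOp_supp S2O_supp n,
      coeff_eq_zero_of_esE (esE_mul (esE_pow esE_SqE 2) hE2e) n,
      coeff_eq_zero_of_esE (esE_mul (show esE (SqOp^2) by rw [pow_two]; exact esO_mul_esO esO_SqOp esO_SqOp) hE2e) n] at h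
    rw [h]
    ring
  -- relate to Phi 8 and Psi 8
  have h18 : (1:ℤ⟦X⟧) - 2*S2E = Phi 8 - 4*Wk := by
    rw [Phi]
    linear_combination (-2) * S2E_Sq8
  have e12 : coeff (R := ℤ) (4*n+1) (SqOp*(1-2*S2E))
      = coeff (R := ℤ) (4*n+1) (SqOp*Phi 8) - 4 * coeff (R := ℤ) (4*n+1) (SqOp*Wk) := by
    have hsplit : SqOp*(1-2*S2E) = SqOp*Phi 8 - 4*(SqOp*Wk) := by
      rw [h18]; ring
    rw [hsplit, map_sub, coeff_four_mul]
  have e13 : coeff (R := ℤ) (4*n+1) (SqOp*Phi 8) = coeff (R := ℤ) (4*n) (Psi 8 * Phi 8) := by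
    rw [SqOp_eq, mul_assoc]
    exact coeff_succ_X_mul (4*n) _
  have e14 : Psi 8 * Phi 8 = F 8 * F 16 := by
    have := PhiPsiF 8 (by omega)
    rw [show (2*8:ℕ) = 16 from by norm_num] at this
    linear_combination this
  have e15 : coeff (R := ℤ) (4*n) (F 8 * F 16) = coeff (R := ℤ) n (F 2 * F 4) := coeff_F8F16 n
  -- assemble
  have habarA : coeff (R := ℤ) (4*n+1) A = ((abar (2*m+2) (4*n+1) : ℤ)) := by
    rw [hAdef, coeff_mk]
  have goalshow : ((abar (2*m+2) (4*n+1) : ℤ)) ≡ 2 * coeff (R := ℤ) n (F 2 * F 4) [ZMOD 8] := by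
    rw [Int.modEq_iff_dvd]
    have e14' := congrArg (coeff (R := ℤ) (4*n)) e14
    omega
  convert goalshow using 2

end
end
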